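/- arXiv:2309.04601 — 6 statements merged into one kernel-verified Lean document; each statement's English description precedes it below -/
import Mathlib

section
/- Let L be a dense subset of ℝ that is closed under addition and negation. Let P ⊆ ℝ^n be a set such that (i) the relative interior of P is nonempty, and (ii) the affine hull of P is a translate of a rational subspace, i.e., there exist z ∈ ℝ^n and vectors d¹, …, dℓ ∈ ℤ^n with aff(P) = { z + λ₁d¹ + ⋯ + λℓdℓ : λ ∈ ℝ^ℓ }. Then P contains a point all of whose coordinates lie in L if and only if aff(P) contains a point all of whose coordinates lie in L. -/
theorem stmt_2 (L : Set ℝ) (hdense : Dense L)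
    (hadd : ∀ x ∈ L, ∀ y ∈ L, x + y ∈ L) (hneg : ∀ x ∈ L, -x ∈ L)
    (n : ℕ) (P : Set (Fin n → ℝ))
    (hri : (intrinsicInterior ℝ P).Nonempty)
    (ℓ : ℕ) (z : Fin n → ℝ) (d : Fin ℓ → Fin n → ℤ)
    (haff : (affineSpan ℝ P : Set (Fin n → ℝ)) =
      {x | ∃ lam : Fin ℓ → ℝ, x = z + ∑ i, lam i • (fun j => (d i j : ℝ))}) :
    (∃ x ∈ P, ∀ i, x i ∈ L) ↔
      ∃ x ∈ (affineSpan ℝ P : Set (Fin n → ℝ)), ∀ i, x i ∈ L := by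
  have h0 : (0 : ℝ) ∈ L := by
    obtain ⟨a, ha⟩ := hdense.nonempty
    have := hadd a ha (-a) (hneg a ha)
    simpa using this
  set S : AddSubgroup ℝ :=
    { carrier := L
      add_mem' := fun ha hb => hadd _ ha _ hb
      zero_mem' := h0
      neg_mem' := fun ha => hneg _ ha } with hS
  have hSL : (S : Set ℝ) = L := rfl
  constructor
  · rintro ⟨x, hxP, hxL⟩
    exact ⟨x, subset_affineSpan ℝ P hxP, hxL⟩
  · rintro ⟨x, hx, hxL⟩
    set D : Fin ℓ → Fin n → ℝ := fun i => fun j => (d i j : ℝ) with hD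
    obtain ⟨lam, hxlam⟩ : ∃ lam : Fin ℓ → ℝ, x = z + ∑ i, lam i • D i := by
      rw [haff] at hx; exact hx
    -- intrinsic interior point
    obtain ⟨p, hp⟩ := hri
    rw [intrinsicInterior] at hp
    obtain ⟨p', hp', hpp⟩ := hp
    obtain ⟨ε, hε, hball⟩ := Metric.isOpen_iff.1 isOpen_interior p' hp'
    have hball' : Metric.ball p' ε ⊆ ((↑) ⁻¹' P : Set (affineSpan ℝ P)) :=
      hball.trans interior_subset
    have hpaff : (p' : Fin n → ℝ) ∈ (affineSpan ℝ P : Set (Fin n → ℝ)) := p'.2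
    obtain ⟨mu, hplam⟩ : ∃ mu : Fin ℓ → ℝ, (p' : Fin n → ℝ) = z + ∑ i, mu i • D i := by
      rw [haff] at hpaff; exact hpaff
    set Snorm : ℝ := ∑ i, ‖D i‖ with hSn
    have hSn0 : 0 ≤ Snorm := Finset.sum_nonneg fun i _ => norm_nonneg _
    set δ : ℝ := ε / (Snorm + 1) with hδ
    have hδ0 : 0 < δ := div_pos hε (by linarith)
    -- choose q i ∈ L close to mu i - lam i
    have hq : ∀ i : Fin ℓ, ∃ a ∈ L, |a - (mu i - lam i)| < δ := by
      intro i
      obtain ⟨a, haL, hdist⟩ := Metric.dense_iff.1 hdense (mu i - lam i) δ hδ0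
      exact ⟨a, hdist, by rw [← Real.dist_eq]; exact Metric.mem_ball.1 haL⟩
    choose q hqL hqclose using hq
    set y : Fin n → ℝ := x + ∑ i, q i • D i with hy
    have hyaff : y ∈ (affineSpan ℝ P : Set (Fin n → ℝ)) := by
      rw [haff]
      refine ⟨fun i => lam i + q i, ?_⟩
      simp only [hy, hxlam, add_smul, Finset.sum_add_distrib]
      abel
    have hyL : ∀ j, y j ∈ L := by
      intro j
      have hsum : (∑ i, q i • D i) j ∈ S := by
        rw [Finset.sum_apply]
        refine sum_mem fun i _ => ?_
        have : (q i • D i) j = (d i j : ℤ) • q i := by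
          simp [hD, smul_eq_mul, zsmul_eq_mul, mul_comm]
        rw [this]
        exact zsmul_mem (hqL i) _
      exact hadd _ (hxL j) _ hsum
    have hdiff : y - (p' : Fin n → ℝ) = ∑ i, (q i - (mu i - lam i)) • D i := by
      simp only [hy, hxlam, hplam, sub_smul, Finset.sum_sub_distrib]
      abel
    have hdist : dist y (p' : Fin n → ℝ) < ε := by
      rw [dist_eq_norm, hdiff]
      calc ‖∑ i, (q i - (mu i - lam i)) • D i‖
          ≤ ∑ i, ‖(q i - (mu i - lam i)) • D i‖ := norm_sum_le _ _
        _ ≤ ∑ i, δ * ‖D i‖ := by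
            refine Finset.sum_le_sum fun i _ => ?_
            rw [norm_smul, Real.norm_eq_abs]
            exact mul_le_mul_of_nonneg_right (le_of_lt (hqclose i)) (norm_nonneg _)
        _ = δ * Snorm := by rw [← Finset.mul_sum]
        _ < δ * (Snorm + 1) := by nlinarith
        _ = ε := by rw [hδ]; field_simp [show Snorm + 1 ≠ 0 by linarith]
    have hyP : y ∈ P := by
      have : (⟨y, hyaff⟩ : affineSpan ℝ P) ∈ Metric.ball p' ε := by
        rw [Metric.mem_ball, Subtype.dist_eq]
        exact hdist
      exact hball' this
    exact ⟨y, hyP, hyL⟩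
end

section
/- Let L be a dense subset of ℝ that is closed under addition and negation. Let P ⊆ ℝ^n be a nonempty convex set whose affine hull is a translate of a rational subspace, i.e., there exist z ∈ ℝ^n and d¹, …, dℓ ∈ ℤ^n with aff(P) = { z + λ₁d¹ + ⋯ + λℓdℓ : λ ∈ ℝ^ℓ }. Then P contains a point of L^n if and only if aff(P) contains a point of L^n. -/
theorem stmt_4 (L : Set ℝ) (hdense : Dense L)
    (hadd : ∀ x ∈ L, ∀ y ∈ L, x + y ∈ L) (hneg : ∀ x ∈ L, -x ∈ L)
    (n : ℕ) (P : Set (Fin n → ℝ)) (hP : P.Nonempty) (hconv : Convex ℝ P)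
    (ℓ : ℕ) (z : Fin n → ℝ) (d : Fin ℓ → Fin n → ℤ)
    (haff : (affineSpan ℝ P : Set (Fin n → ℝ)) =
      {x | ∃ lam : Fin ℓ → ℝ, x = z + ∑ i, lam i • (fun j => (d i j : ℝ))}) :
    (∃ x ∈ P, ∀ i, x i ∈ L) ↔
      ∃ x ∈ (affineSpan ℝ P : Set (Fin n → ℝ)), ∀ i, x i ∈ L := by
  constructor
  · rintro ⟨x, hxP, hxL⟩
    exact ⟨x, subset_affineSpan ℝ P hxP, hxL⟩
  rintro ⟨x, hxA, hxL⟩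
  -- L is a subgroup-like set
  obtain ⟨a, ha⟩ : L.Nonempty := hdense.nonempty
  have h0 : (0 : ℝ) ∈ L := by
    have := hadd a ha (-a) (hneg a ha); simpa using this
  have hint : ∀ (m : ℤ) (b : ℝ), b ∈ L → (m : ℝ) * b ∈ L := by
    intro m
    induction m using Int.induction_on with
    | zero => intro b hb; simpa using h0
    | succ k ih =>
      intro b hb
      have := hadd _ (ih b hb) b hb
      push_cast
      have h2 : ((k : ℝ) + 1) * b = (k : ℝ) * b + b := by ring
      rw [h2]; exact this
    | pred k ih =>
      intro b hb
      have := hadd _ (ih b hb) _ (hneg b hb)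
      push_cast at this ⊢
      have h2 : (-(k : ℝ) - 1) * b = -(k : ℝ) * b + -b := by ring
      rw [h2]; exact this
  have hsum : ∀ (s : Finset (Fin ℓ)) (g : Fin ℓ → ℝ),
      (∀ i ∈ s, g i ∈ L) → ∑ i ∈ s, g i ∈ L := by
    intro s g hg
    classical
    induction s using Finset.induction_on with
    | empty => simpa using h0
    | insert _ _ hnotmem ih =>
      rw [Finset.sum_insert hnotmem]
      exact hadd _ (hg _ (Finset.mem_insert_self _ _))
        _ (ih fun i hi => hg i (Finset.mem_insert_of_mem hi))
  -- the parametrization based at x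
  set v : Fin ℓ → Fin n → ℝ := fun i j => (d i j : ℝ) with hv
  obtain ⟨μ, hμ⟩ : ∃ lam : Fin ℓ → ℝ, x = z + ∑ i, lam i • v i := by
    rw [haff] at hxA; exact hxA
  set f : (Fin ℓ → ℝ) → (Fin n → ℝ) := fun lam => x + ∑ i, lam i • v i with hf
  have hfA : ∀ lam, f lam ∈ (affineSpan ℝ P : Set (Fin n → ℝ)) := by
    intro lam
    rw [haff]
    refine ⟨μ + lam, ?_⟩
    simp only [hf, hμ, Pi.add_apply, add_smul, Finset.sum_add_distrib]
    abel
  have hfsurj : ∀ y ∈ (affineSpan ℝ P : Set (Fin n → ℝ)), ∃ lam, f lam = y := by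
    intro y hy
    rw [haff] at hy
    obtain ⟨ν, hν⟩ := hy
    refine ⟨ν - μ, ?_⟩
    simp only [hf, hμ, hν, Pi.sub_apply, sub_smul, Finset.sum_sub_distrib]
    abel
  have hfc : Continuous f := by
    apply continuous_const.add
    exact continuous_finset_sum _ fun i _ => (continuous_apply i).smul continuous_const
  -- coordinates of f lam lie in L when lam ∈ L^ℓ
  have hfL : ∀ lam : Fin ℓ → ℝ, (∀ i, lam i ∈ L) → ∀ j, f lam j ∈ L := by
    intro lam hlam j
    have : f lam j = x j + ∑ i, lam i * (d i j : ℝ) := by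
      simp [hf, hv, Finset.sum_apply]
    rw [this]
    refine hadd _ (hxL j) _ (hsum _ _ fun i _ => ?_)
    have := hint (d i j) (lam i) (hlam i)
    rwa [mul_comm] at this
  -- relative interior point
  obtain ⟨p, hp⟩ : (intrinsicInterior ℝ P).Nonempty := hP.intrinsicInterior hconv
  rw [mem_intrinsicInterior] at hp
  obtain ⟨q, hq, hqp⟩ := hp
  obtain ⟨U, hUopen, hUeq⟩ :=
    isOpen_induced_iff.mp (isOpen_interior (s := ((↑) ⁻¹' P : Set <| affineSpan ℝ P)))
  have hpU : p ∈ U := by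
    rw [← hUeq] at hq; rw [← hqp]; exact hq
  -- p = f w for some w
  obtain ⟨w, hw⟩ := hfsurj p (by rw [← hqp]; exact q.2)
  -- density argument
  have hS : Dense (Set.pi Set.univ fun _ : Fin ℓ => L) :=
    dense_pi Set.univ fun i _ => hdense
  have hpc : p ∈ closure (f '' Set.pi Set.univ fun _ : Fin ℓ => L) := by
    rw [← hw]
    exact map_mem_closure hfc (by rw [hS.closure_eq]; trivial) (Set.mapsTo_image f _)
  obtain ⟨y, hyU, hyS⟩ := mem_closure_iff.mp hpc U hUopen hpU
  obtain ⟨lam, hlamL, hlamy⟩ := hyS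
  have hyA : y ∈ (affineSpan ℝ P : Set (Fin n → ℝ)) := by rw [← hlamy]; exact hfA lam
  have hyP : y ∈ P := by
    have : (⟨y, hyA⟩ : affineSpan ℝ P) ∈ ((↑) ⁻¹' U : Set <| affineSpan ℝ P) := hyU
    rw [hUeq] at this
    exact interior_subset (s := ((↑) ⁻¹' P : Set <| affineSpan ℝ P)) this
  refine ⟨y, hyP, fun j => ?_⟩
  rw [← hlamy]
  exact hfL lam (fun i => hlamL i (Set.mem_univ i)) j
end

section
/- Let L be a proper subset of ℝ that is closed under addition and negation. Let A be an m × n integer matrix and b ∈ ℤ^m. If there exists x ∈ L^n with Ax = b, then there exists x ∈ L^n with all coordinates rational and Ax = b, i.e., Ax = b has a solution in L^n ∩ ℚ^n. -/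
private lemma stmt6_addMul (L : Set ℝ)
    (hadd : ∀ x ∈ L, ∀ y ∈ L, x + y ∈ L) (hneg : ∀ x ∈ L, -x ∈ L) :
    ∀ (c : ℤ) (t y : ℝ), t ∈ L → y ∈ L → t + (c : ℝ) * y ∈ L := by
  intro c
  induction c using Int.induction_on with
  | zero => intro t y ht _; simpa using ht
  | succ k ih =>
      intro t y ht hy
      have h1 := hadd _ (ih t y ht hy) _ hy
      have e : t + ((((k : ℤ) + 1 : ℤ)) : ℝ) * y = t + (((k : ℤ)) : ℝ) * y + y := by
        push_cast; ring
      rw [e]; exact h1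
  | pred k ih =>
      intro t y ht hy
      have h1 := hadd _ (ih t y ht hy) _ (hneg _ hy)
      have e : t + (((-(k : ℤ) - 1 : ℤ)) : ℝ) * y = t + (((-(k : ℤ) : ℤ)) : ℝ) * y + -y := by
        push_cast; ring
      rw [e]; exact h1

private lemma stmt6_combo (L : Set ℝ)
    (hadd : ∀ x ∈ L, ∀ y ∈ L, x + y ∈ L) (hneg : ∀ x ∈ L, -x ∈ L)
    {ι : Type*} (s : Finset ι) (c : ι → ℤ) (y : ι → ℝ)
    (hy : ∀ i ∈ s, y i ∈ L) : ∀ t ∈ L, t + ∑ i ∈ s, (c i : ℝ) * y i ∈ L := by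
  classical
  induction s using Finset.induction_on with
  | empty => intro t ht; simpa using ht
  | insert a s' hns ih =>
      intro t ht
      rw [Finset.sum_insert hns, ← add_assoc]
      have h1 : t + (c a : ℝ) * y a ∈ L :=
        stmt6_addMul L hadd hneg _ _ _ ht (hy a (Finset.mem_insert_self a s'))
      exact ih (fun i hi => hy i (Finset.mem_insert_of_mem hi)) _ h1

theorem stmt_6 (L : Set ℝ) (hproper : L ≠ Set.univ)
    (hadd : ∀ x ∈ L, ∀ y ∈ L, x + y ∈ L) (hneg : ∀ x ∈ L, -x ∈ L)
    (m n : ℕ) (A : Matrix (Fin m) (Fin n) ℤ) (b : Fin m → ℤ)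
    (hsol : ∃ x : Fin n → ℝ, (∀ j, x j ∈ L) ∧ ∀ i, ∑ j, (A i j : ℝ) * x j = (b i : ℝ)) :
    ∃ x : Fin n → ℝ, (∀ j, x j ∈ L) ∧ (∀ j, ∃ q : ℚ, x j = (q : ℝ)) ∧
      ∀ i, ∑ j, (A i j : ℝ) * x j = (b i : ℝ) := by
  classical
  obtain ⟨x, hxL, hxA⟩ := hsol
  rcases Nat.eq_zero_or_pos n with hn | hn
  · subst hn
    exact ⟨fun j => 0, fun j => j.elim0, fun j => j.elim0, fun i => by simpa using hxA i⟩
  have h0L : (0 : ℝ) ∈ L := by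
    have := hadd _ (hxL ⟨0, hn⟩) _ (hneg _ (hxL ⟨0, hn⟩))
    simpa using this
  -- quotient of ℝ by the rationals, as a ℚ-vector space
  let P : Submodule ℚ ℝ := Submodule.span ℚ {(1 : ℝ)}
  let V := ℝ ⧸ P
  let π : ℝ →ₗ[ℚ] V := P.mkQ
  have hπQ : ∀ q : ℚ, π ((q : ℝ)) = 0 := by
    intro q
    show P.mkQ _ = 0
    rw [Submodule.mkQ_apply, Submodule.Quotient.mk_eq_zero]
    exact Submodule.mem_span_singleton.2 ⟨q, by simp [Rat.smul_def]⟩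
  have hπmul : ∀ (c : ℤ) (y : ℝ), π ((c : ℝ) * y) = c • π y := by
    intro c y
    have e : (c : ℝ) * y = c • y := by simp [zsmul_eq_mul]
    rw [e, map_zsmul]
  haveI : NoZeroSMulDivisors ℤ V := by
    constructor
    intro a v hav
    rcases eq_or_ne a 0 with h | h
    · exact Or.inl h
    · right
      have h2 : ((a : ℚ)) • v = 0 := by rwa [Int.cast_smul_eq_zsmul]
      exact (smul_eq_zero.1 h2).resolve_left (Int.cast_ne_zero.2 h)
  let H : Submodule ℤ V := Submodule.span ℤ (Set.range fun j => π (x j))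
  have hgH : ∀ j, π (x j) ∈ H := fun j => Submodule.subset_span ⟨j, rfl⟩
  haveI : Module.Finite ℤ H :=
    Module.Finite.iff_fg.2 (Submodule.fg_span (Set.finite_range _))
  haveI : Module.Free ℤ H := Module.free_of_finite_type_torsion_free'
  let ι := Module.Free.ChooseBasisIndex ℤ H
  let B : Module.Basis ι ℤ H := Module.Free.chooseBasis ℤ H
  -- each basis vector is an integer combination of the π (x j)
  have hbasis : ∀ i : ι, ∃ k : Fin n → ℤ, ∑ j, k j • π (x j) = (B i : V) :=
    fun i => (Submodule.mem_span_range_iff_exists_fun ℤ).1 (B i).2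
  choose k hk using hbasis
  let h : ι → ℝ := fun i => ∑ j, (k i j : ℝ) * x j
  have hπh : ∀ i, π (h i) = (B i : V) := by
    intro i
    have e : π (∑ j, (k i j : ℝ) * x j) = ∑ j, k i j • π (x j) := by
      rw [map_sum]; exact Finset.sum_congr rfl fun j _ => hπmul _ _
    show π (∑ j, (k i j : ℝ) * x j) = (B i : V)
    rw [e, hk i]
  have hhL : ∀ i, h i ∈ L := by
    intro i
    have := stmt6_combo L hadd hneg Finset.univ (k i) x (fun j _ => hxL j) 0 h0L
    simpa using this
  -- coordinates of π (x j) in the basis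
  let c : Fin n → ι → ℤ := fun j i => B.repr ⟨π (x j), hgH j⟩ i
  have hrepr : ∀ j, π (x j) = ∑ i, c j i • (B i : V) := by
    intro j
    have h2 : ((∑ i, B.repr ⟨π (x j), hgH j⟩ i • B i : H) : V) = π (x j) :=
      congrArg Subtype.val (B.sum_repr ⟨π (x j), hgH j⟩)
    calc π (x j) = ((∑ i, B.repr ⟨π (x j), hgH j⟩ i • B i : H) : V) := h2.symm
      _ = ∑ i, c j i • (B i : V) := by push_cast; rfl
  -- the key orthogonality relation
  have hAc : ∀ (p : Fin m) (i : ι), ∑ j, A p j * c j i = 0 := by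
    intro p i
    have hVsum : ∑ j, A p j • π (x j) = 0 := by
      have e : π (∑ j, (A p j : ℝ) * x j) = ∑ j, A p j • π (x j) := by
        rw [map_sum]; exact Finset.sum_congr rfl fun j _ => hπmul _ _
      rw [← e, hxA p]
      have e2 : ((b p : ℤ) : ℝ) = (((b p : ℚ)) : ℝ) := by push_cast; ring
      rw [e2, hπQ]
    have hVzero : ∑ j, A p j • (⟨π (x j), hgH j⟩ : H) = 0 := by
      apply Subtype.val_injective
      have hcoe : ((∑ j, A p j • (⟨π (x j), hgH j⟩ : H) : H) : V)
          = ∑ j, A p j • π (x j) := by push_cast; rfl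
      rw [hcoe, hVsum]; rfl
    have h3 := congrArg (fun v : ι →₀ ℤ => v i) (congrArg B.repr hVzero)
    simp only [map_sum, map_zsmul, map_zero, Finsupp.coe_finset_sum, Finset.sum_apply,
      Finsupp.smul_apply, smul_eq_mul, Finsupp.coe_zero, Pi.zero_apply] at h3
    exact h3
  -- the candidate rational solution
  let z : Fin n → ℝ := fun j => x j - ∑ i, (c j i : ℝ) * h i
  have hzL : ∀ j, z j ∈ L := by
    intro j
    have h1 := stmt6_combo L hadd hneg Finset.univ (fun i => -(c j i)) h
      (fun i _ => hhL i) (x j) (hxL j)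
    have e : x j + ∑ i, ((-(c j i) : ℤ) : ℝ) * h i = z j := by
      show _ = x j - ∑ i, (c j i : ℝ) * h i
      rw [sub_eq_add_neg, ← Finset.sum_neg_distrib]
      congr 1
      exact Finset.sum_congr rfl fun i _ => by push_cast; ring
    rwa [e] at h1
  have hπz : ∀ j, π (z j) = 0 := by
    intro j
    show π (x j - ∑ i, (c j i : ℝ) * h i) = 0
    rw [map_sub, map_sum]
    have e : ∀ i ∈ Finset.univ, π ((c j i : ℝ) * h i) = c j i • (B i : V) :=
      fun i _ => by rw [hπmul, hπh]
    rw [Finset.sum_congr rfl e, ← hrepr j, sub_self]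
  have hzQ : ∀ j, ∃ q : ℚ, z j = (q : ℝ) := by
    intro j
    have h1 := hπz j
    have h2 : z j ∈ P := by
      rwa [show π (z j) = P.mkQ (z j) from rfl, Submodule.mkQ_apply,
        Submodule.Quotient.mk_eq_zero] at h1
    obtain ⟨q, hq⟩ := Submodule.mem_span_singleton.1 h2
    exact ⟨q, by rw [← hq]; simp [Rat.smul_def]⟩
  refine ⟨z, hzL, hzQ, ?_⟩
  intro p
  have key : ∀ i : ι, ∑ j, (A p j : ℝ) * (c j i : ℝ) = 0 := by
    intro i
    have h1 := congrArg (fun t : ℤ => (t : ℝ)) (hAc p i)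
    push_cast at h1
    simpa using h1
  calc ∑ j, (A p j : ℝ) * z j
      = ∑ j, ((A p j : ℝ) * x j - ∑ i, ((A p j : ℝ) * (c j i : ℝ)) * h i) := by
        apply Finset.sum_congr rfl
        intro j _
        show (A p j : ℝ) * (x j - ∑ i, (c j i : ℝ) * h i) = _
        rw [mul_sub, Finset.mul_sum]
        congr 1
        exact Finset.sum_congr rfl fun i _ => by ring
    _ = ∑ j, (A p j : ℝ) * x j - ∑ i, (∑ j, (A p j : ℝ) * (c j i : ℝ)) * h i := by
        rw [Finset.sum_sub_distrib]
        congr 1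
        rw [Finset.sum_comm]
        exact Finset.sum_congr rfl fun i _ => (Finset.sum_mul _ _ _).symm
    _ = (b p : ℝ) := by
        rw [hxA p]
        have e : ∀ i ∈ Finset.univ, (∑ j, (A p j : ℝ) * (c j i : ℝ)) * h i = 0 :=
          fun i _ => by rw [key i, zero_mul]
        rw [Finset.sum_congr rfl e]
        simp
end

section
/- Let L ⊆ ℝ be closed under addition and negation and suppose L ∩ ℚ is dense in ℝ. Let A be an m × n rational matrix and b ∈ ℚ^m, and let P = { x ∈ ℝ^n : Ax ≤ b }. Then P contains a point of L^n if and only if P contains a point of L^n all of whose coordinates are rational. -/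
noncomputable section Stmt7Aux

/-- The rationals, as a `ℤ`-submodule of `ℝ`. -/
def stmt7Qsub : Submodule ℤ ℝ where
  carrier := Set.range ((↑) : ℚ → ℝ)
  add_mem' := by rintro a b ⟨p, rfl⟩ ⟨q, rfl⟩; exact ⟨p + q, by push_cast; ring⟩
  zero_mem' := ⟨0, by norm_num⟩
  smul_mem' := by rintro z a ⟨q, rfl⟩; exact ⟨z • q, by push_cast [zsmul_eq_mul]; ring⟩

instance stmt7_tf : NoZeroSMulDivisors ℤ (ℝ ⧸ stmt7Qsub) := by
  constructor
  intro z x h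
  rcases eq_or_ne z 0 with hz | hz
  · exact Or.inl hz
  · right
    obtain ⟨r, rfl⟩ := Submodule.mkQ_surjective _ x
    have : z • r ∈ stmt7Qsub := by
      rw [← Submodule.Quotient.mk_eq_zero (p := stmt7Qsub)]
      rw [show Submodule.Quotient.mk (z • r) = z • stmt7Qsub.mkQ r from rfl]
      exact h
    obtain ⟨q, hq⟩ := this
    have hr : r = ((q / z : ℚ) : ℝ) := by
      have hz' : (z : ℝ) ≠ 0 := Int.cast_ne_zero.mpr hz
      field_simp
      rw [Rat.cast_div, Rat.cast_intCast, hq, zsmul_eq_mul, mul_div_cancel_left₀ _ hz']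
    rw [show (Submodule.mkQ stmt7Qsub) r = Submodule.Quotient.mk r from rfl,
      Submodule.Quotient.mk_eq_zero, hr]
    exact ⟨_, rfl⟩

theorem stmt7_key (L : Set ℝ)
    (hadd : ∀ x ∈ L, ∀ y ∈ L, x + y ∈ L) (hneg : ∀ x ∈ L, -x ∈ L)
    (hdense : Dense (L ∩ Set.range ((↑) : ℚ → ℝ)))
    (m n : ℕ) (A : Matrix (Fin m) (Fin n) ℚ) (b : Fin m → ℚ)
    (x : Fin n → ℝ) (hfeas : ∀ i, ∑ j, (A i j : ℝ) * x j ≤ (b i : ℝ))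
    (hxL : ∀ j, x j ∈ L) :
    ∃ y : Fin n → ℝ, (∀ i, ∑ j, (A i j : ℝ) * y j ≤ (b i : ℝ)) ∧ (∀ j, y j ∈ L) ∧
      ∀ j, ∃ q : ℚ, y j = (q : ℝ) := by
  classical
  -- L as an additive subgroup
  have h0L : (0 : ℝ) ∈ L := by
    obtain ⟨a, ha, -⟩ := hdense.nonempty
    have := hadd a ha (-a) (hneg a ha)
    simpa using this
  let LS : AddSubgroup ℝ :=
    { carrier := L
      add_mem' := fun {a b} ha hb => hadd a ha b hb
      zero_mem' := h0L
      neg_mem' := fun {a} ha => hneg a ha }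
  have hLS : ∀ r : ℝ, r ∈ LS ↔ r ∈ L := fun r => Iff.rfl
  set mk : ℝ →ₗ[ℤ] ℝ ⧸ stmt7Qsub := stmt7Qsub.mkQ with hmk
  set N : Submodule ℤ (ℝ ⧸ stmt7Qsub) := Submodule.span ℤ (Set.range fun j => mk (x j)) with hN
  haveI : Module.Finite ℤ N := Module.Finite.span_of_finite ℤ (Set.finite_range _)
  set B := Module.Free.chooseBasis ℤ N with hB
  set ι := Module.Free.ChooseBasisIndex ℤ N
  have hXmem : ∀ j, mk (x j) ∈ N := fun j => Submodule.subset_span ⟨j, rfl⟩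
  set X : Fin n → N := fun j => ⟨mk (x j), hXmem j⟩ with hX
  set crd : Fin n → ι → ℤ := fun j t => B.repr (X j) t with hcrd
  -- basis elements come from integer combinations of the `x j`
  have hwex : ∀ t : ι, ∃ w : Fin n → ℤ, ∑ j, w j • mk (x j) = (B t : ℝ ⧸ stmt7Qsub) := by
    intro t
    exact (Submodule.mem_span_range_iff_exists_fun ℤ).mp (B t).2
  choose w hw using hwex
  set s : ι → ℝ := fun t => ∑ j, (w t j : ℝ) * x j with hs
  have hsL : ∀ t, s t ∈ L := by
    intro t
    have : s t ∈ LS := by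
      apply AddSubgroup.sum_mem
      intro j _
      have := AddSubgroup.zsmul_mem LS ((hLS _).mpr (hxL j)) (w t j)
      simpa [zsmul_eq_mul] using this
    exact this
  have hmks : ∀ t, mk (s t) = (B t : ℝ ⧸ stmt7Qsub) := by
    intro t
    have h1 : s t = ∑ j, w t j • x j := by simp [hs, zsmul_eq_mul]
    rw [h1, map_sum]
    simp only [map_zsmul]
    exact hw t
  set q : Fin n → ℝ := fun j => x j - ∑ t, (crd j t : ℝ) * s t with hqdef
  have hxq : ∀ j, x j = q j + ∑ t, (crd j t : ℝ) * s t := by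
    intro j; simp [hqdef]
  have hq0 : ∀ j, mk (q j) = 0 := by
    intro j
    have h1 : q j = x j - ∑ t, crd j t • s t := by simp [hqdef, zsmul_eq_mul]
    have h2 : ∑ t, crd j t • (B t : ℝ ⧸ stmt7Qsub) = mk (x j) := by
      have := B.sum_repr (X j)
      have h3 := congrArg (fun v : N => (v : ℝ ⧸ stmt7Qsub)) this
      simp only [AddSubmonoidClass.coe_finset_sum, SetLike.val_smul] at h3
      exact h3
    rw [h1, map_sub, map_sum]
    simp only [map_zsmul, hmks]
    rw [h2, sub_self]
  have hqQ : ∀ j, ∃ qq : ℚ, q j = (qq : ℝ) := by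
    intro j
    have : q j ∈ stmt7Qsub := (Submodule.Quotient.mk_eq_zero _).mp (hq0 j)
    obtain ⟨qq, hqq⟩ := this
    exact ⟨qq, hqq.symm⟩
  have hqL : ∀ j, q j ∈ L := by
    intro j
    have : q j ∈ LS := by
      have h1 : q j = x j + -(∑ t, (crd j t : ℝ) * s t) := by rw [hqdef]; ring
      rw [hLS, h1]
      apply hadd _ (hxL j)
      apply hneg
      have : (∑ t, (crd j t : ℝ) * s t) ∈ LS := by
        apply AddSubgroup.sum_mem
        intro t _
        have := AddSubgroup.zsmul_mem LS ((hLS _).mpr (hsL t)) (crd j t)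
        simpa [zsmul_eq_mul] using this
      exact this
    exact this
  -- kernel relations for tight rows
  have hker : ∀ i, (∑ j, (A i j : ℝ) * x j = (b i : ℝ)) →
      ∀ t, ∑ j, (A i j : ℝ) * (crd j t : ℝ) = 0 := by
    intro i hi t
    set a : Fin n → ℚ := A i with ha
    set d : ℤ := ∏ j, ((a j).den : ℤ) with hd
    have hd0 : d ≠ 0 := by
      rw [hd]
      apply Finset.prod_ne_zero_iff.mpr
      intro j _
      exact_mod_cast (a j).den_nz
    set ai : Fin n → ℤ := fun j => (a j).num * ∏ j' ∈ Finset.univ.erase j, ((a j').den : ℤ)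
      with hai
    have key : ∀ j, (ai j : ℚ) = a j * (d : ℚ) := by
      intro j
      have h1 : d = ((a j).den : ℤ) * ∏ j' ∈ Finset.univ.erase j, ((a j').den : ℤ) :=
        (Finset.mul_prod_erase _ _ (Finset.mem_univ j)).symm
      rw [hai, h1]
      push_cast
      rw [← Rat.mul_den_eq_num]
      ring
    have keyR : ∀ j, (ai j : ℝ) = (a j : ℝ) * (d : ℝ) := by
      intro j; exact_mod_cast congrArg (fun r : ℚ => (r : ℝ)) (key j)
    have hZ : (∑ j, ai j • X j : N) = 0 := by
      apply Subtype.ext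
      rw [ZeroMemClass.coe_zero]
      have hv : ((∑ j, ai j • X j : N) : ℝ ⧸ stmt7Qsub) = ∑ j, ai j • mk (x j) := by
        push_cast
        rfl
      rw [hv]
      have h2 : ∑ j, ai j • mk (x j) = mk (∑ j, (ai j : ℝ) * x j) := by
        rw [map_sum]
        congr 1
        funext j
        rw [← map_zsmul mk (ai j) (x j)]
        congr 1
        rw [zsmul_eq_mul]
      rw [h2]
      have h3 : ∑ j, (ai j : ℝ) * x j = ((d * b i : ℚ) : ℝ) := by
        push_cast
        calc ∑ j, (ai j : ℝ) * x j = ∑ j, (d : ℝ) * ((a j : ℝ) * x j) := by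
              apply Finset.sum_congr rfl
              intro j _
              rw [keyR j]; ring
          _ = (d : ℝ) * ∑ j, (a j : ℝ) * x j := by rw [Finset.mul_sum]
          _ = (d : ℝ) * (b i : ℝ) := by rw [hi]
      rw [h3]
      have : ((d * b i : ℚ) : ℝ) ∈ stmt7Qsub := ⟨_, rfl⟩
      rw [show mk ((d * b i : ℚ) : ℝ) = Submodule.Quotient.mk ((d * b i : ℚ) : ℝ) from rfl,
        Submodule.Quotient.mk_eq_zero]
      exact this
    have hker0 : ∑ j, ai j * crd j t = 0 := by
      have h4 := congrArg (fun v : N => B.repr v t) hZ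
      simpa [map_sum, map_zsmul, hcrd, smul_eq_mul] using h4
    have h5 : (d : ℝ) * ∑ j, (a j : ℝ) * (crd j t : ℝ) = 0 := by
      calc (d : ℝ) * ∑ j, (a j : ℝ) * (crd j t : ℝ)
          = ∑ j, (ai j : ℝ) * (crd j t : ℝ) := by
            rw [Finset.mul_sum]
            apply Finset.sum_congr rfl
            intro j _
            rw [keyR j]; ring
        _ = ((∑ j, ai j * crd j t : ℤ) : ℝ) := by push_cast; rfl
        _ = 0 := by rw [hker0]; norm_num
    have hd0R : (d : ℝ) ≠ 0 := Int.cast_ne_zero.mpr hd0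
    exact (mul_eq_zero.mp h5).resolve_left hd0R
  -- bound and epsilon
  set Bnd : Fin m → ℝ := fun i => ∑ t, |∑ j, (A i j : ℝ) * (crd j t : ℝ)| with hBnd
  have hBnd0 : ∀ i, 0 ≤ Bnd i := fun i => Finset.sum_nonneg fun t _ => abs_nonneg _
  set slack : Fin m → ℝ := fun i => (b i : ℝ) - ∑ j, (A i j : ℝ) * x j with hslack
  have hslack0 : ∀ i, 0 ≤ slack i := fun i => sub_nonneg.mpr (hfeas i)
  obtain ⟨ε, hε0, hε⟩ : ∃ ε : ℝ, 0 < ε ∧ ∀ i, slack i ≠ 0 → Bnd i * ε < slack i := by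
    set F : Finset (Fin m) := Finset.univ.filter (fun i => slack i ≠ 0) with hF
    by_cases hFne : F.Nonempty
    · refine ⟨min 1 (F.inf' hFne fun i => slack i / (Bnd i + 1)), ?_, ?_⟩
      · apply lt_min one_pos
        apply (Finset.lt_inf'_iff _).mpr
        intro i hiF
        have hine : slack i ≠ 0 := by simpa [hF] using hiF
        have hs : 0 < slack i := lt_of_le_of_ne (hslack0 i) (Ne.symm hine)
        have hb1 : 0 < Bnd i + 1 := by have := hBnd0 i; linarith
        positivity
      · intro i hi
        have hiF : i ∈ F := by simp [hF, hi]
        have h1 : min 1 (F.inf' hFne fun i => slack i / (Bnd i + 1)) ≤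
            slack i / (Bnd i + 1) :=
          le_trans (min_le_right _ _) (Finset.inf'_le _ hiF)
        have hs : 0 < slack i := lt_of_le_of_ne (hslack0 i) (Ne.symm hi)
        have hb1 : 0 < Bnd i + 1 := by have := hBnd0 i; linarith
        calc Bnd i * min 1 (F.inf' hFne fun i => slack i / (Bnd i + 1))
            ≤ Bnd i * (slack i / (Bnd i + 1)) := mul_le_mul_of_nonneg_left h1 (hBnd0 i)
          _ < slack i := by
              rw [mul_comm, div_mul_eq_mul_div, div_lt_iff₀ hb1]
              nlinarith [hs, hBnd0 i]
    · refine ⟨1, one_pos, fun i hi => absurd ⟨i, ?_⟩ hFne⟩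
      simp [hF, hi]
  -- choose rational elements of L close to the s t
  have hgex : ∀ t : ι, ∃ g : ℝ, g ∈ L ∧ (∃ gq : ℚ, g = (gq : ℝ)) ∧ |g - s t| < ε := by
    intro t
    have hcl := hdense (s t)
    rw [Metric.mem_closure_iff] at hcl
    obtain ⟨g, hg, hdist⟩ := hcl ε hε0
    refine ⟨g, hg.1, ?_, ?_⟩
    · obtain ⟨gq, hgq⟩ := hg.2
      exact ⟨gq, hgq.symm⟩
    · rw [abs_sub_comm]
      simpa [Real.dist_eq] using hdist
  choose g hgL hgQ hgd using hgex
  choose gq hgq using hgQ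
  set y : Fin n → ℝ := fun j => q j + ∑ t, (crd j t : ℝ) * g t with hy
  have hyx : ∀ j, y j = x j + ∑ t, (crd j t : ℝ) * (g t - s t) := by
    intro j
    have h1 : ∑ t, (crd j t : ℝ) * (g t - s t) =
        ∑ t, (crd j t : ℝ) * g t - ∑ t, (crd j t : ℝ) * s t := by
      rw [← Finset.sum_sub_distrib]
      apply Finset.sum_congr rfl
      intro t _
      ring
    rw [hy, h1, hxq j]
    ring
  have hswap : ∀ a : Fin n → ℝ, ∑ j, a j * y j =
      ∑ j, a j * x j + ∑ t, (∑ j, a j * (crd j t : ℝ)) * (g t - s t) := by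
    intro a
    calc ∑ j, a j * y j
        = ∑ j, (a j * x j + ∑ t, (a j * (crd j t : ℝ)) * (g t - s t)) := by
          apply Finset.sum_congr rfl
          intro j _
          rw [hyx j, mul_add, Finset.mul_sum]
          congr 1
          apply Finset.sum_congr rfl
          intro t _
          ring
      _ = ∑ j, a j * x j + ∑ j, ∑ t, (a j * (crd j t : ℝ)) * (g t - s t) :=
          Finset.sum_add_distrib
      _ = ∑ j, a j * x j + ∑ t, ∑ j, (a j * (crd j t : ℝ)) * (g t - s t) := by
          rw [Finset.sum_comm]
      _ = ∑ j, a j * x j + ∑ t, (∑ j, a j * (crd j t : ℝ)) * (g t - s t) := by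
          congr 1
          apply Finset.sum_congr rfl
          intro t _
          rw [Finset.sum_mul]
  refine ⟨y, ?_, ?_, ?_⟩
  · intro i
    rcases eq_or_ne (slack i) 0 with h0 | h0
    · have htight : ∑ j, (A i j : ℝ) * x j = (b i : ℝ) := by
        have : (b i : ℝ) - ∑ j, (A i j : ℝ) * x j = 0 := h0
        linarith
      have hz : ∑ t, (∑ j, (A i j : ℝ) * (crd j t : ℝ)) * (g t - s t) = 0 := by
        apply Finset.sum_eq_zero
        intro t _
        rw [hker i htight t, zero_mul]
      rw [hswap (fun j => (A i j : ℝ)), hz, htight, add_zero]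
    · have hT : |∑ t, (∑ j, (A i j : ℝ) * (crd j t : ℝ)) * (g t - s t)| ≤ Bnd i * ε := by
        calc |∑ t, (∑ j, (A i j : ℝ) * (crd j t : ℝ)) * (g t - s t)|
            ≤ ∑ t, |(∑ j, (A i j : ℝ) * (crd j t : ℝ)) * (g t - s t)| :=
              Finset.abs_sum_le_sum_abs _ _
          _ ≤ ∑ t, |∑ j, (A i j : ℝ) * (crd j t : ℝ)| * ε := by
              apply Finset.sum_le_sum
              intro t _
              rw [abs_mul]
              exact mul_le_mul_of_nonneg_left (le_of_lt (hgd t)) (abs_nonneg _)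
          _ = Bnd i * ε := by rw [hBnd, Finset.sum_mul]
      have hlt := hε i h0
      rw [hswap (fun j => (A i j : ℝ))]
      have h2 : ∑ t, (∑ j, (A i j : ℝ) * (crd j t : ℝ)) * (g t - s t) ≤ Bnd i * ε :=
        le_trans (le_abs_self _) hT
      have h3 : slack i = (b i : ℝ) - ∑ j, (A i j : ℝ) * x j := rfl
      linarith
  · intro j
    have : y j ∈ LS := by
      rw [hy]
      apply AddSubgroup.add_mem
      · exact (hLS _).mpr (hqL j)
      · apply AddSubgroup.sum_mem
        intro t _
        have := AddSubgroup.zsmul_mem LS ((hLS _).mpr (hgL t)) (crd j t)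
        simpa [zsmul_eq_mul] using this
    exact this
  · intro j
    obtain ⟨qq, hqq⟩ := hqQ j
    refine ⟨qq + ∑ t, (crd j t : ℚ) * gq t, ?_⟩
    rw [show y j = q j + ∑ t, (crd j t : ℝ) * g t from rfl, hqq]
    push_cast
    congr 1
    apply Finset.sum_congr rfl
    intro t _
    rw [hgq t]

theorem stmt_7 (L : Set ℝ)
    (hadd : ∀ x ∈ L, ∀ y ∈ L, x + y ∈ L) (hneg : ∀ x ∈ L, -x ∈ L)
    (hdense : Dense (L ∩ Set.range ((↑) : ℚ → ℝ)))
    (m n : ℕ) (A : Matrix (Fin m) (Fin n) ℚ) (b : Fin m → ℚ) :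
    (∃ x : Fin n → ℝ, (∀ i, ∑ j, (A i j : ℝ) * x j ≤ (b i : ℝ)) ∧ ∀ j, x j ∈ L) ↔
      ∃ x : Fin n → ℝ, (∀ i, ∑ j, (A i j : ℝ) * x j ≤ (b i : ℝ)) ∧ (∀ j, x j ∈ L) ∧
        ∀ j, ∃ q : ℚ, x j = (q : ℝ) := by
  constructor
  · rintro ⟨x, hx1, hx2⟩
    exact stmt7_key L hadd hneg hdense m n A b x hx1 hx2
  · rintro ⟨x, hx1, hx2, -⟩
    exact ⟨x, hx1, hx2⟩

end Stmt7Aux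
end

section
/- Let L be a dense proper subset of ℝ that is closed under addition and negation. Let A be an m × n integer matrix, b ∈ ℤ^m, c ∈ ℚ^n, and P = { x ∈ ℝ^n : Ax ≤ b }. Suppose the linear program max{ cᵀx : Ax ≤ b } attains an optimal value τ (i.e., τ is the maximum of cᵀx over P and is attained), and let F = P ∩ { x : cᵀx = τ } be the optimal face. Then the following are equivalent: (a) F contains no point of L^n; (b) there exist ȳ, ū ∈ ℚ^m such that (i) supp(ū) ⊆ supp(ȳ), (ii) ȳ ≥ 0, Aᵀȳ = c, and bᵀȳ = τ (i.e., ȳ is an optimal solution of the dual min{ bᵀy : Aᵀy = c, y ≥ 0 }), and (iii) Aᵀū ∈ ℤ^n and bᵀū ∉ L. -/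
open Finset

private lemma sum_dite_subtype {ι : Type} [Fintype ι] (p : ι → Prop) [DecidablePred p]
    (g : {x // p x} → ℚ) :
    (∑ i : ι, if h : p i then g ⟨i, h⟩ else 0) = ∑ z : {x // p x}, g z := by
  rw [← Fintype.sum_subtype_add_sum_subtype p (fun i => if h : p i then g ⟨i, h⟩ else 0)]
  have h1 : (∑ z : {x // p x}, if h : p z.1 then g ⟨z.1, h⟩ else 0) = ∑ z : {x // p x}, g z :=
    Finset.sum_congr rfl (fun z _ => by rw [dif_pos z.2])
  have h2 : (∑ z : {x // ¬ p x}, if h : p z.1 then g ⟨z.1, h⟩ else 0) = 0 :=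
    Finset.sum_eq_zero (fun z _ => by rw [dif_neg z.2])
  rw [h1, h2, add_zero]

theorem farkas_fm : ∀ (n : ℕ) (ι : Type) [Fintype ι] (a : ι → Fin n → ℚ) (b : ι → ℚ),
    (∃ x : Fin n → ℚ, ∀ i, ∑ j, a i j * x j ≤ b i) ∨
    (∃ y : ι → ℚ, (∀ i, 0 ≤ y i) ∧ (∀ j, ∑ i, y i * a i j = 0) ∧ ∑ i, y i * b i < 0) := by
  intro n
  induction n with
  | zero =>
    intro ι _ a b
    classical
    by_cases h : ∀ i, 0 ≤ b i
    · exact Or.inl ⟨fun _ => 0, fun i => by simpa using h i⟩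
    · push_neg at h
      obtain ⟨i0, hi0⟩ := h
      refine Or.inr ⟨fun i => if i = i0 then 1 else 0,
        fun i => by by_cases h : i = i0 <;> simp [h], fun j => j.elim0, ?_⟩
      rw [Finset.sum_eq_single i0]
      · simpa using hi0
      · intro i _ hne; simp [hne]
      · simp
  | succ n IH =>
    intro ι _ a b
    classical
    set α : ι → ℚ := fun i => a i 0 with hα
    set r : ι → Fin n → ℚ := fun i j => a i j.succ with hr
    set κ := ({i // α i = 0} ⊕ {i // 0 < α i} × {i // α i < 0}) with hκ
    set a' : κ → Fin n → ℚ := fun k => Sum.rec (fun z => r z.1)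
      (fun pq => fun j => α pq.1.1 * r pq.2.1 j - α pq.2.1 * r pq.1.1 j) k with ha'
    set b' : κ → ℚ := fun k => Sum.rec (fun z => b z.1)
      (fun pq => α pq.1.1 * b pq.2.1 - α pq.2.1 * b pq.1.1) k with hb'
    rcases IH κ a' b' with ⟨x', hx'⟩ | ⟨y', hy0, hyA, hyb⟩
    · -- feasible case
      set U : {i // 0 < α i} → ℚ := fun p => (b p.1 - ∑ j, r p.1 j * x' j) / α p.1 with hU
      set Lo : {i // α i < 0} → ℚ := fun q => (b q.1 - ∑ j, r q.1 j * x' j) / α q.1 with hLo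
      have key : ∀ (p : {i // 0 < α i}) (q : {i // α i < 0}), Lo q ≤ U p := by
        intro p q
        have hc := hx' (Sum.inr (p, q))
        simp only [ha', hb'] at hc
        have hsplit : ∑ j, (α p.1 * r q.1 j - α q.1 * r p.1 j) * x' j
            = α p.1 * (∑ j, r q.1 j * x' j) - α q.1 * (∑ j, r p.1 j * x' j) := by
          rw [Finset.mul_sum, Finset.mul_sum, ← Finset.sum_sub_distrib]
          exact Finset.sum_congr rfl fun j _ => by ring
        rw [hsplit] at hc
        have e1 : Lo q * α q.1 = b q.1 - ∑ j, r q.1 j * x' j :=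
          div_mul_cancel₀ _ (ne_of_lt q.2)
        have e2 : U p * α p.1 = b p.1 - ∑ j, r p.1 j * x' j :=
          div_mul_cancel₀ _ (ne_of_gt p.2)
        have h4 : 0 ≤ α p.1 * (Lo q * α q.1) - α q.1 * (U p * α p.1) := by
          rw [e1, e2]; linarith
        have hprodneg : α p.1 * α q.1 < 0 := mul_neg_of_pos_of_neg p.2 q.2
        by_contra hcon
        push_neg at hcon
        have h6 : (α p.1 * α q.1) * (Lo q - U p) < 0 :=
          mul_neg_of_neg_of_pos hprodneg (by linarith)
        have h7 : (α p.1 * α q.1) * (Lo q - U p)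
            = α p.1 * (Lo q * α q.1) - α q.1 * (U p * α p.1) := by ring
        rw [h7] at h6
        linarith
      obtain ⟨x0, hx0U, hx0L⟩ : ∃ x0 : ℚ, (∀ p : {i // 0 < α i}, x0 ≤ U p) ∧
          (∀ q : {i // α i < 0}, Lo q ≤ x0) := by
        by_cases hP : Nonempty {i // 0 < α i}
        · have hne : (Finset.univ : Finset {i // 0 < α i}).Nonempty := Finset.univ_nonempty
          refine ⟨Finset.inf' Finset.univ hne U, fun p => Finset.inf'_le U (Finset.mem_univ p),
            fun q => ?_⟩
          obtain ⟨p, _, hp⟩ := Finset.exists_mem_eq_inf' hne U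
          rw [hp]; exact key p q
        · by_cases hN : Nonempty {i // α i < 0}
          · have hne : (Finset.univ : Finset {i // α i < 0}).Nonempty := Finset.univ_nonempty
            exact ⟨Finset.sup' Finset.univ hne Lo,
              fun p => absurd ⟨p⟩ hP, fun q => Finset.le_sup' Lo (Finset.mem_univ q)⟩
          · exact ⟨0, fun p => absurd ⟨p⟩ hP, fun q => absurd ⟨q⟩ hN⟩
      refine Or.inl ⟨Fin.cons x0 x', fun i => ?_⟩
      rw [Fin.sum_univ_succ]
      simp only [Fin.cons_zero, Fin.cons_succ]
      have hsum : ∑ j, a i j.succ * x' j = ∑ j, r i j * x' j := rfl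
      rw [hsum]
      rcases lt_trichotomy (α i) 0 with hneg | hzero | hpos
      · have h1 := hx0L ⟨i, hneg⟩
        have h2 : α i * x0 ≤ α i * Lo ⟨i, hneg⟩ :=
          mul_le_mul_of_nonpos_left h1 (le_of_lt hneg)
        have h3 : α i * Lo ⟨i, hneg⟩ = b i - ∑ j, r i j * x' j := by
          rw [hLo, mul_comm]
          exact div_mul_cancel₀ _ (ne_of_lt hneg)
        have : a i 0 * x0 ≤ b i - ∑ j, r i j * x' j := by rw [show a i 0 = α i from rfl]; linarith
        linarith
      · have h1 := hx' (Sum.inl ⟨i, hzero⟩)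
        have h2 : (∑ j, r i j * x' j) ≤ b i := h1
        have h3 : a i 0 = 0 := hzero
        rw [h3, zero_mul]
        linarith
      · have h1 := hx0U ⟨i, hpos⟩
        have h2 : α i * x0 ≤ α i * U ⟨i, hpos⟩ := mul_le_mul_of_nonneg_left h1 (le_of_lt hpos)
        have h3 : α i * U ⟨i, hpos⟩ = b i - ∑ j, r i j * x' j := by
          rw [hU, mul_comm]
          exact div_mul_cancel₀ _ (ne_of_gt hpos)
        have : a i 0 * x0 ≤ b i - ∑ j, r i j * x' j := by rw [show a i 0 = α i from rfl]; linarith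
        linarith
    · -- infeasible case: build certificate
      set y : ι → ℚ := fun i =>
        (if h : α i = 0 then y' (Sum.inl ⟨i, h⟩) else 0)
        + ((if h : 0 < α i then
              ∑ q : {i // α i < 0}, y' (Sum.inr (⟨i, h⟩, q)) * (-α q.1) else 0)
        + (if h : α i < 0 then
              ∑ p : {i // 0 < α i}, y' (Sum.inr (p, ⟨i, h⟩)) * α p.1 else 0)) with hy
      have hynn : ∀ i, 0 ≤ y i := by
        intro i
        have t1 : (0:ℚ) ≤ if h : α i = 0 then y' (Sum.inl ⟨i, h⟩) else 0 := by
          split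
          · exact hy0 _
          · exact le_rfl
        have t2 : (0:ℚ) ≤ if h : 0 < α i then
            ∑ q : {i // α i < 0}, y' (Sum.inr (⟨i, h⟩, q)) * (-α q.1) else 0 := by
          split
          · exact Finset.sum_nonneg fun q _ => mul_nonneg (hy0 _) (by linarith [q.2])
          · exact le_rfl
        have t3 : (0:ℚ) ≤ if h : α i < 0 then
            ∑ p : {i // 0 < α i}, y' (Sum.inr (p, ⟨i, h⟩)) * α p.1 else 0 := by
          split
          · exact Finset.sum_nonneg fun p _ => mul_nonneg (hy0 _) (by linarith [p.2])
          · exact le_rfl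
        rw [hy]
        dsimp only
        linarith
      have master : ∀ c : ι → ℚ, ∑ i, y i * c i =
          (∑ z : {i // α i = 0}, y' (Sum.inl z) * c z.1)
          + ∑ p : {i // 0 < α i}, ∑ q : {i // α i < 0},
              y' (Sum.inr (p, q)) * (-(α q.1) * c p.1 + α p.1 * c q.1) := by
        intro c
        have expand : ∀ i, y i * c i =
            (if h : α i = 0 then y' (Sum.inl ⟨i, h⟩) * c i else 0)
            + ((if h : 0 < α i then
                ∑ q : {i // α i < 0}, y' (Sum.inr (⟨i, h⟩, q)) * (-α q.1) * c i else 0)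
            + (if h : α i < 0 then
                ∑ p : {i // 0 < α i}, y' (Sum.inr (p, ⟨i, h⟩)) * α p.1 * c i else 0)) := by
          intro i
          rw [hy]
          dsimp only
          rw [add_mul, add_mul]
          congr 1
          · split <;> simp
          congr 1
          · split
            · rw [Finset.sum_mul]
            · rw [zero_mul]
          · split
            · rw [Finset.sum_mul]
            · rw [zero_mul]
        rw [Finset.sum_congr rfl (fun i _ => expand i)]
        rw [Finset.sum_add_distrib, Finset.sum_add_distrib]
        rw [sum_dite_subtype (fun i => α i = 0) (fun z => y' (Sum.inl z) * c z.1)]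
        rw [sum_dite_subtype (fun i => 0 < α i)
          (fun p => ∑ q : {i // α i < 0}, y' (Sum.inr (p, q)) * (-α q.1) * c p.1)]
        rw [sum_dite_subtype (fun i => α i < 0)
          (fun q => ∑ p : {i // 0 < α i}, y' (Sum.inr (p, q)) * α p.1 * c q.1)]
        congr 1
        rw [Finset.sum_comm (s := Finset.univ) (t := Finset.univ)
          (f := fun q p => y' (Sum.inr (p, q)) * α p.1 * c q.1)]
        rw [← Finset.sum_add_distrib]
        refine Finset.sum_congr rfl fun p _ => ?_
        rw [← Finset.sum_add_distrib]
        refine Finset.sum_congr rfl fun q _ => by ring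
      refine Or.inr ⟨y, hynn, ?_, ?_⟩
      · intro j
        refine Fin.cases ?_ ?_ j
        · rw [master (fun i => a i 0)]
          have z1 : (∑ z : {i // α i = 0}, y' (Sum.inl z) * a z.1 0) = 0 :=
            Finset.sum_eq_zero fun z _ => by
              have : α z.1 = 0 := z.2
              rw [show a z.1 0 = α z.1 from rfl, this, mul_zero]
          rw [z1, zero_add]
          refine Finset.sum_eq_zero fun p _ => Finset.sum_eq_zero fun q _ => ?_
          rw [show a p.1 0 = α p.1 from rfl, show a q.1 0 = α q.1 from rfl]
          ring
        · intro j'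
          rw [master (fun i => a i j'.succ)]
          have h0 := hyA j'
          rw [Fintype.sum_sum_type] at h0
          rw [Fintype.sum_prod_type (f := fun k : {i // 0 < α i} × {i // α i < 0} =>
            y' (Sum.inr k) * a' (Sum.inr k) j')] at h0
          refine Eq.trans ?_ h0
          congr 1
          refine Finset.sum_congr rfl fun p _ => Finset.sum_congr rfl fun q _ => ?_
          show y' (Sum.inr (p, q)) * (-α q.1 * r p.1 j' + α p.1 * r q.1 j')
            = y' (Sum.inr (p, q)) * (α p.1 * r q.1 j' - α q.1 * r p.1 j')
          ring
      · rw [master b]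
        rw [Fintype.sum_sum_type] at hyb
        rw [Fintype.sum_prod_type (f := fun k : {i // 0 < α i} × {i // α i < 0} =>
          y' (Sum.inr k) * b' (Sum.inr k))] at hyb
        have : (∑ z : {i // α i = 0}, y' (Sum.inl z) * b z.1)
            + ∑ p : {i // 0 < α i}, ∑ q : {i // α i < 0},
                y' (Sum.inr (p, q)) * (-(α q.1) * b p.1 + α p.1 * b q.1)
            = (∑ z : {i // α i = 0}, y' (Sum.inl z) * b' (Sum.inl z))
            + ∑ p : {i // 0 < α i}, ∑ q : {i // α i < 0},
                y' (Sum.inr (p, q)) * b' (Sum.inr (p, q)) := by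
          congr 1
          refine Finset.sum_congr rfl fun p _ => Finset.sum_congr rfl fun q _ => ?_
          show y' (Sum.inr (p, q)) * (-α q.1 * b p.1 + α p.1 * b q.1)
            = y' (Sum.inr (p, q)) * (α p.1 * b q.1 - α q.1 * b p.1)
          ring
        rw [this]
        exact hyb

theorem farkas_gen (η ι : Type) [Fintype η] [Fintype ι] (a : ι → η → ℚ) (b : ι → ℚ) :
    (∃ x : η → ℚ, ∀ i, ∑ j, a i j * x j ≤ b i) ∨
    (∃ y : ι → ℚ, (∀ i, 0 ≤ y i) ∧ (∀ j, ∑ i, y i * a i j = 0) ∧ ∑ i, y i * b i < 0) := by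
  classical
  let e := Fintype.equivFin η
  rcases farkas_fm (Fintype.card η) ι (fun i j => a i (e.symm j)) b with ⟨x', hx'⟩ | ⟨y, h1, h2, h3⟩
  · refine Or.inl ⟨fun h => x' (e h), fun i => ?_⟩
    have := hx' i
    rwa [← Equiv.sum_comp e (fun j => a i (e.symm j) * x' j), (by funext h; rw [Equiv.symm_apply_apply] :
      (fun h => a i (e.symm (e h)) * x' (e h)) = fun h => a i h * x' (e h))] at this
  · refine Or.inr ⟨y, h1, fun j => ?_, h3⟩
    have := h2 (e j)
    simpa using this

private lemma swap_mul_sum {R : Type} [CommRing R] {ι η : Type} [Fintype ι] [Fintype η]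
    (u : ι → R) (v : η → R) (g : ι → η → R) :
    ∑ j, (∑ i, g i j * u i) * v j = ∑ i, u i * ∑ j, g i j * v j := by
  calc ∑ j, (∑ i, g i j * u i) * v j = ∑ j, ∑ i, g i j * u i * v j :=
        Finset.sum_congr rfl fun j _ => Finset.sum_mul _ _ _
    _ = ∑ i, ∑ j, g i j * u i * v j := Finset.sum_comm
    _ = ∑ i, u i * ∑ j, g i j * v j := Finset.sum_congr rfl fun i _ => by
        rw [Finset.mul_sum]; exact Finset.sum_congr rfl fun j _ => by ring

theorem dual_opt (η ι : Type) [Fintype η] [Fintype ι]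
    (a : ι → η → ℚ) (b : ι → ℚ) (c : η → ℚ) (τ : ℝ)
    (hopt : IsGreatest {t : ℝ | ∃ x : η → ℝ,
      (∀ i, ∑ j, (a i j : ℝ) * x j ≤ (b i : ℝ)) ∧ t = ∑ j, (c j : ℝ) * x j} τ) :
    ∃ (x₀ : η → ℚ) (y₀ : ι → ℚ),
      (∀ i, ∑ j, a i j * x₀ j ≤ b i) ∧ ((∑ j, c j * x₀ j : ℚ) : ℝ) = τ ∧
      (∀ i, 0 ≤ y₀ i) ∧ (∀ j, ∑ i, a i j * y₀ i = c j) ∧ ((∑ i, b i * y₀ i : ℚ) : ℝ) = τ := by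
  classical
  obtain ⟨⟨xs, hfeas, hval⟩, hub⟩ := hopt
  let ρ := ι ⊕ (η ⊕ (η ⊕ (ι ⊕ Unit)))
  let M : ρ → (η ⊕ ι) → ℚ := fun rho col =>
    Sum.rec (fun i => Sum.rec (fun j => a i j) (fun _ => 0) col)
      (fun r2 => Sum.rec
        (fun j0 => Sum.rec (fun _ => 0) (fun i => - a i j0) col)
        (fun r3 => Sum.rec
          (fun j0 => Sum.rec (fun _ => 0) (fun i => a i j0) col)
          (fun r4 => Sum.rec
            (fun i0 => Sum.rec (fun _ => 0) (fun i => if i = i0 then (-1 : ℚ) else 0) col)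
            (fun _ => Sum.rec (fun j => - c j) (fun i => b i) col) r4) r3) r2) rho
  let rhs : ρ → ℚ := fun rho =>
    Sum.rec (fun i => b i)
      (fun r2 => Sum.rec (fun j0 => - c j0)
        (fun r3 => Sum.rec (fun j0 => c j0)
          (fun r4 => Sum.rec (fun _ => 0) (fun _ => 0) r4) r3) r2) rho
  rcases farkas_gen (η ⊕ ι) ρ M rhs with ⟨z, hz⟩ | ⟨y, hy0, hyM, hyrhs⟩
  · -- feasible: extract x₀, y₀
    set x₀ : η → ℚ := fun j => z (Sum.inl j) with hx₀
    set y₀ : ι → ℚ := fun i => z (Sum.inr i) with hy₀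
    have col_split : ∀ (f : (η ⊕ ι) → ℚ), (∑ col, f col * z col)
        = (∑ j, f (Sum.inl j) * x₀ j) + ∑ i, f (Sum.inr i) * y₀ i := by
      intro f
      rw [Fintype.sum_sum_type (f := fun col => f col * z col)]
    have hR1 : ∀ i, ∑ j, a i j * x₀ j ≤ b i := by
      intro i
      have h0 := hz (Sum.inl i)
      rw [col_split (fun col => M (Sum.inl i) col)] at h0
      have h1 : (∑ j, a i j * x₀ j) + ∑ i' : ι, (0:ℚ) * y₀ i' ≤ b i := h0
      simpa using h1
    have hR23 : ∀ j0, ∑ i, a i j0 * y₀ i = c j0 := by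
      intro j0
      have h20 := hz (Sum.inr (Sum.inl j0))
      rw [col_split (fun col => M (Sum.inr (Sum.inl j0)) col)] at h20
      have h2 : (∑ j : η, (0:ℚ) * x₀ j) + ∑ i, (- a i j0) * y₀ i ≤ - c j0 := h20
      have h30 := hz (Sum.inr (Sum.inr (Sum.inl j0)))
      rw [col_split (fun col => M (Sum.inr (Sum.inr (Sum.inl j0))) col)] at h30
      have h3 : (∑ j : η, (0:ℚ) * x₀ j) + ∑ i, a i j0 * y₀ i ≤ c j0 := h30
      simp only [zero_mul, Finset.sum_const_zero, zero_add] at h2 h3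
      have h2' : - ∑ i, a i j0 * y₀ i ≤ - c j0 := by
        rw [← Finset.sum_neg_distrib]
        exact le_trans (le_of_eq (Finset.sum_congr rfl fun i _ => by ring)) h2
      linarith
    have hR4 : ∀ i0, 0 ≤ y₀ i0 := by
      intro i0
      have h40 := hz (Sum.inr (Sum.inr (Sum.inr (Sum.inl i0))))
      rw [col_split (fun col => M (Sum.inr (Sum.inr (Sum.inr (Sum.inl i0)))) col)] at h40
      have h4 : (∑ j : η, (0:ℚ) * x₀ j)
          + ∑ i, (if i = i0 then (-1:ℚ) else 0) * y₀ i ≤ 0 := h40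
      simp only [zero_mul, Finset.sum_const_zero, zero_add] at h4
      rw [Finset.sum_congr rfl (fun i _ => show (if i = i0 then (-1:ℚ) else 0) * y₀ i
        = if i = i0 then -y₀ i else 0 by split <;> ring)] at h4
      rw [Finset.sum_ite_eq' Finset.univ i0 (fun i => -y₀ i)] at h4
      simp only [Finset.mem_univ, if_true] at h4
      linarith
    have hR5 : ∑ i, b i * y₀ i ≤ ∑ j, c j * x₀ j := by
      have h50 := hz (Sum.inr (Sum.inr (Sum.inr (Sum.inr ()))))
      rw [col_split (fun col => M (Sum.inr (Sum.inr (Sum.inr (Sum.inr ())))) col)] at h50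
      have h5 : (∑ j, (- c j) * x₀ j) + ∑ i, b i * y₀ i ≤ 0 := h50
      have he : (∑ j, (- c j) * x₀ j) = - ∑ j, c j * x₀ j := by
        rw [← Finset.sum_neg_distrib]; exact Finset.sum_congr rfl fun j _ => by ring
      rw [he] at h5
      linarith
    have hvle : ((∑ j, c j * x₀ j : ℚ) : ℝ) ≤ τ := by
      apply hub
      refine ⟨fun j => (x₀ j : ℝ), fun i => ?_, by push_cast; rfl⟩
      calc ∑ j, (a i j : ℝ) * (x₀ j : ℝ) = ((∑ j, a i j * x₀ j : ℚ) : ℝ) := by push_cast; rfl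
        _ ≤ (b i : ℝ) := by exact_mod_cast hR1 i
    have hτle : τ ≤ ((∑ i, b i * y₀ i : ℚ) : ℝ) := by
      have step2 : ∀ j, (c j : ℝ) = ∑ i, (a i j : ℝ) * (y₀ i : ℝ) := by
        intro j
        have h := hR23 j
        have h' : ((∑ i, a i j * y₀ i : ℚ) : ℝ) = ∑ i, (a i j : ℝ) * (y₀ i : ℝ) := by
          push_cast; rfl
        rw [← h'] ; exact_mod_cast congrArg (fun q : ℚ => (q : ℝ)) h.symm
      calc τ = ∑ j, (∑ i, (a i j : ℝ) * (y₀ i : ℝ)) * xs j := by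
              rw [hval]; exact Finset.sum_congr rfl fun j _ => by rw [← step2 j]
        _ = ∑ i, (y₀ i : ℝ) * (∑ j, (a i j : ℝ) * xs j) :=
              swap_mul_sum (fun i => (y₀ i : ℝ)) xs (fun i j => (a i j : ℝ))
        _ ≤ ∑ i, (y₀ i : ℝ) * (b i : ℝ) := by
              refine Finset.sum_le_sum fun i _ => ?_
              have h0 : (0:ℝ) ≤ (y₀ i : ℝ) := by exact_mod_cast hR4 i
              exact mul_le_mul_of_nonneg_left (hfeas i) h0
        _ = ((∑ i, b i * y₀ i : ℚ) : ℝ) := by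
              push_cast; exact Finset.sum_congr rfl fun i _ => by ring
    have hsand : ((∑ i, b i * y₀ i : ℚ) : ℝ) ≤ ((∑ j, c j * x₀ j : ℚ) : ℝ) := by
      exact_mod_cast hR5
    exact ⟨x₀, y₀, hR1, le_antisymm hvle (by linarith), hR4, hR23, le_antisymm (by linarith) hτle⟩
  · -- infeasibility certificate: contradiction
    exfalso
    set w : ι → ℚ := fun i => y (Sum.inl i) with hw
    set p : η → ℚ := fun j => y (Sum.inr (Sum.inl j)) with hp
    set qq : η → ℚ := fun j => y (Sum.inr (Sum.inr (Sum.inl j))) with hqq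
    set rr : ι → ℚ := fun i => y (Sum.inr (Sum.inr (Sum.inr (Sum.inl i)))) with hrr
    set s : ℚ := y (Sum.inr (Sum.inr (Sum.inr (Sum.inr ())))) with hs
    set d : η → ℚ := fun j => qq j - p j with hd
    have row_split : ∀ (f : ρ → ℚ), (∑ rho, y rho * f rho)
        = (∑ i, w i * f (Sum.inl i)) + ((∑ j, p j * f (Sum.inr (Sum.inl j)))
          + ((∑ j, qq j * f (Sum.inr (Sum.inr (Sum.inl j))))
          + ((∑ i, rr i * f (Sum.inr (Sum.inr (Sum.inr (Sum.inl i)))))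
          + s * f (Sum.inr (Sum.inr (Sum.inr (Sum.inr ()))))))) := by
      intro f
      rw [Fintype.sum_sum_type (f := fun rho => y rho * f rho)]
      congr 1
      rw [Fintype.sum_sum_type (f := fun r2 => y (Sum.inr r2) * f (Sum.inr r2))]
      congr 1
      rw [Fintype.sum_sum_type (f := fun r3 => y (Sum.inr (Sum.inr r3)) * f (Sum.inr (Sum.inr r3)))]
      congr 1
      rw [Fintype.sum_sum_type
        (f := fun r4 => y (Sum.inr (Sum.inr (Sum.inr r4))) * f (Sum.inr (Sum.inr (Sum.inr r4))))]
      congr 1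
      simp [hs]
    have colx : ∀ j0, ∑ i, w i * a i j0 = s * c j0 := by
      intro j0
      have h0 := hyM (Sum.inl j0)
      rw [row_split (fun rho => M rho (Sum.inl j0))] at h0
      have h1 : (∑ i, w i * a i j0) + ((∑ j, p j * 0) + ((∑ j, qq j * 0)
          + ((∑ i, rr i * 0) + s * (- c j0)))) = 0 := h0
      simp only [mul_zero, Finset.sum_const_zero, add_zero, zero_add] at h1
      linarith
    have coly : ∀ i0, ∑ j, d j * a i0 j + s * b i0 = rr i0 := by
      intro i0
      have h0 := hyM (Sum.inr i0)
      rw [row_split (fun rho => M rho (Sum.inr i0))] at h0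
      have h1 : (∑ i, w i * 0) + ((∑ j, p j * (- a i0 j)) + ((∑ j, qq j * a i0 j)
          + ((∑ i, rr i * (if i0 = i then (-1:ℚ) else 0)) + s * b i0))) = 0 := h0
      rw [Finset.sum_congr rfl (fun i _ => show rr i * (if i0 = i then (-1:ℚ) else 0)
        = if i = i0 then -rr i else 0 by
          rcases eq_or_ne i i0 with h|h
          · subst h; simp
          · rw [if_neg (Ne.symm h), if_neg h, mul_zero])] at h1
      rw [Finset.sum_ite_eq' Finset.univ i0 (fun i => -rr i)] at h1
      simp only [Finset.mem_univ, if_true, mul_zero, Finset.sum_const_zero, zero_add] at h1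
      have h2 : (∑ j, p j * (- a i0 j)) = - ∑ j, p j * a i0 j := by
        rw [← Finset.sum_neg_distrib]; exact Finset.sum_congr rfl fun j _ => by ring
      rw [h2] at h1
      have h3 : ∑ j, d j * a i0 j = (∑ j, qq j * a i0 j) - ∑ j, p j * a i0 j := by
        rw [← Finset.sum_sub_distrib]; exact Finset.sum_congr rfl fun j _ => by rw [hd]; ring
      rw [h3]
      linarith
    have hrhs_lt : (∑ i, w i * b i) + ∑ j, d j * c j < 0 := by
      rw [row_split rhs] at hyrhs
      have h1 : (∑ i, w i * b i) + ((∑ j, p j * (- c j)) + ((∑ j, qq j * c j)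
          + ((∑ i, rr i * 0) + s * 0))) < 0 := hyrhs
      have h2 : ∑ j, p j * (- c j) = - ∑ j, p j * c j := by
        rw [← Finset.sum_neg_distrib]; exact Finset.sum_congr rfl fun j _ => by ring
      rw [h2] at h1
      simp only [mul_zero, Finset.sum_const_zero, add_zero] at h1
      have h3 : ∑ j, d j * c j = (∑ j, qq j * c j) - ∑ j, p j * c j := by
        rw [← Finset.sum_sub_distrib]; exact Finset.sum_congr rfl fun j _ => by rw [hd]; ring
      rw [h3]
      linarith
    have hs0 : (0:ℚ) ≤ s := hy0 _
    rcases eq_or_lt_of_le hs0 with hseq | hspos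
    · -- s = 0 : unboundedness contradiction
      have hcol0 : ∀ j0, ∑ i, w i * a i j0 = 0 := fun j0 => by
        rw [colx j0, ← hseq, zero_mul]
      have hwS : ∑ i, (w i : ℝ) * ∑ j, (a i j : ℝ) * xs j = 0 := by
        rw [← swap_mul_sum (fun i => (w i : ℝ)) xs (fun i j => (a i j : ℝ))]
        refine Finset.sum_eq_zero fun j _ => ?_
        have : (∑ i, (a i j : ℝ) * (w i : ℝ)) = ((∑ i, w i * a i j : ℚ) : ℝ) := by
          push_cast; exact Finset.sum_congr rfl fun i _ => by ring
        rw [this, hcol0 j]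
        simp
      have hwb : (0:ℝ) ≤ ((∑ i, w i * b i : ℚ) : ℝ) := by
        have total : (0:ℝ) ≤ ∑ i, (w i : ℝ) * ((b i : ℝ) - ∑ j, (a i j : ℝ) * xs j) :=
          Finset.sum_nonneg fun i _ => mul_nonneg (by exact_mod_cast hy0 (Sum.inl i))
            (by linarith [hfeas i])
        have expand : ∑ i, (w i : ℝ) * ((b i : ℝ) - ∑ j, (a i j : ℝ) * xs j)
            = (∑ i, (w i : ℝ) * (b i : ℝ)) - ∑ i, (w i : ℝ) * ∑ j, (a i j : ℝ) * xs j := by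
          rw [← Finset.sum_sub_distrib]
          exact Finset.sum_congr rfl fun i _ => by ring
        rw [expand, hwS, sub_zero] at total
        calc (0:ℝ) ≤ ∑ i, (w i : ℝ) * (b i : ℝ) := total
          _ = ((∑ i, w i * b i : ℚ) : ℝ) := by
              push_cast; exact Finset.sum_congr rfl fun i _ => by ring
      have hdc : ((∑ j, d j * c j : ℚ) : ℝ) < 0 := by
        have hcast : ((∑ i, w i * b i : ℚ) : ℝ) + ((∑ j, d j * c j : ℚ) : ℝ) < 0 := by
          exact_mod_cast hrhs_lt
        linarith
      -- improved point: xs - d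
      have hfeas' : ∀ i, ∑ j, (a i j : ℝ) * (xs j - (d j : ℝ)) ≤ (b i : ℝ) := by
        intro i
        have h1 : ∑ j, (a i j : ℝ) * (xs j - (d j : ℝ))
            = (∑ j, (a i j : ℝ) * xs j) - ∑ j, (a i j : ℝ) * (d j : ℝ) := by
          rw [← Finset.sum_sub_distrib]
          exact Finset.sum_congr rfl fun j _ => by ring
        have h2 : ∑ j, (a i j : ℝ) * (d j : ℝ) = ((∑ j, d j * a i j : ℚ) : ℝ) := by
          push_cast; exact Finset.sum_congr rfl fun j _ => by ring
        have h3 : (0:ℚ) ≤ ∑ j, d j * a i j := by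
          have := coly i
          rw [← hseq] at this
          simp only [zero_mul, add_zero] at this
          rw [this]
          exact hy0 _
        have h4 : (0:ℝ) ≤ ∑ j, (a i j : ℝ) * (d j : ℝ) := by
          rw [h2]; exact_mod_cast h3
        rw [h1]
        linarith [hfeas i]
      have hval' : ∑ j, (c j : ℝ) * (xs j - (d j : ℝ)) = τ - ((∑ j, d j * c j : ℚ) : ℝ) := by
        have h1 : ∑ j, (c j : ℝ) * (xs j - (d j : ℝ))
            = (∑ j, (c j : ℝ) * xs j) - ∑ j, (c j : ℝ) * (d j : ℝ) := by
          rw [← Finset.sum_sub_distrib]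
          exact Finset.sum_congr rfl fun j _ => by ring
        have h2 : ∑ j, (c j : ℝ) * (d j : ℝ) = ((∑ j, d j * c j : ℚ) : ℝ) := by
          push_cast; exact Finset.sum_congr rfl fun j _ => by ring
        rw [h1, h2, ← hval]
      have hmem : τ - ((∑ j, d j * c j : ℚ) : ℝ) ∈ {t : ℝ | ∃ x : η → ℝ,
          (∀ i, ∑ j, (a i j : ℝ) * x j ≤ (b i : ℝ)) ∧ t = ∑ j, (c j : ℝ) * x j} :=
        ⟨fun j => xs j - (d j : ℝ), hfeas', hval'.symm⟩
      have := hub hmem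
      linarith
    · -- s > 0
      have e5 : s * (∑ j, d j * c j) = (∑ i, w i * rr i) - s * ∑ i, w i * b i := by
        have e1 : s * (∑ j, d j * c j) = ∑ j, (∑ i, w i * a i j) * d j := by
          rw [Finset.mul_sum]
          exact Finset.sum_congr rfl fun j _ => by rw [colx j]; ring
        have e2 : ∑ j, (∑ i, w i * a i j) * d j = ∑ i, w i * ∑ j, a i j * d j := by
          have := swap_mul_sum (fun i => w i) d (fun i j => a i j)
          rw [← this]
          exact Finset.sum_congr rfl fun j _ => by
            congr 1
            exact Finset.sum_congr rfl fun i _ => by ring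
        have e4 : ∀ i, w i * ∑ j, a i j * d j = w i * rr i - s * (w i * b i) := by
          intro i
          have h := coly i
          have h' : ∑ j, a i j * d j = rr i - s * b i := by
            rw [Finset.sum_congr rfl (fun j _ => show a i j * d j = d j * a i j by ring)]
            linarith
          rw [h']; ring
        rw [e1, e2, Finset.sum_congr rfl (fun i _ => e4 i), Finset.sum_sub_distrib, ← Finset.mul_sum]
      have e6 : (0:ℚ) ≤ ∑ i, w i * rr i :=
        Finset.sum_nonneg fun i _ => mul_nonneg (hy0 _) (hy0 _)
      nlinarith [e5, e6, hrhs_lt, hspos]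

private lemma sum_mul_sum_swap {R : Type} [CommRing R] {ι η : Type} [Fintype ι] [Fintype η]
    (g : η → R) (h : ι → η → R) (u : ι → R) :
    ∑ j, g j * ∑ k, h k j * u k = ∑ k, (∑ j, g j * h k j) * u k := by
  calc ∑ j, g j * ∑ k, h k j * u k = ∑ j, ∑ k, g j * (h k j * u k) :=
        Finset.sum_congr rfl fun j _ => Finset.mul_sum _ _ _
    _ = ∑ k, ∑ j, g j * (h k j * u k) := Finset.sum_comm
    _ = ∑ k, (∑ j, g j * h k j) * u k := Finset.sum_congr rfl fun k _ => by
        rw [Finset.sum_mul]; exact Finset.sum_congr rfl fun j _ => by ring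

section Lattice

private lemma lattice_approx (n : ℕ) (L : Set ℝ)
    (hdense : Dense L) (hL0 : (0:ℝ) ∈ L)
    (hadd : ∀ x ∈ L, ∀ y ∈ L, x + y ∈ L) (hneg : ∀ x ∈ L, -x ∈ L)
    (K : Type) [Fintype K] (v : K → Fin n → ℚ) (xh : Fin n → ℝ)
    (hyp : ∀ u : K → ℚ, (∀ j, ∃ z : ℤ, ∑ k, u k * v k j = (z:ℚ)) →
      (∑ j, ((∑ k, u k * v k j : ℚ) : ℝ) * xh j) ∈ L)
    (ε : ℝ) (hε : 0 < ε) :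
    ∃ x : Fin n → ℝ, (∀ j, x j ∈ L) ∧
      (∀ k, ∑ j, (v k j : ℝ) * x j = ∑ j, (v k j : ℝ) * xh j) ∧
      (∀ j, |x j - xh j| < ε) := by
  classical
  -- L as an additive subgroup
  let S : AddSubgroup ℝ :=
    { carrier := L
      zero_mem' := hL0
      add_mem' := fun ha hb => hadd _ ha _ hb
      neg_mem' := fun ha => hneg _ ha }
  have hSmem : ∀ {x : ℝ}, x ∈ S ↔ x ∈ L := Iff.rfl
  have hzsmulL : ∀ (z : ℤ) (l : ℝ), l ∈ L → (z : ℝ) * l ∈ L := by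
    intro z l hl
    have := S.zsmul_mem (hSmem.mpr hl) z
    rwa [zsmul_eq_mul] at this
  -- the span of the rows over ℚ and its integer points
  let W : Submodule ℚ (Fin n → ℚ) := Submodule.span ℚ (Set.range v)
  let C : (Fin n → ℤ) →ₗ[ℤ] (Fin n → ℚ) :=
    { toFun := fun w => fun j => (w j : ℚ)
      map_add' := fun u w => by funext j; push_cast; simp
      map_smul' := fun z w => by
        funext j
        simp only [Pi.smul_apply, smul_eq_mul, RingHom.id_apply, zsmul_eq_mul]
        push_cast; ring }
  let Λ : Submodule ℤ (Fin n → ℤ) := (W.restrictScalars ℤ).comap C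
  have memΛ : ∀ w : Fin n → ℤ, w ∈ Λ ↔ C w ∈ W := fun w => Iff.rfl
  obtain ⟨r, snf⟩ := Λ.smithNormalForm (Pi.basisFun ℤ (Fin n))
  obtain ⟨bM, bN, f, aa, hsnf⟩ := snf
  -- K1 : bM (f i) ∈ Λ
  have K1 : ∀ i : Fin r, bM (f i) ∈ Λ := by
    intro i
    have ha : aa i ≠ 0 := by
      intro h0
      have := hsnf i
      rw [h0, zero_smul] at this
      exact bN.ne_zero i (Subtype.ext this)
    have hmem : (bN i : Fin n → ℤ) ∈ Λ := (bN i).2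
    rw [hsnf i] at hmem
    rw [memΛ] at hmem ⊢
    rw [map_smul] at hmem
    have hcast : (aa i) • C (bM (f i)) = ((aa i : ℚ)) • C (bM (f i)) :=
      (Int.cast_smul_eq_zsmul ℚ (aa i) (C (bM (f i)))).symm
    rw [hcast] at hmem
    have haq : (aa i : ℚ) ≠ 0 := Int.cast_ne_zero.mpr ha
    exact (W.smul_mem_iff haq).mp hmem
  -- K2 : every integer point of W is a ℚ-combination of the bM (f i)
  have K2 : ∀ w : Fin n → ℤ, w ∈ Λ →
      C w ∈ Submodule.span ℚ (Set.range (fun i : Fin r => C (bM (f i)))) := by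
    intro w hw
    have hrepr := bN.sum_repr ⟨w, hw⟩
    have : C w = ∑ i, ((bN.repr ⟨w, hw⟩ i : ℤ) : ℚ) • ((aa i : ℚ)) • C (bM (f i)) := by
      have hcoe : (w : Fin n → ℤ) = ∑ i, bN.repr ⟨w, hw⟩ i • (bN i : Fin n → ℤ) := by
        have h1 : ((∑ i, bN.repr ⟨w, hw⟩ i • bN i : Λ) : Fin n → ℤ) = w :=
          congrArg Subtype.val hrepr
        have h2 : ((∑ i, bN.repr ⟨w, hw⟩ i • bN i : Λ) : Fin n → ℤ)
            = ∑ i, bN.repr ⟨w, hw⟩ i • (bN i : Fin n → ℤ) := by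
          simp only [Submodule.coe_sum, Submodule.coe_smul]
        exact h1.symm.trans h2
      rw [show C w = C (∑ i, bN.repr ⟨w, hw⟩ i • (bN i : Fin n → ℤ)) from congrArg _ hcoe,
        map_sum]
      refine Finset.sum_congr rfl fun i _ => ?_
      rw [hsnf i, smul_smul, map_smul, ← Int.cast_smul_eq_zsmul ℚ, smul_smul, Int.cast_mul]
    rw [this]
    exact Submodule.sum_mem _ fun i _ => Submodule.smul_mem _ _
      (Submodule.smul_mem _ _ (Submodule.subset_span ⟨i, rfl⟩))
  -- helper for clearing denominators
  have clear_den : ∀ (q : ℚ) (D : ℕ), q.den ∣ D → ((q.num * (D / q.den : ℕ) : ℤ) : ℚ) = (D : ℚ) * q := by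
    intro q D hdvd
    obtain ⟨e, he⟩ := hdvd
    have hden : (q.den : ℚ) * q = q.num := by rw [mul_comm, Rat.mul_den_eq_num]
    have hdiv : D / q.den = e := by rw [he, Nat.mul_div_cancel_left _ q.pos]
    rw [hdiv, he]
    push_cast
    rw [← hden]
    ring
  -- K3 : each row v k is a ℚ-combination of the bM (f i)
  have K3 : ∀ k : K, v k ∈ Submodule.span ℚ (Set.range (fun i : Fin r => C (bM (f i)))) := by
    intro k
    set D : ℕ := ∏ j, (v k j).den with hD
    have hDpos : 0 < D := Finset.prod_pos fun j _ => (v k j).pos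
    have hdvd : ∀ j, (v k j).den ∣ D := fun j => Finset.dvd_prod_of_mem _ (Finset.mem_univ j)
    set w : Fin n → ℤ := fun j => (v k j).num * ((D / (v k j).den : ℕ) : ℤ) with hwdef
    have hCw : C w = (D : ℚ) • v k := by
      funext j
      have := clear_den (v k j) D (hdvd j)
      simp only [C, LinearMap.coe_mk, AddHom.coe_mk, hwdef, Pi.smul_apply, smul_eq_mul]
      push_cast at this ⊢
      rw [this]
    have hwΛ : w ∈ Λ := by
      rw [memΛ, hCw]
      exact Submodule.smul_mem _ _ (Submodule.subset_span ⟨k, rfl⟩)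
    have := K2 w hwΛ
    rw [hCw] at this
    have hDne : (D : ℚ) ≠ 0 := Nat.cast_ne_zero.mpr hDpos.ne'
    have := Submodule.smul_mem _ ((D : ℚ)⁻¹) this
    rwa [smul_smul, inv_mul_cancel₀ hDne, one_smul] at this
  -- the unimodular matrices
  set G : Matrix (Fin n) (Fin n) ℤ := fun k j => bM k j with hG
  have hGt : (Pi.basisFun ℤ (Fin n)).toMatrix bM = G.transpose := by
    funext i j
    simp [Module.Basis.toMatrix, Matrix.transpose, hG]
  have hinv := (Pi.basisFun ℤ (Fin n)).invertibleToMatrix bM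
  set H : Matrix (Fin n) (Fin n) ℤ := bM.toMatrix (Pi.basisFun ℤ (Fin n)) with hH
  have hHGt : H * G.transpose = 1 := by
    rw [← hGt]; exact Module.Basis.toMatrix_mul_toMatrix_flip _ _
  have hGtH : G.transpose * H = 1 := by
    rw [← hGt]; exact Module.Basis.toMatrix_mul_toMatrix_flip _ _
  -- entrywise delta identities over ℝ
  have delta1 : ∀ k' k : Fin n, ∑ j, (G k' j : ℝ) * (H k j : ℝ)
      = if k' = k then 1 else 0 := by
    intro k' k
    have h0 : (∑ j, H k j * G.transpose j k' : ℤ) = if k = k' then 1 else 0 := by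
      rw [← Matrix.mul_apply, hHGt, Matrix.one_apply]
    calc ∑ j, (G k' j : ℝ) * (H k j : ℝ)
        = ((∑ j, H k j * G.transpose j k' : ℤ) : ℝ) := by
          push_cast
          exact Finset.sum_congr rfl fun j _ => by rw [Matrix.transpose_apply]; ring
      _ = (((if k = k' then 1 else 0 : ℤ)) : ℝ) := by rw [h0]
      _ = if k' = k then 1 else 0 := by by_cases h : k' = k <;> simp [h, eq_comm]
  have delta2 : ∀ j j' : Fin n, ∑ k, (H k j : ℝ) * (G k j' : ℝ)
      = if j = j' then 1 else 0 := by
    intro j j'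
    have h0 : (∑ k, G.transpose j' k * H k j : ℤ) = if j' = j then 1 else 0 := by
      rw [← Matrix.mul_apply, hGtH, Matrix.one_apply]
    calc ∑ k, (H k j : ℝ) * (G k j' : ℝ)
        = ((∑ k, G.transpose j' k * H k j : ℤ) : ℝ) := by
          push_cast
          exact Finset.sum_congr rfl fun k _ => by rw [Matrix.transpose_apply]; ring
      _ = (((if j' = j then 1 else 0 : ℤ)) : ℝ) := by rw [h0]
      _ = if j = j' then 1 else 0 := by by_cases h : j = j' <;> simp [h, eq_comm]
  -- target values
  set t : Fin n → ℝ := fun k => ∑ j, (G k j : ℝ) * xh j with ht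
  -- the values t (f i) are in L
  have htL : ∀ i : Fin r, t (f i) ∈ L := by
    intro i
    have hmem : C (bM (f i)) ∈ W := (memΛ _).mp (K1 i)
    rw [Submodule.mem_span_range_iff_exists_fun] at hmem
    obtain ⟨u, hu⟩ := hmem
    have hu' : ∀ j, ∑ k, u k * v k j = ((bM (f i) j : ℤ) : ℚ) := by
      intro j
      have := congrFun hu j
      rw [Finset.sum_apply] at this
      simpa [smul_eq_mul, C, LinearMap.coe_mk, AddHom.coe_mk] using this
    have := hyp u (fun j => ⟨bM (f i) j, hu' j⟩)
    have heq : (∑ j, ((∑ k, u k * v k j : ℚ) : ℝ) * xh j) = t (f i) := by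
      rw [ht]
      refine Finset.sum_congr rfl fun j _ => ?_
      rw [hu' j]
      push_cast
      rfl
    rwa [heq] at this
  -- bound constant and approximation parameter
  set Cn : ℝ := (∑ k, ∑ j, |(H k j : ℝ)|) + 1 with hCn
  have hCn_pos : 0 < Cn := by
    have : (0:ℝ) ≤ ∑ k, ∑ j, |(H k j : ℝ)| :=
      Finset.sum_nonneg fun k _ => Finset.sum_nonneg fun j _ => abs_nonneg _
    linarith
  set δ : ℝ := ε / Cn with hδ
  have hδpos : 0 < δ := div_pos hε hCn_pos
  -- choose s
  have hchoice : ∀ k : Fin n, ∃ sk : ℝ, sk ∈ L ∧ |sk - t k| < δ ∧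
      ((∃ i, f i = k) → sk = t k) := by
    intro k
    by_cases hk : ∃ i, f i = k
    · obtain ⟨i, hi⟩ := hk
      refine ⟨t k, ?_, by simpa using hδpos, fun _ => rfl⟩
      rw [← hi]; exact htL i
    · have := hdense (t k)
      rw [Metric.mem_closure_iff] at this
      obtain ⟨l, hl, hd⟩ := this δ hδpos
      exact ⟨l, hl, by rw [abs_sub_comm, ← Real.dist_eq]; exact hd, fun h => absurd h hk⟩
  choose s hsL hsδ hsf using hchoice
  -- the solution
  set x : Fin n → ℝ := fun j => ∑ k, (H k j : ℝ) * s k with hx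
  have hxL : ∀ j, x j ∈ L := by
    intro j
    rw [hx]
    have : ∀ k ∈ Finset.univ, (H k j : ℝ) * s k ∈ S :=
      fun k _ => hSmem.mpr (hzsmulL (H k j) (s k) (hsL k))
    exact hSmem.mp (AddSubgroup.sum_mem S this)
  -- identity (I) : G x = s
  have idI : ∀ k' : Fin n, ∑ j, (G k' j : ℝ) * x j = s k' := by
    intro k'
    calc ∑ j, (G k' j : ℝ) * x j
        = ∑ k, (∑ j, (G k' j : ℝ) * (H k j : ℝ)) * s k :=
          sum_mul_sum_swap (fun j => (G k' j : ℝ)) (fun k j => (H k j : ℝ)) s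
      _ = ∑ k, (if k' = k then (1:ℝ) else 0) * s k :=
          Finset.sum_congr rfl fun k _ => by rw [delta1 k' k]
      _ = ∑ k, (if k' = k then s k else 0) :=
          Finset.sum_congr rfl fun k _ => by split <;> ring
      _ = s k' := by rw [Finset.sum_ite_eq Finset.univ k' s]; simp
  -- identity (II) : xh = Hᵀ t
  have idII : ∀ j : Fin n, ∑ k, (H k j : ℝ) * t k = xh j := by
    intro j
    calc ∑ k, (H k j : ℝ) * t k
        = ∑ k, (H k j : ℝ) * ∑ j', (G k j' : ℝ) * xh j' := rfl
      _ = ∑ j', (∑ k, (H k j : ℝ) * (G k j' : ℝ)) * xh j' :=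
          sum_mul_sum_swap (fun k => (H k j : ℝ)) (fun j' k => (G k j' : ℝ)) xh
      _ = ∑ j', (if j = j' then (1:ℝ) else 0) * xh j' :=
          Finset.sum_congr rfl fun j' _ => by rw [delta2 j j']
      _ = ∑ j', (if j = j' then xh j' else 0) :=
          Finset.sum_congr rfl fun j' _ => by split <;> ring
      _ = xh j := by rw [Finset.sum_ite_eq Finset.univ j xh]; simp
  -- the constraints are preserved
  have hconstr : ∀ k0 : K, ∑ j, (v k0 j : ℝ) * x j = ∑ j, (v k0 j : ℝ) * xh j := by
    intro k0
    obtain ⟨cc, hcc⟩ := Submodule.mem_span_range_iff_exists_fun ℚ |>.mp (K3 k0)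
    have hcomp : ∀ j, (v k0 j : ℝ) = ∑ i, (cc i : ℝ) * (G (f i) j : ℝ) := by
      intro j
      have := congrFun hcc j
      rw [Finset.sum_apply] at this
      have : (∑ i, cc i * ((bM (f i)) j : ℚ)) = v k0 j := by
        simpa [smul_eq_mul, C, LinearMap.coe_mk, AddHom.coe_mk] using this
      have hcast : ((∑ i, cc i * ((bM (f i)) j : ℚ) : ℚ) : ℝ) = ((v k0 j : ℚ) : ℝ) := by
        exact_mod_cast congrArg (fun q : ℚ => (q : ℝ)) this
      rw [← hcast]
      push_cast
      rfl
    have step : ∀ (zz : Fin n → ℝ), ∑ j, (v k0 j : ℝ) * zz j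
        = ∑ i, (cc i : ℝ) * ∑ j, (G (f i) j : ℝ) * zz j := by
      intro zz
      calc ∑ j, (v k0 j : ℝ) * zz j
          = ∑ j, (∑ i, (G (f i) j : ℝ) * (cc i : ℝ)) * zz j := by
            refine Finset.sum_congr rfl fun j _ => ?_
            rw [hcomp j]
            congr 1
            exact Finset.sum_congr rfl fun i _ => mul_comm _ _
        _ = ∑ i, (cc i : ℝ) * ∑ j, (G (f i) j : ℝ) * zz j :=
            swap_mul_sum (fun i => (cc i : ℝ)) zz (fun i j => (G (f i) j : ℝ))
    rw [step x, step xh]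
    refine Finset.sum_congr rfl fun i _ => ?_
    rw [idI (f i), hsf (f i) ⟨i, rfl⟩]
  -- closeness
  have hclose : ∀ j, |x j - xh j| < ε := by
    intro j
    have hdiff : x j - xh j = ∑ k, (H k j : ℝ) * (s k - t k) := by
      rw [hx, ← idII j, ← Finset.sum_sub_distrib]
      exact Finset.sum_congr rfl fun k _ => by ring
    have habs : |x j - xh j| ≤ ∑ k, |(H k j : ℝ)| * δ := by
      rw [hdiff]
      refine le_trans (Finset.abs_sum_le_sum_abs _ _) ?_
      refine Finset.sum_le_sum fun k _ => ?_
      rw [abs_mul]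
      exact mul_le_mul_of_nonneg_left (le_of_lt (hsδ k)) (abs_nonneg _)
    have hbound : ∑ k, |(H k j : ℝ)| * δ ≤ (Cn - 1) * δ := by
      rw [← Finset.sum_mul]
      refine mul_le_mul_of_nonneg_right ?_ (le_of_lt hδpos)
      have : ∑ k, |(H k j : ℝ)| ≤ ∑ k, ∑ j', |(H k j' : ℝ)| :=
        Finset.sum_le_sum fun k _ => Finset.single_le_sum
          (f := fun j' => |(H k j' : ℝ)|) (fun _ _ => abs_nonneg _) (Finset.mem_univ j)
      rw [hCn]
      linarith
    have hfinal : (Cn - 1) * δ < ε := by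
      have : Cn * δ = ε := by rw [hδ]; field_simp
      nlinarith [hδpos]
    linarith
  exact ⟨x, hxL, hconstr, hclose⟩

end Lattice

private lemma pos_dual_component {m n : ℕ} (Aq : Fin m → Fin n → ℚ) (bq : Fin m → ℚ)
    (c : Fin n → ℚ) (τ : ℝ) (q : ℚ) (hq : (q : ℝ) = τ)
    (y₀ : Fin m → ℚ) (hy₀nn : ∀ k, 0 ≤ y₀ k) (hy₀eq : ∀ j, ∑ k, Aq k j * y₀ k = c j)
    (hy₀val : ∑ k, bq k * y₀ k = q)
    (xs : Fin n → ℝ) (hxsfeas : ∀ k, ∑ j, (Aq k j : ℝ) * xs j ≤ (bq k : ℝ))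
    (hxsval : ∑ j, (c j : ℝ) * xs j = τ)
    (hub : ∀ x : Fin n → ℝ, (∀ k, ∑ j, (Aq k j : ℝ) * x j ≤ (bq k : ℝ)) →
      ∑ j, (c j : ℝ) * x j ≤ τ)
    (i : Fin m)
    (hi : ∀ x : Fin n → ℝ, (∀ k, ∑ j, (Aq k j : ℝ) * x j ≤ (bq k : ℝ)) →
      (∑ j, (c j : ℝ) * x j = τ) → ∑ j, (Aq i j : ℝ) * x j = (bq i : ℝ)) :
    ∃ y : Fin m → ℚ, (∀ k, 0 ≤ y k) ∧ (∀ j, ∑ k, Aq k j * y k = c j) ∧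
      (∑ k, bq k * y k = q) ∧ 0 < y i := by
  classical
  -- extended system
  let ι' := Fin m ⊕ Unit
  let a' : ι' → Fin n → ℚ := Sum.elim Aq (fun _ => fun j => - c j)
  let b' : ι' → ℚ := Sum.elim bq (fun _ => - q)
  let c' : Fin n → ℚ := fun j => - Aq i j
  have hopt2 : IsGreatest {t : ℝ | ∃ x : Fin n → ℝ,
      (∀ k, ∑ j, ((a' k j : ℚ) : ℝ) * x j ≤ ((b' k : ℚ) : ℝ)) ∧ t = ∑ j, ((c' j : ℚ) : ℝ) * x j}
      ((- bq i : ℚ) : ℝ) := by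
    constructor
    · refine ⟨xs, ?_, ?_⟩
      · intro k
        rcases k with k0 | u
        · exact hxsfeas k0
        · have : ∑ j, ((- c j : ℚ) : ℝ) * xs j = - ∑ j, (c j : ℝ) * xs j := by
            rw [← Finset.sum_neg_distrib]
            exact Finset.sum_congr rfl fun j _ => by push_cast; ring
          show ∑ j, ((- c j : ℚ) : ℝ) * xs j ≤ ((- q : ℚ) : ℝ)
          rw [this, hxsval]
          push_cast
          rw [hq]
      · have htight := hi xs hxsfeas hxsval
        show ((- bq i : ℚ) : ℝ) = ∑ j, ((- Aq i j : ℚ) : ℝ) * xs j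
        have : ∑ j, ((- Aq i j : ℚ) : ℝ) * xs j = - ∑ j, (Aq i j : ℝ) * xs j := by
          rw [← Finset.sum_neg_distrib]
          exact Finset.sum_congr rfl fun j _ => by push_cast; ring
        rw [this, htight]
        push_cast
        ring
    · rintro t ⟨x, hxf, hxv⟩
      have hfeas0 : ∀ k, ∑ j, (Aq k j : ℝ) * x j ≤ (bq k : ℝ) := fun k => hxf (Sum.inl k)
      have hge : τ ≤ ∑ j, (c j : ℝ) * x j := by
        have := hxf (Sum.inr ())
        have hexp : ∑ j, ((- c j : ℚ) : ℝ) * x j = - ∑ j, (c j : ℝ) * x j := by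
          rw [← Finset.sum_neg_distrib]
          exact Finset.sum_congr rfl fun j _ => by push_cast; ring
        have hb' : ((- q : ℚ) : ℝ) = - τ := by push_cast; rw [hq]
        have h2 : - ∑ j, (c j : ℝ) * x j ≤ - τ := by
          rw [← hexp, ← hb']; exact this
        linarith
      have heq : ∑ j, (c j : ℝ) * x j = τ := le_antisymm (hub x hfeas0) hge
      have htight := hi x hfeas0 heq
      have : t = - ∑ j, (Aq i j : ℝ) * x j := by
        rw [hxv, ← Finset.sum_neg_distrib]
        refine Finset.sum_congr rfl fun j _ => ?_
        show ((- Aq i j : ℚ) : ℝ) * x j = _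
        push_cast
        ring
      rw [this, htight]
      push_cast
      exact le_refl _
  obtain ⟨_, yext, _, _, hynn', hyeq', hyval'⟩ := dual_opt (Fin n) ι' a' b' c' _ hopt2
  set W : Fin m → ℚ := fun k => yext (Sum.inl k) with hW
  set s : ℚ := yext (Sum.inr ()) with hs
  have hs0 : 0 ≤ s := hynn' _
  have hsum_split : ∀ (g : ι' → ℚ), ∑ k : ι', g k = (∑ k0, g (Sum.inl k0)) + g (Sum.inr ()) := by
    intro g
    rw [Fintype.sum_sum_type g]
    simp
  have hWeq : ∀ j, ∑ k0, Aq k0 j * W k0 = c j * s - Aq i j := by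
    intro j
    have := hyeq' j
    rw [hsum_split (fun k => a' k j * yext k)] at this
    have h1 : (∑ k0, Aq k0 j * W k0) + (- c j) * s = - Aq i j := this
    linarith
  have hWval : (∑ k0, bq k0 * W k0) + (- q) * s = - bq i := by
    have hcast : (∑ k : ι', b' k * yext k) = - bq i := by
      have := hyval'
      have h2 : ((∑ k : ι', b' k * yext k : ℚ) : ℝ) = ((- bq i : ℚ) : ℝ) := this
      exact_mod_cast h2
    rw [hsum_split (fun k => b' k * yext k)] at hcast
    exact hcast
  -- the new dual solution
  set y : Fin m → ℚ := fun k => (y₀ k + (W k + (if k = i then 1 else 0))) / (1 + s) with hy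
  have hden : (0:ℚ) < 1 + s := by linarith
  refine ⟨y, ?_, ?_, ?_, ?_⟩
  · intro k
    rw [hy]
    apply div_nonneg _ (le_of_lt hden)
    split <;> nlinarith [hynn' (Sum.inl k), hy₀nn k]
  · intro j
    have hind : ∑ k, Aq k j * (if k = i then (1:ℚ) else 0) = Aq i j := by
      rw [Finset.sum_congr rfl (fun k _ => show Aq k j * (if k = i then (1:ℚ) else 0)
        = if k = i then Aq k j else 0 by split <;> ring)]
      rw [Finset.sum_ite_eq' Finset.univ i (fun k => Aq k j)]
      simp
    have expand : ∑ k, Aq k j * y k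
        = ((∑ k, Aq k j * y₀ k) + ((∑ k, Aq k j * W k) + ∑ k, Aq k j * (if k = i then 1 else 0)))
          / (1 + s) := by
      rw [eq_div_iff (ne_of_gt hden), Finset.sum_mul, ← Finset.sum_add_distrib,
        ← Finset.sum_add_distrib]
      refine Finset.sum_congr rfl fun k _ => ?_
      rw [hy]
      field_simp
    rw [expand, hy₀eq j, hWeq j, hind]
    field_simp
    ring
  · have hind : ∑ k, bq k * (if k = i then (1:ℚ) else 0) = bq i := by
      rw [Finset.sum_congr rfl (fun k _ => show bq k * (if k = i then (1:ℚ) else 0)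
        = if k = i then bq k else 0 by split <;> ring)]
      rw [Finset.sum_ite_eq' Finset.univ i (fun k => bq k)]
      simp
    have expand : ∑ k, bq k * y k
        = ((∑ k, bq k * y₀ k) + ((∑ k, bq k * W k) + ∑ k, bq k * (if k = i then 1 else 0)))
          / (1 + s) := by
      rw [eq_div_iff (ne_of_gt hden), Finset.sum_mul, ← Finset.sum_add_distrib,
        ← Finset.sum_add_distrib]
      refine Finset.sum_congr rfl fun k _ => ?_
      rw [hy]
      field_simp
    rw [expand, hy₀val, hind]
    have : ∑ k0, bq k0 * W k0 = q * s - bq i := by linarith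
    rw [this]
    field_simp
    ring
  · rw [hy]
    apply div_pos _ hden
    rw [if_pos rfl]
    nlinarith [hy₀nn i, hynn' (Sum.inl i)]

theorem stmt_8 (L : Set ℝ) (hdense : Dense L) (hproper : L ≠ Set.univ)
    (hadd : ∀ x ∈ L, ∀ y ∈ L, x + y ∈ L) (hneg : ∀ x ∈ L, -x ∈ L)
    (m n : ℕ) (A : Matrix (Fin m) (Fin n) ℤ) (b : Fin m → ℤ) (c : Fin n → ℚ)
    (τ : ℝ)
    (hopt : IsGreatest {t : ℝ | ∃ x : Fin n → ℝ,
      (∀ i, ∑ j, (A i j : ℝ) * x j ≤ (b i : ℝ)) ∧ t = ∑ j, (c j : ℝ) * x j} τ) :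
    (¬ ∃ x : Fin n → ℝ, (∀ i, ∑ j, (A i j : ℝ) * x j ≤ (b i : ℝ)) ∧
        (∑ j, (c j : ℝ) * x j = τ) ∧ ∀ j, x j ∈ L) ↔
      ∃ y u : Fin m → ℚ,
        (∀ i, u i ≠ 0 → y i ≠ 0) ∧
        ((∀ i, 0 ≤ y i) ∧ (∀ j, ∑ i, (A i j : ℚ) * y i = c j) ∧
          ((∑ i, (b i : ℚ) * y i : ℚ) : ℝ) = τ) ∧
        ((∀ j, ∃ zz : ℤ, ∑ i, (A i j : ℚ) * u i = (zz : ℚ)) ∧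
          ((∑ i, (b i : ℚ) * u i : ℚ) : ℝ) ∉ L) := by
  classical
  -- basic facts about L
  have hL0 : (0:ℝ) ∈ L := by
    obtain ⟨l0, hl0⟩ := hdense.nonempty
    have := hadd l0 hl0 (-l0) (hneg l0 hl0)
    rwa [add_neg_cancel] at this
  let S : AddSubgroup ℝ :=
    { carrier := L
      zero_mem' := hL0
      add_mem' := fun ha hb => hadd _ ha _ hb
      neg_mem' := fun ha => hneg _ ha }
  have hSmem : ∀ {x : ℝ}, x ∈ S ↔ x ∈ L := Iff.rfl
  have hzsmulL : ∀ (z : ℤ) (l : ℝ), l ∈ L → (z : ℝ) * l ∈ L := by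
    intro z l hl
    have := S.zsmul_mem (hSmem.mpr hl) z
    rwa [zsmul_eq_mul] at this
  -- cast bridges
  have hAR : ∀ (i : Fin m) (x : Fin n → ℝ),
      ∑ j, (((A i j : ℚ)) : ℝ) * x j = ∑ j, (A i j : ℝ) * x j :=
    fun i x => Finset.sum_congr rfl fun j _ => by rw [Rat.cast_intCast]
  have hbR : ∀ i : Fin m, (((b i : ℚ)) : ℝ) = (b i : ℝ) := fun i => Rat.cast_intCast _
  -- the optimum reformulated with ℚ-casts
  have hopt' : IsGreatest {t : ℝ | ∃ x : Fin n → ℝ,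
      (∀ i, ∑ j, (((A i j : ℚ)) : ℝ) * x j ≤ (((b i : ℚ)) : ℝ)) ∧
      t = ∑ j, (c j : ℝ) * x j} τ := by
    have hseteq : {t : ℝ | ∃ x : Fin n → ℝ,
        (∀ i, ∑ j, (((A i j : ℚ)) : ℝ) * x j ≤ (((b i : ℚ)) : ℝ)) ∧
        t = ∑ j, (c j : ℝ) * x j} = {t : ℝ | ∃ x : Fin n → ℝ,
        (∀ i, ∑ j, (A i j : ℝ) * x j ≤ (b i : ℝ)) ∧ t = ∑ j, (c j : ℝ) * x j} := by
      ext t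
      constructor
      · rintro ⟨x, h1, h2⟩
        exact ⟨x, fun i => by rw [← hAR i x, ← hbR i]; exact h1 i, h2⟩
      · rintro ⟨x, h1, h2⟩
        exact ⟨x, fun i => by rw [hAR i x, hbR i]; exact h1 i, h2⟩
    rwa [hseteq]
  -- rational optimal primal and dual
  obtain ⟨x₀, y₀, hx₀feas, hx₀val, hy₀nn, hy₀eq, hy₀val⟩ :=
    dual_opt (Fin n) (Fin m) (fun i j => (A i j : ℚ)) (fun i => (b i : ℚ)) c τ hopt'
  set q : ℚ := ∑ i, (b i : ℚ) * y₀ i with hqdef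
  have hq : (q : ℝ) = τ := hy₀val
  -- real optimal point
  obtain ⟨⟨xs, hxsfeas, hxsval'⟩, hubmem⟩ := hopt
  have hxsval : ∑ j, (c j : ℝ) * xs j = τ := hxsval'.symm
  have hub : ∀ x : Fin n → ℝ, (∀ i, ∑ j, (A i j : ℝ) * x j ≤ (b i : ℝ)) →
      ∑ j, (c j : ℝ) * x j ≤ τ := fun x hx => hubmem ⟨x, hx, rfl⟩
  -- complementary slackness
  have cs : ∀ (y : Fin m → ℚ), (∀ k, 0 ≤ y k) → (∀ j, ∑ k, (A k j : ℚ) * y k = c j) →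
      ((∑ k, (b k : ℚ) * y k : ℚ) : ℝ) = τ →
      ∀ x : Fin n → ℝ, (∀ i, ∑ j, (A i j : ℝ) * x j ≤ (b i : ℝ)) →
      (∑ j, (c j : ℝ) * x j = τ) →
      ∀ k, 0 < y k → ∑ j, (A k j : ℝ) * x j = (b k : ℝ) := by
    intro y hnn heqd hvald x hxf hxv k hyk
    have key : ∑ i, (y i : ℝ) * ((b i : ℝ) - ∑ j, (A i j : ℝ) * x j) = 0 := by
      have e1 : ∑ i, (y i : ℝ) * ((b i : ℝ) - ∑ j, (A i j : ℝ) * x j)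
          = (∑ i, (y i : ℝ) * (b i : ℝ)) - ∑ i, (y i : ℝ) * ∑ j, (A i j : ℝ) * x j := by
        rw [← Finset.sum_sub_distrib]
        exact Finset.sum_congr rfl fun i _ => by ring
      have e2 : ∑ i, (y i : ℝ) * (b i : ℝ) = τ := by
        rw [← hvald]
        push_cast
        exact Finset.sum_congr rfl fun i _ => by ring
      have e3 : ∑ i, (y i : ℝ) * ∑ j, (A i j : ℝ) * x j = τ := by
        rw [← swap_mul_sum (fun i => (y i : ℝ)) x (fun i j => (A i j : ℝ)), ← hxv]
        refine Finset.sum_congr rfl fun j _ => ?_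
        congr 1
        have h2 : ((∑ k, (A k j : ℚ) * y k : ℚ) : ℝ) = ((c j : ℚ) : ℝ) :=
          congrArg (fun r : ℚ => (r : ℝ)) (heqd j)
        push_cast at h2
        rw [← h2]
      rw [e1, e2, e3, sub_self]
    have hterm := (Finset.sum_eq_zero_iff_of_nonneg (fun i _ =>
      mul_nonneg (by exact_mod_cast hnn i) (by linarith [hxf i]))).mp key k (Finset.mem_univ k)
    have hykr : (0:ℝ) < (y k : ℝ) := by exact_mod_cast hyk
    rcases mul_eq_zero.mp hterm with h | h
    · exact absurd h (ne_of_gt hykr)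
    · linarith
  -- the always-tight rows
  let Tight : Fin m → Prop := fun k => ∀ x : Fin n → ℝ,
    (∀ i, ∑ j, (A i j : ℝ) * x j ≤ (b i : ℝ)) → (∑ j, (c j : ℝ) * x j = τ) →
    ∑ j, (A k j : ℝ) * x j = (b k : ℝ)
  -- duals positive on Tight rows
  have hY : ∀ i : Fin m, ∃ y : Fin m → ℚ, (∀ k, 0 ≤ y k) ∧
      (∀ j, ∑ k, (A k j : ℚ) * y k = c j) ∧ (∑ k, (b k : ℚ) * y k = q) ∧
      (Tight i → 0 < y i) := by
    intro i
    by_cases hi : Tight i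
    · have hxsfeas' : ∀ k, ∑ j, (((A k j : ℚ)) : ℝ) * xs j ≤ (((b k : ℚ)) : ℝ) := by
        intro k; rw [hAR, hbR]; exact hxsfeas k
      have hub' : ∀ x : Fin n → ℝ,
          (∀ k, ∑ j, (((A k j : ℚ)) : ℝ) * x j ≤ (((b k : ℚ)) : ℝ)) →
          ∑ j, (c j : ℝ) * x j ≤ τ :=
        fun x hx => hub x (fun k => by rw [← hAR k x, ← hbR k]; exact hx k)
      have hi' : ∀ x : Fin n → ℝ,
          (∀ k, ∑ j, (((A k j : ℚ)) : ℝ) * x j ≤ (((b k : ℚ)) : ℝ)) →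
          (∑ j, (c j : ℝ) * x j = τ) →
          ∑ j, (((A i j : ℚ)) : ℝ) * x j = (((b i : ℚ)) : ℝ) := by
        intro x hx hv
        rw [hAR, hbR]
        exact hi x (fun k => by rw [← hAR k x, ← hbR k]; exact hx k) hv
      obtain ⟨y, h1, h2, h3, h4⟩ := pos_dual_component (fun k j => (A k j : ℚ))
        (fun k => (b k : ℚ)) c τ q hq y₀ hy₀nn hy₀eq hqdef.symm xs hxsfeas' hxsval hub' i hi'
      exact ⟨y, h1, h2, h3, fun _ => h4⟩
    · exact ⟨y₀, hy₀nn, hy₀eq, hqdef.symm, fun h => absurd h hi⟩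
  choose Y hY1 hY2 hY3 hY4 using hY
  -- the averaged dual
  set ybar : Fin m → ℚ := fun k => (y₀ k + ∑ i, Y i k) / (1 + (m:ℚ)) with hybar
  have hMq : (0:ℚ) < 1 + (m:ℚ) := by positivity
  have hybar_nn : ∀ k, 0 ≤ ybar k := by
    intro k
    show (0:ℚ) ≤ (y₀ k + ∑ i, Y i k) / (1 + (m:ℚ))
    exact div_nonneg (add_nonneg (hy₀nn k) (Finset.sum_nonneg fun i _ => hY1 i k)) hMq.le
  have hybar_eq : ∀ j, ∑ k, (A k j : ℚ) * ybar k = c j := by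
    intro j
    have expand : ∑ k, (A k j : ℚ) * ybar k
        = ((∑ k, (A k j : ℚ) * y₀ k) + ∑ i, ∑ k, (A k j : ℚ) * Y i k) / (1 + (m:ℚ)) := by
      rw [eq_div_iff (ne_of_gt hMq), Finset.sum_mul]
      have hswap : ∑ i, ∑ k, (A k j : ℚ) * Y i k = ∑ k, (A k j : ℚ) * ∑ i, Y i k := by
        rw [Finset.sum_comm]
        exact Finset.sum_congr rfl fun k _ => (Finset.mul_sum _ _ _).symm
      rw [hswap, ← Finset.sum_add_distrib]
      refine Finset.sum_congr rfl fun k _ => ?_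
      show (A k j : ℚ) * ((y₀ k + ∑ i, Y i k) / (1 + (m:ℚ))) * (1 + (m:ℚ)) = _
      field_simp
    rw [expand, hy₀eq j,
      Finset.sum_congr rfl (fun i (_ : i ∈ Finset.univ) => hY2 i j),
      Finset.sum_const, Finset.card_univ, Fintype.card_fin, nsmul_eq_mul]
    field_simp
  have hybar_val : ∑ k, (b k : ℚ) * ybar k = q := by
    have expand : ∑ k, (b k : ℚ) * ybar k
        = ((∑ k, (b k : ℚ) * y₀ k) + ∑ i, ∑ k, (b k : ℚ) * Y i k) / (1 + (m:ℚ)) := by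
      rw [eq_div_iff (ne_of_gt hMq), Finset.sum_mul]
      have hswap : ∑ i, ∑ k, (b k : ℚ) * Y i k = ∑ k, (b k : ℚ) * ∑ i, Y i k := by
        rw [Finset.sum_comm]
        exact Finset.sum_congr rfl fun k _ => (Finset.mul_sum _ _ _).symm
      rw [hswap, ← Finset.sum_add_distrib]
      refine Finset.sum_congr rfl fun k _ => ?_
      show (b k : ℚ) * ((y₀ k + ∑ i, Y i k) / (1 + (m:ℚ))) * (1 + (m:ℚ)) = _
      field_simp
    rw [expand, ← hqdef,
      Finset.sum_congr rfl (fun i (_ : i ∈ Finset.univ) => hY3 i),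
      Finset.sum_const, Finset.card_univ, Fintype.card_fin, nsmul_eq_mul]
    field_simp
  have hybar_pos : ∀ i, Tight i → 0 < ybar i := by
    intro i hi
    show (0:ℚ) < (y₀ i + ∑ i', Y i' i) / (1 + (m:ℚ))
    apply div_pos _ hMq
    have h1 : Y i i ≤ ∑ i', Y i' i :=
      Finset.single_le_sum (fun i' _ => hY1 i' i) (Finset.mem_univ i)
    have h2 := hY4 i hi
    have h3 := hy₀nn i
    linarith
  -- primal optimal points strict off Tight
  have hX : ∀ i : Fin m, ∃ x : Fin n → ℝ,
      (∀ k, ∑ j, (A k j : ℝ) * x j ≤ (b k : ℝ)) ∧ (∑ j, (c j : ℝ) * x j = τ) ∧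
      (¬ Tight i → ∑ j, (A i j : ℝ) * x j < (b i : ℝ)) := by
    intro i
    by_cases hi : Tight i
    · exact ⟨xs, hxsfeas, hxsval, fun h => absurd hi h⟩
    · have hi' : ¬ ∀ x : Fin n → ℝ,
          (∀ k, ∑ j, (A k j : ℝ) * x j ≤ (b k : ℝ)) → (∑ j, (c j : ℝ) * x j = τ) →
          ∑ j, (A i j : ℝ) * x j = (b i : ℝ) := hi
      push_neg at hi'
      obtain ⟨x, h1, h2, h3⟩ := hi'
      exact ⟨x, h1, h2, fun _ => lt_of_le_of_ne (h1 i) h3⟩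
  choose X hXfeas hXval hXstrict using hX
  -- the averaged primal point
  have hMr : (0:ℝ) < 1 + (m:ℝ) := by positivity
  set xhat : Fin n → ℝ := fun j => (xs j + ∑ i, X i j) / (1 + (m:ℝ)) with hxhat
  have lincomb : ∀ coef : Fin n → ℝ, ∑ j, coef j * xhat j
      = ((∑ j, coef j * xs j) + ∑ i, ∑ j, coef j * X i j) / (1 + (m:ℝ)) := by
    intro coef
    rw [eq_div_iff (ne_of_gt hMr), Finset.sum_mul]
    have hswap : ∑ i, ∑ j, coef j * X i j = ∑ j, coef j * ∑ i, X i j := by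
      rw [Finset.sum_comm]
      exact Finset.sum_congr rfl fun j _ => (Finset.mul_sum _ _ _).symm
    rw [hswap, ← Finset.sum_add_distrib]
    refine Finset.sum_congr rfl fun j _ => ?_
    show coef j * ((xs j + ∑ i, X i j) / (1 + (m:ℝ))) * (1 + (m:ℝ)) = _
    field_simp
  have hxhat_feas : ∀ k, ∑ j, (A k j : ℝ) * xhat j ≤ (b k : ℝ) := by
    intro k
    rw [lincomb (fun j => (A k j : ℝ)), div_le_iff₀ hMr]
    have h1 := hxsfeas k
    have h2 : ∑ i, ∑ j, (A k j : ℝ) * X i j ≤ ∑ _i : Fin m, (b k : ℝ) :=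
      Finset.sum_le_sum fun i _ => hXfeas i k
    rw [Finset.sum_const, Finset.card_univ, Fintype.card_fin, nsmul_eq_mul] at h2
    nlinarith [h1, h2]
  have hxhat_val : ∑ j, (c j : ℝ) * xhat j = τ := by
    rw [lincomb (fun j => (c j : ℝ)), hxsval,
      Finset.sum_congr rfl (fun i (_ : i ∈ Finset.univ) => hXval i),
      Finset.sum_const, Finset.card_univ, Fintype.card_fin, nsmul_eq_mul]
    field_simp
  have hxhat_strict : ∀ i, ¬ Tight i → ∑ j, (A i j : ℝ) * xhat j < (b i : ℝ) := by
    intro i hi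
    rw [lincomb (fun j => (A i j : ℝ)), div_lt_iff₀ hMr]
    have h1 := hxsfeas i
    have h2 : ∑ i', ∑ j, (A i j : ℝ) * X i' j < ∑ _i' : Fin m, (b i : ℝ) :=
      Finset.sum_lt_sum (fun i' _ => hXfeas i' i)
        ⟨i, Finset.mem_univ i, hXstrict i hi⟩
    rw [Finset.sum_const, Finset.card_univ, Fintype.card_fin, nsmul_eq_mul] at h2
    nlinarith [h1, h2]
  have hxhat_tight : ∀ k, Tight k → ∑ j, (A k j : ℝ) * xhat j = (b k : ℝ) :=
    fun k hk => hk xhat hxhat_feas hxhat_val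
  -- support of ybar is inside Tight
  have hsuppbar : ∀ k, ¬ Tight k → ybar k = 0 := by
    intro k hk
    by_contra hne
    have hpos : 0 < ybar k := lt_of_le_of_ne (hybar_nn k) (Ne.symm hne)
    have hval' : ((∑ i, (b i : ℚ) * ybar i : ℚ) : ℝ) = τ := by
      rw [hybar_val]; exact hq
    have := cs ybar hybar_nn hybar_eq hval' (X k) (hXfeas k) (hXval k) k hpos
    exact absurd this (ne_of_lt (hXstrict k hk))
  constructor
  · -- (a) → (b)
    intro hnoL
    have hnohyp : ¬ (∀ u : {k : Fin m // Tight k} → ℚ,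
        (∀ j, ∃ z : ℤ, ∑ k, u k * (A k.1 j : ℚ) = (z:ℚ)) →
        (∑ j, ((∑ k, u k * (A k.1 j : ℚ) : ℚ) : ℝ) * xhat j) ∈ L) := by
      intro hyp
      set Bnd : ℝ := (∑ i, ∑ j, |(A i j : ℝ)|) + 1 with hBnd
      have hBpos : 0 < Bnd := by positivity
      have hrowB : ∀ i, ∑ j, |(A i j : ℝ)| ≤ Bnd - 1 := by
        intro i
        have h1 : ∑ j, |(A i j : ℝ)| ≤ ∑ i', ∑ j, |(A i' j : ℝ)| :=
          Finset.single_le_sum (f := fun i' => ∑ j, |(A i' j : ℝ)|)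
            (fun i' _ => Finset.sum_nonneg fun j _ => abs_nonneg _) (Finset.mem_univ i)
        rw [hBnd]; linarith
      obtain ⟨ε, hεpos, hεgap⟩ : ∃ ε : ℝ, 0 < ε ∧ ∀ i, ¬ Tight i →
          Bnd * ε ≤ (b i : ℝ) - ∑ j, (A i j : ℝ) * xhat j := by
        by_cases hFc : (Finset.univ.filter (fun i => ¬ Tight i)).Nonempty
        · set gap : Fin m → ℝ := fun i => (b i : ℝ) - ∑ j, (A i j : ℝ) * xhat j with hgap
          refine ⟨(Finset.univ.filter (fun i => ¬ Tight i)).inf' hFc gap / Bnd, ?_, ?_⟩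
          · apply div_pos _ hBpos
            rw [Finset.lt_inf'_iff]
            intro i hi
            rw [Finset.mem_filter] at hi
            have := hxhat_strict i hi.2
            show (0:ℝ) < (b i : ℝ) - ∑ j, (A i j : ℝ) * xhat j
            linarith
          · intro i hi
            rw [mul_comm, div_mul_cancel₀ _ (ne_of_gt hBpos)]
            exact Finset.inf'_le gap (Finset.mem_filter.mpr ⟨Finset.mem_univ i, hi⟩)
        · refine ⟨1, one_pos, fun i hi => absurd ?_ hFc⟩
          exact ⟨i, Finset.mem_filter.mpr ⟨Finset.mem_univ i, hi⟩⟩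
      obtain ⟨x, hxL, hxconstr, hxclose⟩ := lattice_approx n L hdense hL0 hadd hneg
        {k : Fin m // Tight k} (fun k j => (A k.1 j : ℚ)) xhat hyp ε hεpos
      have hxtight : ∀ k, Tight k → ∑ j, (A k j : ℝ) * x j = (b k : ℝ) := by
        intro k hk
        have h3 : ∑ j, (((A k j : ℚ)) : ℝ) * x j = ∑ j, (((A k j : ℚ)) : ℝ) * xhat j :=
          hxconstr ⟨k, hk⟩
        rw [hAR k x, hAR k xhat] at h3
        rw [h3]
        exact hxhat_tight k hk
      have hfeas : ∀ k, ∑ j, (A k j : ℝ) * x j ≤ (b k : ℝ) := by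
        intro k
        by_cases hk : Tight k
        · exact le_of_eq (hxtight k hk)
        · have hd : ∑ j, (A k j : ℝ) * (x j - xhat j) ≤ (Bnd - 1) * ε := by
            calc ∑ j, (A k j : ℝ) * (x j - xhat j) ≤ ∑ j, |(A k j : ℝ)| * ε := by
                  refine Finset.sum_le_sum fun j _ => ?_
                  calc (A k j : ℝ) * (x j - xhat j)
                      ≤ |(A k j : ℝ) * (x j - xhat j)| := le_abs_self _
                    _ = |(A k j : ℝ)| * |x j - xhat j| := abs_mul _ _
                    _ ≤ |(A k j : ℝ)| * ε :=
                        mul_le_mul_of_nonneg_left (le_of_lt (hxclose j)) (abs_nonneg _)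
              _ = (∑ j, |(A k j : ℝ)|) * ε := (Finset.sum_mul _ _ _).symm
              _ ≤ (Bnd - 1) * ε := mul_le_mul_of_nonneg_right (hrowB k) (le_of_lt hεpos)
          have hexpand : ∑ j, (A k j : ℝ) * x j
              = ∑ j, (A k j : ℝ) * xhat j + ∑ j, (A k j : ℝ) * (x j - xhat j) := by
            rw [← Finset.sum_add_distrib]
            exact Finset.sum_congr rfl fun j _ => by ring
          have hgapk := hεgap k hk
          linarith
      have hvalx : ∑ j, (c j : ℝ) * x j = τ := by
        have hcj : ∀ j, (c j : ℝ) = ∑ k, (A k j : ℝ) * (ybar k : ℝ) := by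
          intro j
          have h2 : ((∑ k, (A k j : ℚ) * ybar k : ℚ) : ℝ) = ((c j : ℚ) : ℝ) :=
            congrArg (fun r : ℚ => (r : ℝ)) (hybar_eq j)
          push_cast at h2
          rw [← h2]
        calc ∑ j, (c j : ℝ) * x j
            = ∑ j, (∑ k, (A k j : ℝ) * (ybar k : ℝ)) * x j :=
              Finset.sum_congr rfl fun j _ => by rw [← hcj j]
          _ = ∑ k, (ybar k : ℝ) * ∑ j, (A k j : ℝ) * x j :=
              swap_mul_sum (fun k => (ybar k : ℝ)) x (fun k j => (A k j : ℝ))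
          _ = ∑ k, (ybar k : ℝ) * (b k : ℝ) := by
              refine Finset.sum_congr rfl fun k _ => ?_
              by_cases hk : Tight k
              · rw [hxtight k hk]
              · rw [hsuppbar k hk]; simp
          _ = ((∑ k, (b k : ℚ) * ybar k : ℚ) : ℝ) := by
              push_cast
              exact Finset.sum_congr rfl fun k _ => by ring
          _ = τ := by rw [hybar_val]; exact hq
      exact hnoL ⟨x, hfeas, hvalx, hxL⟩
    push_neg at hnohyp
    obtain ⟨u, hu_int, hu_notL⟩ := hnohyp
    refine ⟨ybar, (fun i => if h : Tight i then u ⟨i, h⟩ else 0), ?_,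
      ⟨hybar_nn, hybar_eq, by rw [hybar_val]; exact hq⟩, ?_, ?_⟩
    · intro i hui
      have hui' : (if h : Tight i then u ⟨i, h⟩ else 0) ≠ 0 := hui
      by_cases hi : Tight i
      · exact ne_of_gt (hybar_pos i hi)
      · rw [dif_neg hi] at hui'
        exact absurd rfl hui'
    · intro j
      obtain ⟨z, hz⟩ := hu_int j
      refine ⟨z, ?_⟩
      rw [← hz]
      rw [Finset.sum_congr rfl (fun i (_ : i ∈ Finset.univ) =>
        show (A i j : ℚ) * (if h : Tight i then u ⟨i, h⟩ else 0)
          = if h : Tight i then u ⟨i, h⟩ * (A i j : ℚ) else 0 by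
            split
            · ring
            · rw [mul_zero])]
      exact sum_dite_subtype Tight (fun k => u k * (A k.1 j : ℚ))
    · have hkey : ((∑ i, (b i : ℚ) * (if h : Tight i then u ⟨i, h⟩ else 0) : ℚ) : ℝ)
          = ∑ j, ((∑ k : {k : Fin m // Tight k}, u k * (A k.1 j : ℚ) : ℚ) : ℝ) * xhat j := by
        have e1 : (∑ i, (b i : ℚ) * (if h : Tight i then u ⟨i, h⟩ else 0))
            = ∑ k : {k : Fin m // Tight k}, u k * (b k.1 : ℚ) := by
          rw [Finset.sum_congr rfl (fun i (_ : i ∈ Finset.univ) =>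
            show (b i : ℚ) * (if h : Tight i then u ⟨i, h⟩ else 0)
              = if h : Tight i then u ⟨i, h⟩ * (b i : ℚ) else 0 by
                split
                · ring
                · rw [mul_zero])]
          exact sum_dite_subtype Tight (fun k => u k * (b k.1 : ℚ))
        rw [e1]
        calc ((∑ k : {k : Fin m // Tight k}, u k * (b k.1 : ℚ) : ℚ) : ℝ)
            = ∑ k : {k : Fin m // Tight k}, (u k : ℝ) * (b k.1 : ℝ) := by
              push_cast
              exact Finset.sum_congr rfl fun k _ => by ring
          _ = ∑ k : {k : Fin m // Tight k}, (u k : ℝ) * ∑ j, (A k.1 j : ℝ) * xhat j := by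
              refine Finset.sum_congr rfl fun k _ => ?_
              rw [hxhat_tight k.1 k.2]
          _ = ∑ j, (∑ k : {k : Fin m // Tight k}, (A k.1 j : ℝ) * (u k : ℝ)) * xhat j :=
              (swap_mul_sum (fun k => (u k : ℝ)) xhat (fun k j => (A k.1 j : ℝ))).symm
          _ = ∑ j, ((∑ k : {k : Fin m // Tight k}, u k * (A k.1 j : ℚ) : ℚ) : ℝ) * xhat j := by
              refine Finset.sum_congr rfl fun j _ => ?_
              congr 1
              push_cast
              exact Finset.sum_congr rfl fun k _ => by ring
      rw [hkey]
      exact hu_notL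
  · -- (b) → (a)
    rintro ⟨y, u, hsupp, ⟨hynn, hyeq, hyval⟩, hint, hnotL⟩ ⟨x, hxf, hxv, hxL⟩
    apply hnotL
    have htight : ∀ i, u i ≠ 0 → ∑ j, (A i j : ℝ) * x j = (b i : ℝ) := by
      intro i hui
      have hyi : 0 < y i := lt_of_le_of_ne (hynn i) (Ne.symm (hsupp i hui))
      exact cs y hynn hyeq hyval x hxf hxv i hyi
    choose zf hzf using hint
    have key : ((∑ i, (b i : ℚ) * u i : ℚ) : ℝ) = ∑ j, ((zf j : ℤ) : ℝ) * x j := by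
      calc ((∑ i, (b i : ℚ) * u i : ℚ) : ℝ) = ∑ i, (u i : ℝ) * (b i : ℝ) := by
            push_cast
            exact Finset.sum_congr rfl fun i _ => by ring
        _ = ∑ i, (u i : ℝ) * ∑ j, (A i j : ℝ) * x j := by
            refine Finset.sum_congr rfl fun i _ => ?_
            by_cases hui : u i = 0
            · rw [hui]; simp
            · rw [htight i hui]
        _ = ∑ j, (∑ i, (A i j : ℝ) * (u i : ℝ)) * x j :=
            (swap_mul_sum (fun i => (u i : ℝ)) x (fun i j => (A i j : ℝ))).symm
        _ = ∑ j, ((zf j : ℤ) : ℝ) * x j := by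
            refine Finset.sum_congr rfl fun j _ => ?_
            congr 1
            have h2 : ((∑ i, (A i j : ℚ) * u i : ℚ) : ℝ) = (((zf j : ℚ)) : ℝ) :=
              congrArg (fun r : ℚ => (r : ℝ)) (hzf j)
            push_cast at h2
            rw [← h2]
    rw [key]
    have hmem : ∀ j ∈ Finset.univ, ((zf j : ℤ) : ℝ) * x j ∈ S :=
      fun j _ => hSmem.mpr (hzsmulL (zf j) (x j) (hxL j))
    exact hSmem.mp (AddSubgroup.sum_mem S hmem)
end

section
/- Let L be a dense proper subset of ℝ that is closed under addition and negation. Let A be an m × n integer matrix, b ∈ ℤ^m, and suppose P = { x ∈ ℝ^n : Ax ≤ b } is nonempty. Then the following are equivalent: (a) P contains no point of L^n; (b) there exist ȳ, ū ∈ ℚ^m such that (i) supp(ū) ⊆ supp(ȳ), (ii) ȳ ≥ 0, Aᵀȳ = 0, and bᵀȳ = 0, and (iii) Aᵀū ∈ ℤ^n and bᵀū ∉ L. -/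
lemma L_zero_mem {L : Set ℝ} (hdense : Dense L)
    (hadd : ∀ x ∈ L, ∀ y ∈ L, x + y ∈ L) (hneg : ∀ x ∈ L, -x ∈ L) : (0:ℝ) ∈ L := by
  obtain ⟨x, hx⟩ := hdense.nonempty
  have := hadd x hx (-x) (hneg x hx)
  simpa using this

lemma L_nsmul_mem {L : Set ℝ} (hdense : Dense L)
    (hadd : ∀ x ∈ L, ∀ y ∈ L, x + y ∈ L) (hneg : ∀ x ∈ L, -x ∈ L)
    (k : ℕ) {x : ℝ} (hx : x ∈ L) : (k:ℝ) * x ∈ L := by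
  induction k with
  | zero => simpa using L_zero_mem hdense hadd hneg
  | succ k ih =>
    have := hadd _ ih x hx
    push_cast
    convert this using 1
    ring

lemma L_zsmul_mem {L : Set ℝ} (hdense : Dense L)
    (hadd : ∀ x ∈ L, ∀ y ∈ L, x + y ∈ L) (hneg : ∀ x ∈ L, -x ∈ L)
    (k : ℤ) {x : ℝ} (hx : x ∈ L) : (k:ℝ) * x ∈ L := by
  rcases le_or_gt 0 k with h | h
  · lift k to ℕ using h
    exact_mod_cast L_nsmul_mem hdense hadd hneg k hx
  · have h1 : ((-k).toNat : ℝ) * x ∈ L := L_nsmul_mem hdense hadd hneg _ hx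
    have h2 := hneg _ h1
    have hk : (((-k).toNat : ℕ) : ℝ) = -(k:ℝ) := by
      rw [show (((-k).toNat : ℕ) : ℝ) = (((-k).toNat : ℤ) : ℝ) by push_cast; ring,
        Int.toNat_of_nonneg (by omega)]
      push_cast; ring
    rw [show (k:ℝ) * x = -((((-k).toNat : ℕ):ℝ) * x) by rw [hk]; ring]
    exact h2

lemma L_sum_mem {L : Set ℝ} (hdense : Dense L)
    (hadd : ∀ x ∈ L, ∀ y ∈ L, x + y ∈ L) (hneg : ∀ x ∈ L, -x ∈ L)
    {ι : Type*} (s : Finset ι) (g : ι → ℝ) (hg : ∀ i ∈ s, g i ∈ L) :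
    (∑ i ∈ s, g i) ∈ L :=
  Finset.sum_induction _ (· ∈ L) (fun a b ha hb => hadd a ha b hb)
    (L_zero_mem hdense hadd hneg) hg

lemma backward_dir (L : Set ℝ) (hdense : Dense L)
    (hadd : ∀ x ∈ L, ∀ y ∈ L, x + y ∈ L) (hneg : ∀ x ∈ L, -x ∈ L)
    (m n : ℕ) (A : Matrix (Fin m) (Fin n) ℤ) (b : Fin m → ℤ)
    (y u : Fin m → ℚ) (hsupp : ∀ i, u i ≠ 0 → y i ≠ 0)
    (hy0 : ∀ i, 0 ≤ y i) (hyA : ∀ j, ∑ i, (A i j : ℚ) * y i = 0)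
    (hyb : ∑ i, (b i : ℚ) * y i = 0)
    (huA : ∀ j, ∃ zz : ℤ, ∑ i, (A i j : ℚ) * u i = (zz : ℚ))
    (hub : ((∑ i, (b i : ℚ) * u i : ℚ) : ℝ) ∉ L) :
    ¬ ∃ x : Fin n → ℝ, (∀ i, ∑ j, (A i j : ℝ) * x j ≤ (b i : ℝ)) ∧ ∀ j, x j ∈ L := by
  rintro ⟨x, hxP, hxL⟩
  have hyA' : ∀ j, ∑ i, (A i j : ℝ) * (y i : ℝ) = 0 := by
    intro j
    have := congrArg (fun q : ℚ => (q:ℝ)) (hyA j)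
    push_cast at this
    simpa using this
  have hyb' : ∑ i, (b i : ℝ) * (y i : ℝ) = 0 := by
    have := congrArg (fun q : ℚ => (q:ℝ)) hyb
    push_cast at this
    simpa using this
  have hsum : ∑ i, (y i : ℝ) * ((b i : ℝ) - ∑ j, (A i j : ℝ) * x j) = 0 := by
    have h2 : ∑ i, (y i : ℝ) * (∑ j, (A i j : ℝ) * x j) = 0 := by
      simp_rw [Finset.mul_sum]
      rw [Finset.sum_comm]
      have : ∀ j, ∑ i, (y i : ℝ) * ((A i j : ℝ) * x j) = 0 := by
        intro j
        have : ∑ i, (y i : ℝ) * ((A i j : ℝ) * x j) =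
            (∑ i, (A i j : ℝ) * (y i : ℝ)) * x j := by
          rw [Finset.sum_mul]
          exact Finset.sum_congr rfl fun i _ => by ring
        rw [this, hyA' j, zero_mul]
      simp [this]
    have h1 : ∑ i, (y i : ℝ) * (b i : ℝ) = 0 := by
      rw [← hyb']; exact Finset.sum_congr rfl fun i _ => by ring
    calc ∑ i, (y i : ℝ) * ((b i : ℝ) - ∑ j, (A i j : ℝ) * x j)
        = ∑ i, ((y i : ℝ) * (b i : ℝ) - (y i : ℝ) * ∑ j, (A i j : ℝ) * x j) :=
          Finset.sum_congr rfl fun i _ => by ring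
      _ = 0 := by rw [Finset.sum_sub_distrib, h1, h2, sub_zero]
  have htight : ∀ i, y i ≠ 0 → ∑ j, (A i j : ℝ) * x j = (b i : ℝ) := by
    intro i hyi
    have hnonneg : ∀ i ∈ Finset.univ, (0:ℝ) ≤ (y i : ℝ) * ((b i : ℝ) - ∑ j, (A i j : ℝ) * x j) :=
      fun i _ => mul_nonneg (by exact_mod_cast hy0 i) (by linarith [hxP i])
    have h0 := (Finset.sum_eq_zero_iff_of_nonneg hnonneg).mp hsum i (Finset.mem_univ i)
    have hy' : (0:ℝ) < (y i : ℝ) := lt_of_le_of_ne (by exact_mod_cast hy0 i)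
      (by exact_mod_cast (Ne.symm hyi))
    rcases mul_eq_zero.mp h0 with h | h
    · exact absurd h (ne_of_gt hy')
    · linarith
  choose z hz using huA
  have hz' : ∀ j, ∑ i, (A i j : ℝ) * (u i : ℝ) = (z j : ℝ) := by
    intro j
    have := congrArg (fun q : ℚ => (q:ℝ)) (hz j)
    push_cast at this
    simpa using this
  have key : ((∑ i, (b i : ℚ) * u i : ℚ) : ℝ) = ∑ j, (z j : ℝ) * x j := by
    have h1 : ∀ i, u i ≠ 0 → ((b i : ℝ)) = ∑ j, (A i j : ℝ) * x j :=
      fun i hi => (htight i (hsupp i hi)).symm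
    push_cast
    calc ∑ i, (b i : ℝ) * (u i : ℝ) = ∑ i, (∑ j, (A i j : ℝ) * x j) * (u i : ℝ) := by
          apply Finset.sum_congr rfl
          intro i _
          by_cases hi : u i = 0
          · simp [hi]
          · rw [h1 i hi]
      _ = ∑ j, (∑ i, (A i j : ℝ) * (u i : ℝ)) * x j := by
          simp_rw [Finset.sum_mul]
          rw [Finset.sum_comm]
          exact Finset.sum_congr rfl fun j _ => Finset.sum_congr rfl fun i _ => by ring
      _ = ∑ j, (z j : ℝ) * x j := by
          exact Finset.sum_congr rfl fun j _ => by rw [hz' j]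
  rw [key] at hub
  exact hub <| L_sum_mem hdense hadd hneg _ _ fun j _ =>
    L_zsmul_mem hdense hadd hneg (z j) (hxL j)

lemma one_dim_between' {ιP ιN : Type} [Fintype ιP] [Fintype ιN]
    (U : ιP → ℝ) (sU : ιP → Bool) (Lo : ιN → ℝ) (sL : ιN → Bool)
    (H : ∀ q p, Lo q < U p ∨ (Lo q ≤ U p ∧ sU p = false ∧ sL q = false)) :
    ∃ t : ℝ, (∀ p, if sU p then t < U p else t ≤ U p) ∧
      (∀ q, if sL q then Lo q < t else Lo q ≤ t) := by
  rcases isEmpty_or_nonempty ιP with hP | hP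
  · rcases isEmpty_or_nonempty ιN with hN | hN
    · exact ⟨0, fun p => (hP.false p).elim, fun q => (hN.false q).elim⟩
    · obtain ⟨q₀, -, hq₀⟩ := Finset.exists_max_image Finset.univ Lo ⟨Classical.arbitrary ιN, Finset.mem_univ _⟩
      refine ⟨Lo q₀ + 1, fun p => (hP.false p).elim, fun q => ?_⟩
      have := hq₀ q (Finset.mem_univ q)
      split <;> linarith
  · obtain ⟨p₀, -, hp₀⟩ := Finset.exists_min_image Finset.univ U ⟨Classical.arbitrary ιP, Finset.mem_univ _⟩
    rcases isEmpty_or_nonempty ιN with hN | hN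
    · refine ⟨U p₀ - 1, fun p => ?_, fun q => (hN.false q).elim⟩
      have := hp₀ p (Finset.mem_univ p)
      split <;> linarith
    · obtain ⟨q₀, -, hq₀⟩ := Finset.exists_max_image Finset.univ Lo ⟨Classical.arbitrary ιN, Finset.mem_univ _⟩
      have hle : Lo q₀ ≤ U p₀ := (H q₀ p₀).elim le_of_lt And.left
      rcases lt_or_eq_of_le hle with hlt | heq
      · refine ⟨(Lo q₀ + U p₀)/2, fun p => ?_, fun q => ?_⟩
        · have := hp₀ p (Finset.mem_univ p); split <;> linarith
        · have := hq₀ q (Finset.mem_univ q); split <;> linarith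
      · refine ⟨Lo q₀, fun p => ?_, fun q => ?_⟩
        · have hmin := hp₀ p (Finset.mem_univ p)
          rcases eq_or_lt_of_le hmin with hpe | hpl
          · rcases H q₀ p with h | h
            · exfalso; rw [heq, ← hpe] at h; exact lt_irrefl _ h
            · rw [h.2.1]; simp; linarith [h.1]
          · split <;> linarith [heq ▸ hpl]
        · have hmax := hq₀ q (Finset.mem_univ q)
          rcases eq_or_lt_of_le hmax with hqe | hql
          · rcases H q p₀ with h | h
            · exfalso; rw [← heq, hqe] at h; exact lt_irrefl _ h
            · rw [h.2.2]; simp [hqe]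
          · split <;> linarith


def RowSat (nv : ℕ) (a : Fin nv → ℚ) (bb : ℚ) (s : Bool) (x : Fin nv → ℝ) : Prop :=
  if s = true then ∑ j, (a j : ℝ) * x j < (bb:ℝ) else ∑ j, (a j : ℝ) * x j ≤ (bb:ℝ)

lemma ind_mul_sum {ι : Type} [Fintype ι] [DecidableEq ι] {α : Type*} [NonAssocSemiring α]
    (p : ι) (v : α) (g : ι → α) : ∑ i, (if i = p then v else 0) * g i = v * g p := by
  rw [Finset.sum_eq_single p]
  · simp
  · intro i _ hip; simp [hip]
  · intro h; exact absurd (Finset.mem_univ p) h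

set_option maxHeartbeats 1200000 in
lemma fm_main (nv k : ℕ) : ∀ (ι : Type) [Fintype ι] (a : ι → Fin nv → ℚ) (b : ι → ℚ)
    (s : ι → Bool), (∀ i (j : Fin nv), k ≤ (j:ℕ) → a i j = 0) →
    (¬ ∃ x : Fin nv → ℝ, ∀ i, RowSat nv (a i) (b i) (s i) x) →
    ∃ y : ι → ℚ, (∀ i, 0 ≤ y i) ∧ (∀ j, ∑ i, y i * a i j = 0) ∧
      (∑ i, y i * b i < 0 ∨ (∑ i, y i * b i ≤ 0 ∧ ∃ i, 0 < y i ∧ s i = true)) := by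
  induction k with
  | zero =>
    intro ι _ a b s hz hinf
    have hall : ∀ i j, a i j = 0 := fun i j => hz i j (Nat.zero_le _)
    have : ¬ ∀ i, RowSat nv (a i) (b i) (s i) 0 := fun h => hinf ⟨0, h⟩
    push_neg at this
    obtain ⟨i0, hi0⟩ := this
    classical
    refine ⟨fun i => if i = i0 then 1 else 0, fun i => by positivity, fun j => by
      rw [ind_mul_sum]; simp [hall], ?_⟩
    rw [ind_mul_sum, one_mul]
    unfold RowSat at hi0
    have hsum0 : ∑ j, (a i0 j : ℝ) * (0 : Fin nv → ℝ) j = 0 := by simp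
    by_cases hs : s i0 = true
    · rw [if_pos hs, hsum0] at hi0
      push_neg at hi0
      have hb : b i0 ≤ 0 := by exact_mod_cast hi0
      exact Or.inr ⟨hb, i0, by simp, hs⟩
    · rw [if_neg hs, hsum0] at hi0
      push_neg at hi0
      exact Or.inl (by exact_mod_cast hi0)
  | succ k IH =>
    intro ι _ a b s hz hinf
    classical
    by_cases hK : k < nv
    case neg =>
      exact IH ι a b s (fun i j hj => absurd j.2 (by omega)) hinf
    set K : Fin nv := ⟨k, hK⟩ with hKdef
    set c : ι → ℚ := fun i => a i K with hcdef
    let ιZ := {i : ι // c i = 0}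
    let ιP := {i : ι // 0 < c i}
    let ιN := {i : ι // c i < 0}
    let ι' := ιZ ⊕ (ιP × ιN)
    let w : ι' → ι → ℚ := fun i' i =>
      match i' with
      | Sum.inl i0 => if i = i0.1 then 1 else 0
      | Sum.inr (p, q) => (if i = p.1 then (c p.1)⁻¹ else 0) + (if i = q.1 then (-(c q.1))⁻¹ else 0)
    have hwnn : ∀ i' i, 0 ≤ w i' i := by
      rintro (i0 | ⟨p, q⟩) i
      · dsimp [w]; split <;> norm_num
      · dsimp [w]
        apply add_nonneg
        · split
          · exact inv_nonneg.mpr (le_of_lt p.2)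
          · exact le_rfl
        · split
          · exact inv_nonneg.mpr (le_of_lt (by rw [neg_pos]; exact q.2))
          · exact le_rfl
    -- rational collapse
    have hwq : ∀ (i' : ι') (g : ι → ℚ), ∑ i, w i' i * g i =
        match i' with
        | Sum.inl i0 => g i0.1
        | Sum.inr (p, q) => (c p.1)⁻¹ * g p.1 + (-(c q.1))⁻¹ * g q.1 := by
      rintro (i0 | ⟨p, q⟩) g
      · dsimp [w]; rw [ind_mul_sum, one_mul]
      · dsimp [w]
        simp_rw [add_mul, Finset.sum_add_distrib]
        rw [ind_mul_sum, ind_mul_sum]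
    -- real collapse
    have hwr : ∀ (i' : ι') (G : ι → ℝ), ∑ i, ((w i' i : ℚ) : ℝ) * G i =
        match i' with
        | Sum.inl i0 => G i0.1
        | Sum.inr (p, q) => ((c p.1 : ℚ) : ℝ)⁻¹ * G p.1 + ((-(c q.1) : ℚ) : ℝ)⁻¹ * G q.1 := by
      rintro (i0 | ⟨p, q⟩) G
      · dsimp [w]
        have : ∀ i, ((if i = i0.1 then (1:ℚ) else 0 : ℚ) : ℝ) = if i = i0.1 then (1:ℝ) else 0 := by
          intro i; split <;> norm_num
        simp_rw [this]
        rw [ind_mul_sum, one_mul]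
      · dsimp [w]
        have : ∀ i, (((if i = p.1 then (c p.1)⁻¹ else 0) + (if i = q.1 then (-(c q.1))⁻¹ else 0) : ℚ) : ℝ)
            = (if i = p.1 then ((c p.1 :ℚ):ℝ)⁻¹ else 0) + (if i = q.1 then ((-(c q.1) :ℚ):ℝ)⁻¹ else 0) := by
          intro i; push_cast; split <;> split <;> norm_num
        simp_rw [this, add_mul, Finset.sum_add_distrib]
        rw [ind_mul_sum, ind_mul_sum]
    let a' : ι' → Fin nv → ℚ := fun i' j => ∑ i, w i' i * a i j
    let b' : ι' → ℚ := fun i' => ∑ i, w i' i * b i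
    let s' : ι' → Bool := fun i' =>
      match i' with
      | Sum.inl i0 => s i0.1
      | Sum.inr (p, q) => s p.1 || s q.1
    have hz' : ∀ i' (j : Fin nv), k ≤ (j:ℕ) → a' i' j = 0 := by
      intro i' j hj
      dsimp only [a']
      rcases Nat.lt_or_ge (j:ℕ) (k+1) with hjk | hjk
      · -- j = K
        have hjK : j = K := by apply Fin.ext; simp [hKdef]; omega
        subst hjK
        rcases i' with i0 | ⟨p, q⟩
        · rw [hwq (Sum.inl i0) (fun i => a i K)]; exact i0.2
        · rw [hwq (Sum.inr (p, q)) (fun i => a i K)]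
          have hp : c p.1 ≠ 0 := ne_of_gt p.2
          have hq : c q.1 ≠ 0 := ne_of_lt q.2
          show (c p.1)⁻¹ * a p.1 K + (-(c q.1))⁻¹ * a q.1 K = 0
          have e1 : (c p.1)⁻¹ * a p.1 K = 1 := by
            rw [show a p.1 K = c p.1 from rfl]
            exact inv_mul_cancel₀ hp
          have e2 : (-(c q.1))⁻¹ * a q.1 K = -1 := by
            rw [show a q.1 K = c q.1 from rfl, inv_neg]
            rw [neg_mul, inv_mul_cancel₀ hq]
          rw [e1, e2]; ring
      · have : ∀ i, a i j = 0 := fun i => hz i j hjk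
        rcases i' with i0 | ⟨p, q⟩
        · rw [hwq (Sum.inl i0) (fun i => a i j)]; exact this _
        · rw [hwq (Sum.inr (p, q)) (fun i => a i j)]
          show (c p.1)⁻¹ * a p.1 j + (-(c q.1))⁻¹ * a q.1 j = 0
          rw [this p.1, this q.1]; ring
    have hinf' : ¬ ∃ x : Fin nv → ℝ, ∀ i', RowSat nv (a' i') (b' i') (s' i') x := by
      rintro ⟨x', hx'⟩
      -- values
      set σ : ι → ℝ := fun i => ∑ j ∈ Finset.univ.erase K, (a i j : ℝ) * x' j with hσdef
      have hT : ∀ i, ∑ j, (a i j : ℝ) * x' j = (c i : ℝ) * x' K + σ i := by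
        intro i
        rw [hσdef]
        rw [← Finset.add_sum_erase Finset.univ _ (Finset.mem_univ K)]
      have hval : ∀ i', ∑ j, ((a' i' j : ℚ) : ℝ) * x' j = ∑ i, ((w i' i : ℚ) : ℝ) * ((c i : ℝ) * x' K + σ i) := by
        intro i'
        have : ∀ j, ((a' i' j : ℚ) : ℝ) = ∑ i, ((w i' i : ℚ):ℝ) * ((a i j:ℚ):ℝ) := by
          intro j
          show ((∑ i, w i' i * a i j : ℚ) : ℝ) = _
          push_cast
          rfl
        simp_rw [this, Finset.sum_mul]
        rw [Finset.sum_comm]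
        apply Finset.sum_congr rfl
        intro i _
        rw [← hT i, Finset.mul_sum]
        apply Finset.sum_congr rfl
        intro j _
        ring
      set U : ιP → ℝ := fun p => ((b p.1 : ℝ) - σ p.1) / ((c p.1 : ℚ) : ℝ) with hUdef
      set Lo : ιN → ℝ := fun q => ((b q.1 : ℝ) - σ q.1) / ((c q.1 : ℚ) : ℝ) with hLodef
      have hH : ∀ (q : ιN) (p : ιP), Lo q < U p ∨ (Lo q ≤ U p ∧ s p.1 = false ∧ s q.1 = false) := by
        intro q p
        have hs := hx' (Sum.inr (p, q))
        unfold RowSat at hs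
        have hcp : (0:ℝ) < ((c p.1 : ℚ):ℝ) := by exact_mod_cast p.2
        have hcq : ((c q.1 : ℚ):ℝ) < 0 := by exact_mod_cast q.2
        have hV : ∑ j, ((a' (Sum.inr (p,q)) j : ℚ) : ℝ) * x' j =
            ((c p.1:ℚ):ℝ)⁻¹ * σ p.1 + ((-(c q.1):ℚ):ℝ)⁻¹ * σ q.1 := by
          have e1 : ((c p.1:ℚ):ℝ)⁻¹ * (((c p.1:ℚ):ℝ) * x' K + σ p.1)
              = x' K + ((c p.1:ℚ):ℝ)⁻¹ * σ p.1 := by field_simp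
          have e2 : ((-(c q.1):ℚ):ℝ)⁻¹ * (((c q.1:ℚ):ℝ) * x' K + σ q.1)
              = -(x' K) + ((-(c q.1):ℚ):ℝ)⁻¹ * σ q.1 := by
            have hq0 : ((c q.1:ℚ):ℝ) ≠ 0 := ne_of_lt hcq
            have h1 : ((c q.1:ℚ):ℝ)⁻¹ * ((c q.1:ℚ):ℝ) = 1 := inv_mul_cancel₀ hq0
            have this2 : ((-(c q.1):ℚ):ℝ) = -((c q.1:ℚ):ℝ) := by push_cast; ring
            rw [this2, inv_neg]
            linear_combination (-(x' K)) * h1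
          rw [hval (Sum.inr (p,q)), hwr (Sum.inr (p,q)) (fun i => ((c i:ℚ):ℝ) * x' K + σ i)]
          show ((c p.1:ℚ):ℝ)⁻¹ * (((c p.1:ℚ):ℝ) * x' K + σ p.1)
              + ((-(c q.1):ℚ):ℝ)⁻¹ * (((c q.1:ℚ):ℝ) * x' K + σ q.1)
              = ((c p.1:ℚ):ℝ)⁻¹ * σ p.1 + ((-(c q.1):ℚ):ℝ)⁻¹ * σ q.1
          rw [e1, e2]; ring
        have hb' : ((b' (Sum.inr (p,q)) : ℚ) : ℝ) = ((c p.1:ℚ):ℝ)⁻¹ * (b p.1:ℝ) + ((-(c q.1):ℚ):ℝ)⁻¹ * (b q.1:ℝ) := by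
          show ((∑ i, w (Sum.inr (p,q)) i * b i : ℚ):ℝ) = _
          rw [hwq (Sum.inr (p,q)) b]
          push_cast
          ring
        have hmq : ((-(c q.1):ℚ):ℝ) = -((c q.1:ℚ):ℝ) := by push_cast; ring
        have hc0 : ((c q.1:ℚ):ℝ) ≠ 0 := ne_of_lt hcq
        have hLoeq : Lo q = ((-(c q.1):ℚ):ℝ)⁻¹ * (σ q.1 - (b q.1:ℝ)) := by
          rw [hLodef, hmq]
          rw [← div_eq_inv_mul, div_neg, ← neg_div]
          ring_nf
        have hUeq : U p = ((c p.1:ℚ):ℝ)⁻¹ * ((b p.1:ℝ) - σ p.1) := by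
          rw [hUdef]; field_simp
        have hinvp : 0 < ((c p.1:ℚ):ℝ)⁻¹ := by positivity
        have hinvq : 0 < ((-(c q.1):ℚ):ℝ)⁻¹ := by rw [hmq, inv_pos]; linarith
        by_cases hsp : s' (Sum.inr (p,q)) = true
        · rw [if_pos hsp] at hs
          rw [hV, hb'] at hs
          left
          rw [hLoeq, hUeq]
          nlinarith [hs]
        · rw [if_neg hsp] at hs
          rw [hV, hb'] at hs
          have hfl : s p.1 = false ∧ s q.1 = false := by
            have h0 : (s p.1 || s q.1) = false := (Bool.not_eq_true _).mp hsp
            exact Bool.or_eq_false_iff.mp h0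
          right
          refine ⟨?_, hfl.1, hfl.2⟩
          rw [hLoeq, hUeq]
          nlinarith [hs]
      obtain ⟨t, htU, htL⟩ := one_dim_between' U (fun p => s p.1) Lo (fun q => s q.1) hH
      apply hinf
      refine ⟨Function.update x' K t, fun i => ?_⟩
      have hWval : ∑ j, (a i j : ℝ) * (Function.update x' K t) j = (c i : ℝ) * t + σ i := by
        have hg : (fun j => (a i j : ℝ) * (Function.update x' K t) j)
            = Function.update (fun j => (a i j : ℝ) * x' j) K ((c i : ℝ) * t) := by
          funext j
          by_cases hj : j = K
          · subst hj; simp [Function.update_self, hcdef]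
          · simp [Function.update_of_ne hj]
        rw [hg, Finset.sum_update_of_mem (Finset.mem_univ K)]
        rw [← Finset.erase_eq]
      unfold RowSat
      rcases lt_trichotomy (c i) 0 with hci | hci | hci
      · have ht := htL ⟨i, hci⟩
        have hcir : ((c i:ℚ):ℝ) < 0 := by exact_mod_cast hci
        have hLoi : Lo ⟨i, hci⟩ = ((b i:ℝ) - σ i) / ((c i:ℚ):ℝ) := rfl
        by_cases hsi : s i = true
        · rw [if_pos hsi]
          rw [if_pos hsi] at ht
          rw [hWval]
          rw [hLoi, div_lt_iff_of_neg hcir] at ht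
          linarith
        · rw [if_neg hsi]
          rw [if_neg hsi] at ht
          rw [hWval]
          rw [hLoi, div_le_iff_of_neg hcir] at ht
          linarith
      · -- c i = 0 : use inl row
        have hs0 := hx' (Sum.inl ⟨i, hci⟩)
        unfold RowSat at hs0
        have hvi : ∑ j, ((a' (Sum.inl ⟨i,hci⟩) j : ℚ) : ℝ) * x' j = σ i := by
          rw [hval (Sum.inl ⟨i,hci⟩), hwr (Sum.inl ⟨i,hci⟩) (fun i => ((c i:ℚ):ℝ) * x' K + σ i)]
          show ((c i:ℚ):ℝ) * x' K + σ i = σ i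
          rw [hci]
          push_cast
          ring_nf
        have hbi : b' (Sum.inl ⟨i,hci⟩) = b i := by
          show ∑ i', w (Sum.inl ⟨i,hci⟩) i' * b i' = b i
          rw [hwq (Sum.inl ⟨i,hci⟩) b]
        have hsi' : s' (Sum.inl ⟨i,hci⟩) = s i := rfl
        rw [hvi, hbi, hsi'] at hs0
        rw [hWval, hci]
        push_cast
        rw [zero_mul, zero_add]
        exact hs0
      · have ht := htU ⟨i, hci⟩
        have hcir : (0:ℝ) < ((c i:ℚ):ℝ) := by exact_mod_cast hci
        have hUi : U ⟨i, hci⟩ = ((b i:ℝ) - σ i) / ((c i:ℚ):ℝ) := rfl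
        by_cases hsi : s i = true
        · rw [if_pos hsi]
          rw [if_pos hsi] at ht
          rw [hWval]
          rw [hUi, lt_div_iff₀ hcir] at ht
          linarith
        · rw [if_neg hsi]
          rw [if_neg hsi] at ht
          rw [hWval]
          rw [hUi, le_div_iff₀ hcir] at ht
          linarith
    obtain ⟨y', hy'nn, hy'a, hy'b⟩ := IH ι' a' b' s' hz' hinf'
    refine ⟨fun i => ∑ i', y' i' * w i' i, fun i => Finset.sum_nonneg fun i' _ =>
      mul_nonneg (hy'nn i') (hwnn i' i), ?_, ?_⟩
    · intro j
      have : ∑ i, (∑ i', y' i' * w i' i) * a i j = ∑ i', y' i' * a' i' j := by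
        simp_rw [Finset.sum_mul]
        rw [Finset.sum_comm]
        apply Finset.sum_congr rfl
        intro i' _
        rw [show y' i' * a' i' j = y' i' * ∑ i, w i' i * a i j from rfl, Finset.mul_sum]
        apply Finset.sum_congr rfl
        intro i _
        ring
      rw [this]
      exact hy'a j
    · have hbb : ∑ i, (∑ i', y' i' * w i' i) * b i = ∑ i', y' i' * b' i' := by
        simp_rw [Finset.sum_mul]
        rw [Finset.sum_comm]
        apply Finset.sum_congr rfl
        intro i' _
        rw [show y' i' * b' i' = y' i' * ∑ i, w i' i * b i from rfl, Finset.mul_sum]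
        apply Finset.sum_congr rfl
        intro i _
        ring
      rw [hbb]
      rcases hy'b with h | ⟨h, i', hi'pos, hi's⟩
      · exact Or.inl h
      · refine Or.inr ⟨h, ?_⟩
        rcases i' with i0 | ⟨p, q⟩
        · refine ⟨i0.1, ?_, hi's⟩
          apply Finset.sum_pos'
          · intro j' _; exact mul_nonneg (hy'nn j') (hwnn j' i0.1)
          · refine ⟨Sum.inl i0, Finset.mem_univ _, ?_⟩
            have : w (Sum.inl i0) i0.1 = 1 := by dsimp [w]; rw [if_pos rfl]
            rw [this, mul_one]; exact hi'pos
        · have hpq : p.1 ≠ q.1 := by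
            intro h; have := p.2; rw [h] at this; linarith [q.2]
          have hor : s p.1 = true ∨ s q.1 = true := by
            have : (s p.1 || s q.1) = true := hi's
            exact Bool.or_eq_true_iff.mp this
          rcases hor with hsp | hsq
          · refine ⟨p.1, ?_, hsp⟩
            apply Finset.sum_pos'
            · intro j' _; exact mul_nonneg (hy'nn j') (hwnn j' p.1)
            · refine ⟨Sum.inr (p, q), Finset.mem_univ _, ?_⟩
              have : w (Sum.inr (p,q)) p.1 = (c p.1)⁻¹ := by
                dsimp [w]; rw [if_pos rfl, if_neg hpq, add_zero]
              rw [this]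
              exact mul_pos hi'pos (by rw [inv_pos]; exact p.2)
          · refine ⟨q.1, ?_, hsq⟩
            apply Finset.sum_pos'
            · intro j' _; exact mul_nonneg (hy'nn j') (hwnn j' q.1)
            · refine ⟨Sum.inr (p, q), Finset.mem_univ _, ?_⟩
              have : w (Sum.inr (p,q)) q.1 = (-(c q.1))⁻¹ := by
                dsimp [w]; rw [if_neg (Ne.symm hpq), if_pos rfl, zero_add]
              rw [this]
              exact mul_pos hi'pos (by rw [inv_pos]; linarith [q.2])

lemma comb_eval {ι : Type} [Fintype ι] (nv : ℕ) (a : ι → Fin nv → ℚ) (y : ι → ℚ)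
    (x : Fin nv → ℝ) :
    ∑ j, ((∑ i, y i * a i j : ℚ) : ℝ) * x j = ∑ i, (y i : ℝ) * (∑ j, (a i j : ℝ) * x j) := by
  have : ∀ j, ((∑ i, y i * a i j : ℚ) : ℝ) * x j = ∑ i, (y i:ℝ) * ((a i j:ℝ) * x j) := by
    intro j
    push_cast
    rw [Finset.sum_mul]
    apply Finset.sum_congr rfl
    intro i _
    ring
  simp_rw [this]
  rw [Finset.sum_comm]
  apply Finset.sum_congr rfl
  intro i _
  rw [Finset.mul_sum]

lemma comb_le {ι : Type} [Fintype ι] (nv : ℕ) (a : ι → Fin nv → ℚ) (b : ι → ℚ) (y : ι → ℚ)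
    (hynn : ∀ i, 0 ≤ y i) (x : Fin nv → ℝ) (hx : ∀ i, ∑ j, (a i j : ℝ) * x j ≤ (b i : ℝ)) :
    ∑ j, ((∑ i, y i * a i j : ℚ) : ℝ) * x j ≤ ((∑ i, y i * b i : ℚ) : ℝ) := by
  rw [comb_eval]
  have h2 : ((∑ i, y i * b i : ℚ) : ℝ) = ∑ i, (y i : ℝ) * (b i : ℝ) := by push_cast; rfl
  rw [h2]
  apply Finset.sum_le_sum
  intro i _
  exact mul_le_mul_of_nonneg_left (hx i) (by exact_mod_cast hynn i)

lemma affine_farkas {ι : Type} [Fintype ι] (nv : ℕ) (a : ι → Fin nv → ℚ) (b : ι → ℚ)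
    (c : Fin nv → ℚ) (δ : ℚ)
    (hfeas : ∃ x : Fin nv → ℝ, ∀ i, ∑ j, (a i j : ℝ) * x j ≤ (b i : ℝ))
    (hvalid : ∀ x : Fin nv → ℝ, (∀ i, ∑ j, (a i j : ℝ) * x j ≤ (b i : ℝ)) →
      ∑ j, (c j : ℝ) * x j ≤ (δ : ℝ)) :
    ∃ y : ι → ℚ, (∀ i, 0 ≤ y i) ∧ (∀ j, ∑ i, y i * a i j = c j) ∧ ∑ i, y i * b i ≤ δ := by
  classical
  set a' : ι ⊕ Unit → Fin nv → ℚ := Sum.elim a (fun _ => fun j => -(c j)) with ha'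
  set b' : ι ⊕ Unit → ℚ := Sum.elim b (fun _ => -δ) with hb'
  set s' : ι ⊕ Unit → Bool := Sum.elim (fun _ => false) (fun _ => true) with hs'
  have hinf : ¬ ∃ x : Fin nv → ℝ, ∀ i', RowSat nv (a' i') (b' i') (s' i') x := by
    rintro ⟨x, hx⟩
    have h1 : ∀ i, ∑ j, (a i j : ℝ) * x j ≤ (b i : ℝ) := by
      intro i
      have := hx (Sum.inl i)
      unfold RowSat at this
      simpa [ha', hb', hs'] using this
    have h2 := hx (Sum.inr ())
    unfold RowSat at h2
    simp only [ha', hb', hs', Sum.elim_inr, if_pos rfl] at h2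
    have h3 := hvalid x h1
    have he : ∑ j, ((-(c j) : ℚ) : ℝ) * x j = -∑ j, (c j : ℝ) * x j := by
      rw [← Finset.sum_neg_distrib]
      apply Finset.sum_congr rfl
      intro j _
      push_cast
      ring
    rw [he] at h2
    push_cast at h2
    linarith
  obtain ⟨y', hynn, hya, hyb⟩ := fm_main nv nv (ι ⊕ Unit) a' b' s'
    (fun i j hj => absurd j.2 (by omega)) hinf
  set y₀ := y' (Sum.inr ()) with hy₀
  have hsum : ∀ g : ι ⊕ Unit → ℚ, ∑ i', g i' = (∑ i, g (Sum.inl i)) + g (Sum.inr ()) := by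
    intro g
    rw [Fintype.sum_sum_type]
    simp
  have hcol : ∀ j, ∑ i, y' (Sum.inl i) * a i j = y₀ * c j := by
    intro j
    have h := hya j
    rw [hsum (fun i' => y' i' * a' i' j)] at h
    simp only [ha', Sum.elim_inl, Sum.elim_inr] at h
    linarith [h]
  have hβ : ∑ i', y' i' * b' i' = (∑ i, y' (Sum.inl i) * b i) - y₀ * δ := by
    rw [hsum (fun i' => y' i' * b' i')]
    simp only [hb', Sum.elim_inl, Sum.elim_inr]
    ring
  have hy0ne : y₀ ≠ 0 := by
    intro hy00
    have hcol0 : ∀ j, ∑ i, y' (Sum.inl i) * a i j = 0 := by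
      intro j; rw [hcol j, hy00, zero_mul]
    have hblt : (∑ i, y' (Sum.inl i) * b i) < 0 := by
      rcases hyb with h | ⟨h, i', hi'p, hi's⟩
      · rw [hβ, hy00] at h; linarith
      · exfalso
        rcases i' with i | u
        · simp [hs'] at hi's
        · rw [hy₀] at hy00
          cases u
          rw [hy00] at hi'p
          exact lt_irrefl _ hi'p
    obtain ⟨x₀, hx₀⟩ := hfeas
    have hle := comb_le nv a b (fun i => y' (Sum.inl i)) (fun i => hynn _) x₀ hx₀
    have hz : ∑ j, ((∑ i, y' (Sum.inl i) * a i j : ℚ) : ℝ) * x₀ j = 0 := by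
      have : ∀ j, ((∑ i, y' (Sum.inl i) * a i j : ℚ) : ℝ) = 0 := by
        intro j; rw [hcol0 j]; norm_num
      simp_rw [this]
      simp
    rw [hz] at hle
    have : ((∑ i, y' (Sum.inl i) * b i : ℚ) : ℝ) < 0 := by exact_mod_cast hblt
    linarith
  have hy0pos : 0 < y₀ := lt_of_le_of_ne (hynn _) (Ne.symm hy0ne)
  refine ⟨fun i => y' (Sum.inl i) / y₀, fun i => div_nonneg (hynn _) (le_of_lt hy0pos), ?_, ?_⟩
  · intro j
    have : ∑ i, y' (Sum.inl i) / y₀ * a i j = (∑ i, y' (Sum.inl i) * a i j) / y₀ := by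
      rw [Finset.sum_div]
      apply Finset.sum_congr rfl
      intro i _
      ring
    rw [this, hcol j, mul_comm, mul_div_assoc, div_self hy0ne, mul_one]
  · have hble : (∑ i, y' (Sum.inl i) * b i) - y₀ * δ ≤ 0 := by
      rcases hyb with h | ⟨h, _⟩
      · rw [hβ] at h; linarith
      · rw [hβ] at h; linarith
    have : ∑ i, y' (Sum.inl i) / y₀ * b i = (∑ i, y' (Sum.inl i) * b i) / y₀ := by
      rw [Finset.sum_div]
      apply Finset.sum_congr rfl
      intro i _
      ring
    rw [this]
    rw [div_le_iff₀ hy0pos]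
    linarith

lemma exists_ystar {ι : Type} [Fintype ι] (nv : ℕ) (a : ι → Fin nv → ℚ) (b : ι → ℚ)
    (hfeas : ∃ x : Fin nv → ℝ, ∀ i, ∑ j, (a i j : ℝ) * x j ≤ (b i : ℝ)) :
    ∃ ystar : ι → ℚ, (∀ i, 0 ≤ ystar i) ∧ (∀ j, ∑ i, ystar i * a i j = 0) ∧
      (∑ i, ystar i * b i = 0) ∧
      ∀ i, (∀ x : Fin nv → ℝ, (∀ i', ∑ j, (a i' j : ℝ) * x j ≤ (b i' : ℝ)) →
        ∑ j, (a i j : ℝ) * x j = (b i : ℝ)) → 0 < ystar i := by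
  classical
  set T : ι → Prop := fun i => ∀ x : Fin nv → ℝ,
    (∀ i', ∑ j, (a i' j : ℝ) * x j ≤ (b i' : ℝ)) → ∑ j, (a i j : ℝ) * x j = (b i : ℝ) with hT
  have key : ∀ i, T i → ∃ w : ι → ℚ, (∀ i', 0 ≤ w i') ∧ (∀ j, ∑ i', w i' * a i' j = 0) ∧
      (∑ i', w i' * b i' = 0) ∧ 0 < w i := by
    intro i hTi
    obtain ⟨y, hynn, hya, hyb⟩ := affine_farkas nv a b (fun j => -(a i j)) (-(b i)) hfeas
      (by
        intro x hx
        have heq := hTi x hx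
        have he : ∑ j, ((-(a i j) : ℚ) : ℝ) * x j = -∑ j, (a i j : ℝ) * x j := by
          rw [← Finset.sum_neg_distrib]
          apply Finset.sum_congr rfl
          intro j _
          push_cast
          ring
        rw [he, heq]
        push_cast
        exact le_rfl)
    set w : ι → ℚ := fun i' => y i' + (if i' = i then 1 else 0) with hw
    have hwnn : ∀ i', 0 ≤ w i' := by
      intro i'
      have : (0:ℚ) ≤ (if i' = i then (1:ℚ) else 0) := by split <;> norm_num
      dsimp [w]
      linarith [hynn i']
    have hsplit : ∀ g : ι → ℚ, ∑ i', w i' * g i' = (∑ i', y i' * g i') + g i := by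
      intro g
      dsimp [w]
      have h1 : ∑ i', (y i' + (if i' = i then 1 else 0)) * g i'
          = (∑ i', y i' * g i') + ∑ i', (if i' = i then (1:ℚ) else 0) * g i' := by
        rw [← Finset.sum_add_distrib]
        apply Finset.sum_congr rfl
        intro i' _
        ring
      rw [h1]
      congr 1
      rw [Finset.sum_eq_single i]
      · simp
      · intro i' _ hne
        simp [hne]
      · intro h; exact absurd (Finset.mem_univ i) h
    have hwa : ∀ j, ∑ i', w i' * a i' j = 0 := by
      intro j
      rw [hsplit, hya j]
      ring
    have hwble : ∑ i', w i' * b i' ≤ 0 := by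
      rw [hsplit]
      linarith [hyb]
    have hwbge : (0:ℚ) ≤ ∑ i', w i' * b i' := by
      obtain ⟨x₀, hx₀⟩ := hfeas
      have hle := comb_le nv a b w hwnn x₀ hx₀
      have hz : ∑ j, ((∑ i', w i' * a i' j : ℚ) : ℝ) * x₀ j = 0 := by
        have hcz : ∀ j, ((∑ i', w i' * a i' j : ℚ) : ℝ) = 0 := by
          intro j; rw [hwa j]; norm_num
        simp_rw [hcz]
        simp
      rw [hz] at hle
      exact_mod_cast hle
    refine ⟨w, hwnn, hwa, le_antisymm hwble hwbge, ?_⟩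
    have : w i = y i + 1 := by dsimp [w]; rw [if_pos rfl]
    rw [this]
    linarith [hynn i]
  set d : ι → ι → ℚ := fun i0 i' => if h : T i0 then Classical.choose (key i0 h) i' else 0
    with hd
  have hdnn : ∀ i0 i', 0 ≤ d i0 i' := by
    intro i0 i'
    dsimp [d]
    by_cases h : T i0
    · simp only [dif_pos h]
      exact (Classical.choose_spec (key i0 h)).1 i'
    · simp only [dif_neg h]
      exact le_rfl
  have hda : ∀ i0 j, ∑ i', d i0 i' * a i' j = 0 := by
    intro i0 j
    dsimp [d]
    by_cases h : T i0
    · simp only [dif_pos h]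
      exact (Classical.choose_spec (key i0 h)).2.1 j
    · simp only [dif_neg h]
      simp
  have hdb : ∀ i0, ∑ i', d i0 i' * b i' = 0 := by
    intro i0
    dsimp [d]
    by_cases h : T i0
    · simp only [dif_pos h]
      exact (Classical.choose_spec (key i0 h)).2.2.1
    · simp only [dif_neg h]
      simp
  refine ⟨fun i' => ∑ i0, d i0 i', fun i' => Finset.sum_nonneg fun i0 _ => hdnn i0 i', ?_, ?_, ?_⟩
  · intro j
    simp_rw [Finset.sum_mul]
    rw [Finset.sum_comm]
    rw [Finset.sum_eq_zero]
    intro i0 _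
    exact hda i0 j
  · simp_rw [Finset.sum_mul]
    rw [Finset.sum_comm]
    rw [Finset.sum_eq_zero]
    intro i0 _
    exact hdb i0
  · intro i hTi
    apply Finset.sum_pos'
    · intro i0 _
      exact hdnn i0 i
    · refine ⟨i, Finset.mem_univ i, ?_⟩
      dsimp [d]
      rw [dif_pos hTi]
      exact (Classical.choose_spec (key i hTi)).2.2.2

lemma exists_relint {ι : Type} [Fintype ι] (nv : ℕ) (a : ι → Fin nv → ℚ) (b : ι → ℚ)
    (hfeas : ∃ x : Fin nv → ℝ, ∀ i, ∑ j, (a i j : ℝ) * x j ≤ (b i : ℝ)) :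
    ∃ xh : Fin nv → ℝ, (∀ i, ∑ j, (a i j : ℝ) * xh j ≤ (b i : ℝ)) ∧
      ∀ i, ¬ (∀ x : Fin nv → ℝ, (∀ i', ∑ j, (a i' j : ℝ) * x j ≤ (b i' : ℝ)) →
        ∑ j, (a i j : ℝ) * x j = (b i : ℝ)) → ∑ j, (a i j : ℝ) * xh j < (b i : ℝ) := by
  classical
  obtain ⟨x₀, hx₀⟩ := hfeas
  rcases isEmpty_or_nonempty ι with hE | hNE
  · exact ⟨x₀, hx₀, fun i => (hE.false i).elim⟩
  set T : ι → Prop := fun i => ∀ x : Fin nv → ℝ,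
    (∀ i', ∑ j, (a i' j : ℝ) * x j ≤ (b i' : ℝ)) → ∑ j, (a i j : ℝ) * x j = (b i : ℝ) with hT
  have key : ∀ i, ¬ T i → ∃ x : Fin nv → ℝ,
      (∀ i', ∑ j, (a i' j : ℝ) * x j ≤ (b i' : ℝ)) ∧ ∑ j, (a i j : ℝ) * x j < (b i : ℝ) := by
    intro i hTi
    have h2 : ¬ (∀ x : Fin nv → ℝ, (∀ i', ∑ j, (a i' j : ℝ) * x j ≤ (b i' : ℝ)) →
        ∑ j, (a i j : ℝ) * x j = (b i : ℝ)) := hTi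
    push_neg at h2
    obtain ⟨x, hx, hne⟩ := h2
    exact ⟨x, hx, lt_of_le_of_ne (hx i) hne⟩
  set xs : ι → Fin nv → ℝ := fun i => if h : ¬ T i then Classical.choose (key i h) else x₀
    with hxs
  have hxsfeas : ∀ i i', ∑ j, (a i' j : ℝ) * xs i j ≤ (b i' : ℝ) := by
    intro i i'
    dsimp [xs]
    by_cases h : T i
    · simp only [dif_neg (not_not_intro h)]
      exact hx₀ i'
    · simp only [dif_pos h]
      exact (Classical.choose_spec (key i h)).1 i'
  have hxsstrict : ∀ i, ¬ T i → ∑ j, (a i j : ℝ) * xs i j < (b i : ℝ) := by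
    intro i hTi
    dsimp [xs]
    rw [dif_pos hTi]
    exact (Classical.choose_spec (key i hTi)).2
  set N : ℝ := (Fintype.card ι : ℝ) with hN
  have hNpos : 0 < N := by
    rw [hN]
    exact_mod_cast Fintype.card_pos
  have hrow : ∀ i', ∑ j, (a i' j : ℝ) * ((∑ i, xs i j) / N)
      = (∑ i, ∑ j, (a i' j : ℝ) * xs i j) / N := by
    intro i'
    have h1 : ∀ j, (a i' j : ℝ) * ((∑ i, xs i j) / N) = (∑ i, (a i' j : ℝ) * xs i j) / N := by
      intro j
      calc (a i' j : ℝ) * ((∑ i, xs i j) / N) = ((a i' j : ℝ) * ∑ i, xs i j) / N := by ring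
        _ = (∑ i, (a i' j : ℝ) * xs i j) / N := by rw [Finset.mul_sum]
    simp_rw [h1]
    rw [← Finset.sum_div, Finset.sum_comm]
  refine ⟨fun j => (∑ i, xs i j) / N, ?_, ?_⟩
  · intro i'
    rw [hrow i', div_le_iff₀ hNpos]
    have hsle : ∑ i, ∑ j, (a i' j : ℝ) * xs i j ≤ N * (b i' : ℝ) := by
      calc ∑ i, ∑ j, (a i' j : ℝ) * xs i j ≤ ∑ _i : ι, (b i' : ℝ) :=
            Finset.sum_le_sum (fun i _ => hxsfeas i i')
        _ = N * (b i' : ℝ) := by rw [Finset.sum_const, nsmul_eq_mul, hN, Finset.card_univ]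
    linarith
  · intro i hTi
    rw [hrow i, div_lt_iff₀ hNpos]
    have hslt : ∑ i0, ∑ j, (a i j : ℝ) * xs i0 j < ∑ _i0 : ι, (b i : ℝ) := by
      apply Finset.sum_lt_sum
      · intro i0 _
        exact hxsfeas i0 i
      · exact ⟨i, Finset.mem_univ i, hxsstrict i hTi⟩
    have : (∑ _i0 : ι, (b i : ℝ)) = N * (b i : ℝ) := by rw [Finset.sum_const, nsmul_eq_mul, hN, Finset.card_univ]
    linarith



lemma rat_integerize (nv : ℕ) (q : Fin nv → ℚ) :
    ∃ (m : ℕ) (w : Fin nv → ℤ), 0 < m ∧ ∀ k, (w k : ℚ) = (m : ℚ) * q k := by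
  classical
  set m : ℕ := ∏ k, (q k).den with hm
  have hmpos : 0 < m := Finset.prod_pos (fun k _ => (q k).pos)
  have hdvd : ∀ k, (q k).den ∣ m := fun k => Finset.dvd_prod_of_mem _ (Finset.mem_univ k)
  refine ⟨m, fun k => ((m / (q k).den : ℕ) : ℤ) * (q k).num, hmpos, ?_⟩
  intro k
  show ((((m / (q k).den : ℕ) : ℤ) * (q k).num : ℤ) : ℚ) = (m : ℚ) * q k
  obtain ⟨c, hc⟩ := hdvd k
  have hden0 : (q k).den ≠ 0 := (q k).den_nz
  have hdiv : m / (q k).den = c := by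
    rw [hc]
    exact Nat.mul_div_cancel_left c (Nat.pos_of_ne_zero hden0)
  rw [hdiv, hc]
  have hqk : (((q k).den : ℚ)) * q k = ((q k).num : ℚ) := by
    rw [mul_comm]
    exact_mod_cast Rat.mul_den_eq_num (q k)
  push_cast
  linear_combination (-(c : ℚ)) * hqk

lemma dense_approx {L : Set ℝ} (hdense : Dense L) (r : ℝ) {δ : ℝ} (hδ : 0 < δ) :
    ∃ l ∈ L, |l - r| < δ := by
  have := hdense r
  rw [Metric.mem_closure_iff] at this
  obtain ⟨l, hl, hd⟩ := this δ hδ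
  exact ⟨l, hl, by rwa [abs_sub_comm, ← Real.dist_eq]⟩

lemma ker_approx {L : Set ℝ} (hdense : Dense L)
    (hadd : ∀ x ∈ L, ∀ y ∈ L, x + y ∈ L) (hneg : ∀ x ∈ L, -x ∈ L)
    (hzsmul : ∀ (kk : ℤ) {x : ℝ}, x ∈ L → (kk:ℝ) * x ∈ L)
    (hLsum : ∀ {ι : Type} (s : Finset ι) (g : ι → ℝ), (∀ i ∈ s, g i ∈ L) → (∑ i ∈ s, g i) ∈ L)
    {ι : Type} [Fintype ι] (nv : ℕ) (C : ι → Fin nv → ℤ) (z : Fin nv → ℝ)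
    (hz : ∀ i, ∑ k, (C i k : ℝ) * z k = 0) {ε : ℝ} (hε : 0 < ε) :
    ∃ v : Fin nv → ℝ, (∀ k, v k ∈ L) ∧ (∀ i, ∑ k, (C i k : ℝ) * v k = 0) ∧
      ∀ k, |v k - z k| < ε := by
  classical
  set B := Module.Basis.ofVectorSpace ℚ ℝ with hB
  set S : Finset _ := Finset.univ.biUnion (fun k : Fin nv => (B.repr (z k)).support) with hS
  set q : _ → Fin nv → ℚ := fun β k => B.repr (z k) β with hq
  have hzdecomp : ∀ k, z k = ∑ β ∈ S, q β k • (B β : ℝ) := by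
    intro k
    have hsub : (B.repr (z k)).support ⊆ S :=
      fun β hβ => Finset.mem_biUnion.mpr ⟨k, Finset.mem_univ k, hβ⟩
    conv_lhs => rw [← B.linearCombination_repr (z k)]
    rw [Finsupp.linearCombination_apply]
    rw [Finsupp.sum_of_support_subset (B.repr (z k)) hsub (fun β c => c • B β)
      (fun β _ => zero_smul ℚ _)]
  have hqker : ∀ β, ∀ i, ∑ k, (C i k : ℚ) * q β k = 0 := by
    intro β i
    have h1 : ∑ k, (C i k : ℚ) • z k = (0:ℝ) := by
      rw [← hz i]
      apply Finset.sum_congr rfl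
      intro k _
      rw [Rat.smul_def]
      push_cast
      ring
    have h2 := congrArg (fun t => B.repr t β) h1
    simp only [map_sum, map_smul, map_zero] at h2
    simpa using h2
  -- integerize
  choose m w hmpos hw using fun β => rat_integerize nv (q β)
  -- choose approximating elements of L
  have hδ : ∀ β : {x // x ∈ S}, (0:ℝ) < ε / ((S.card + 1) * ((∑ k, |(w β.1 k : ℝ)|) + 1)) := by
    intro β
    apply div_pos hε
    apply mul_pos
    · exact Nat.cast_add_one_pos _
    · have : (0:ℝ) ≤ ∑ k, |(w β.1 k : ℝ)| := Finset.sum_nonneg fun k _ => abs_nonneg _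
      linarith
  choose l hlL hl using fun β : {x // x ∈ S} =>
    dense_approx hdense ((B β.1 : ℝ) / (m β.1 : ℝ)) (hδ β)
  set v : Fin nv → ℝ := fun k => ∑ β ∈ S.attach, l β * (w β.1 k : ℝ) with hv
  have hwr : ∀ β (k : Fin nv), (w β k : ℝ) = (m β : ℝ) * ((q β k : ℚ) : ℝ) := by
    intro β k
    have := hw β k
    have h2 := congrArg (fun t : ℚ => (t : ℝ)) this
    push_cast at h2 ⊢
    exact h2
  refine ⟨v, ?_, ?_, ?_⟩
  · intro k
    apply hLsum
    intro β _
    rw [mul_comm]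
    exact hzsmul (w β.1 k) (hlL β)
  · intro i
    have hswap : ∑ k, (C i k : ℝ) * v k = ∑ β ∈ S.attach, l β * ∑ k, (C i k : ℝ) * (w β.1 k : ℝ) := by
      calc ∑ k, (C i k : ℝ) * v k
          = ∑ k, ∑ β ∈ S.attach, (C i k : ℝ) * (l β * (w β.1 k : ℝ)) := by
            apply Finset.sum_congr rfl
            intro k _
            rw [hv, Finset.mul_sum]
        _ = ∑ β ∈ S.attach, ∑ k, (C i k : ℝ) * (l β * (w β.1 k : ℝ)) := Finset.sum_comm
        _ = ∑ β ∈ S.attach, l β * ∑ k, (C i k : ℝ) * (w β.1 k : ℝ) := by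
            apply Finset.sum_congr rfl
            intro β _
            rw [Finset.mul_sum]
            apply Finset.sum_congr rfl
            intro k _
            ring
    rw [hswap]
    rw [Finset.sum_eq_zero]
    intro β _
    have hwk : ∑ k, (C i k : ℝ) * (w β.1 k : ℝ) = (m β.1 : ℝ) * ((∑ k, (C i k : ℚ) * q β.1 k : ℚ) : ℝ) := by
      push_cast
      rw [Finset.mul_sum]
      apply Finset.sum_congr rfl
      intro k _
      rw [hwr β.1 k]
      push_cast
      ring
    rw [hwk, hqker β.1 i]
    norm_num
  · intro k
    have hzk : z k = ∑ β ∈ S.attach, ((B β.1 : ℝ) / (m β.1 : ℝ)) * (w β.1 k : ℝ) := by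
      rw [hzdecomp k, ← Finset.sum_attach S (fun β => q β k • (B β : ℝ))]
      apply Finset.sum_congr rfl
      intro β _
      rw [hwr β.1 k]
      have hm0 : (m β.1 : ℝ) ≠ 0 := by
        have := hmpos β.1
        positivity
      rw [Rat.smul_def]
      field_simp
    have hdiff : v k - z k = ∑ β ∈ S.attach, (l β - (B β.1 : ℝ) / (m β.1 : ℝ)) * (w β.1 k : ℝ) := by
      rw [hv, hzk, ← Finset.sum_sub_distrib]
      apply Finset.sum_congr rfl
      intro β _
      ring
    rw [hdiff]
    calc |∑ β ∈ S.attach, (l β - (B β.1 : ℝ) / (m β.1 : ℝ)) * (w β.1 k : ℝ)|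
        ≤ ∑ β ∈ S.attach, |(l β - (B β.1 : ℝ) / (m β.1 : ℝ)) * (w β.1 k : ℝ)| :=
          Finset.abs_sum_le_sum_abs _ _
      _ ≤ ∑ β ∈ S.attach, ε / (S.card + 1) := by
          apply Finset.sum_le_sum
          intro β _
          rw [abs_mul]
          have h1 := hl β
          have h2 : |(w β.1 k : ℝ)| ≤ (∑ k', |(w β.1 k' : ℝ)|) + 1 := by
            have : |(w β.1 k : ℝ)| ≤ ∑ k', |(w β.1 k' : ℝ)| :=
              Finset.single_le_sum (f := fun k' => |(w β.1 k' : ℝ)|)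
                (fun k' _ => abs_nonneg _) (Finset.mem_univ k)
            linarith
          have hWpos : (0:ℝ) < (∑ k', |(w β.1 k' : ℝ)|) + 1 := by
            have : (0:ℝ) ≤ ∑ k', |(w β.1 k' : ℝ)| := Finset.sum_nonneg fun k' _ => abs_nonneg _
            linarith
          have hcard : (0:ℝ) < (S.card : ℝ) + 1 := Nat.cast_add_one_pos _
          calc |l β - (B β.1 : ℝ) / (m β.1 : ℝ)| * |(w β.1 k : ℝ)|
              ≤ (ε / ((S.card + 1) * ((∑ k', |(w β.1 k' : ℝ)|) + 1))) * ((∑ k', |(w β.1 k' : ℝ)|) + 1) := by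
                apply mul_le_mul (le_of_lt h1) h2 (abs_nonneg _) (le_of_lt (hδ β))
            _ = ε / (S.card + 1) := by
                rw [mul_comm (ε / _) _, ← mul_div_assoc, mul_comm _ ε, mul_div_mul_right _ _ hWpos.ne']
      _ < ε := by
          rw [Finset.sum_const, Finset.card_attach, nsmul_eq_mul]
          rw [div_eq_mul_inv]
          have hcard : (0:ℝ) < (S.card : ℝ) + 1 := Nat.cast_add_one_pos _
          rw [show (S.card : ℝ) * (ε * ((S.card:ℝ) + 1)⁻¹) = ε * ((S.card:ℝ) * ((S.card:ℝ)+1)⁻¹) by ring]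
          have : (S.card : ℝ) * ((S.card:ℝ)+1)⁻¹ < 1 := by
            rw [mul_inv_lt_iff₀ hcard]
            linarith
          nlinarith

lemma subspace_dichotomy {L : Set ℝ} (hdense : Dense L)
    (hadd : ∀ x ∈ L, ∀ y ∈ L, x + y ∈ L) (hneg : ∀ x ∈ L, -x ∈ L)
    (hzsmul : ∀ (kk : ℤ) {x : ℝ}, x ∈ L → (kk:ℝ) * x ∈ L)
    (hLsum : ∀ {κ : Type} (s : Finset κ) (g : κ → ℝ), (∀ i ∈ s, g i ∈ L) → (∑ i ∈ s, g i) ∈ L)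
    {ι : Type} [Fintype ι] [DecidableEq ι] (nv : ℕ) (C : ι → Fin nv → ℤ) (d : ι → ℤ)
    (x₀ : Fin nv → ℝ) (hx₀ : ∀ i, ∑ k, (C i k : ℝ) * x₀ k = (d i : ℝ)) :
    (∃ u : ι → ℚ, (∀ k, ∃ z : ℤ, ∑ i, (C i k : ℚ) * u i = (z:ℚ)) ∧
      ((∑ i, (d i : ℚ) * u i : ℚ) : ℝ) ∉ L)
    ∨ (∀ ε : ℝ, 0 < ε → ∃ x : Fin nv → ℝ, (∀ i, ∑ k, (C i k : ℝ) * x k = (d i : ℝ)) ∧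
        (∀ k, x k ∈ L) ∧ (∀ k, |x k - x₀ k| < ε)) := by
  classical
  set Cm : Matrix ι (Fin nv) ℤ := Matrix.of C with hCm
  set φ : (Fin nv → ℤ) →ₗ[ℤ] (ι → ℤ) := Cm.mulVecLin with hφ
  set N : Submodule ℤ (ι → ℤ) := LinearMap.range φ with hN
  obtain ⟨r, snf⟩ := N.smithNormalForm (Pi.basisFun ℤ ι)
  have ha_ne : ∀ i : Fin r, snf.a i ≠ 0 := by
    intro i hai
    have h1 := snf.snf i
    rw [hai, zero_smul] at h1
    exact snf.bN.ne_zero i (Subtype.coe_injective h1)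
  set col : Fin nv → (ι → ℤ) := fun k i => C i k with hcoldef
  have hcol : ∀ k, col k ∈ N := by
    intro k
    refine ⟨Pi.single k 1, ?_⟩
    show Cm.mulVec (Pi.single k 1) = col k
    rw [Matrix.mulVec_single]
    funext i
    show Cm i k * 1 = C i k
    rw [mul_one]
    rfl
  have hφap : ∀ (v : Fin nv → ℤ) (i : ι), φ v i = ∑ k, C i k * v k := by
    intro v i
    show Cm.mulVec v i = _
    rw [Matrix.mulVec, dotProduct]
    rfl
  set wv : ι → ι → ℤ := fun jj i => snf.bM.coord jj (fun j => if i = j then 1 else 0) with hwv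
  have hfunc : ∀ (jj : ι) (v : ι → ℤ), snf.bM.coord jj v = ∑ i, v i * wv jj i := by
    intro jj v
    rw [LinearMap.pi_apply_eq_sum_univ (snf.bM.coord jj) v]
    apply Finset.sum_congr rfl
    intro i _
    rw [smul_eq_mul]
  -- real functional identity on d
  have hcoordcol : ∀ (jj : ι) (k : Fin nv), snf.bM.coord jj (col k) = snf.bM.repr (col k) jj :=
    fun jj k => rfl
  have hd_real : ∀ jj : ι, ((snf.bM.coord jj d : ℤ) : ℝ)
      = ∑ k, x₀ k * ((snf.bM.coord jj (col k) : ℤ) : ℝ) := by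
    intro jj
    have h1 : ((snf.bM.coord jj d : ℤ) : ℝ) = ∑ i, (d i : ℝ) * (wv jj i : ℝ) := by
      rw [hfunc jj d]
      push_cast
      rfl
    rw [h1]
    have h2 : ∀ i : ι, (d i : ℝ) * (wv jj i : ℝ) = ∑ k, (C i k : ℝ) * x₀ k * (wv jj i : ℝ) := by
      intro i
      rw [← hx₀ i, Finset.sum_mul]
    simp_rw [h2]
    rw [Finset.sum_comm]
    apply Finset.sum_congr rfl
    intro k _
    have h3 : ((snf.bM.coord jj (col k) : ℤ) : ℝ) = ∑ i, (C i k : ℝ) * (wv jj i : ℝ) := by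
      rw [hfunc jj (col k)]
      push_cast
      rfl
    rw [h3, Finset.mul_sum]
    apply Finset.sum_congr rfl
    intro i _
    ring
  have hoff : ∀ jj, jj ∉ Set.range snf.f → snf.bM.repr d jj = 0 := by
    intro jj hjj
    have hz : ∀ k, snf.bM.coord jj (col k) = 0 := by
      intro k
      rw [hcoordcol]
      exact snf.repr_eq_zero_of_notMem_range ⟨col k, hcol k⟩ hjj
    have h1 := hd_real jj
    simp_rw [hz] at h1
    simp only [Int.cast_zero, mul_zero, Finset.sum_const_zero] at h1
    have h4 : snf.bM.coord jj d = 0 := by exact_mod_cast h1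
    rw [Module.Basis.coord_apply] at h4
    exact h4
  have hreprcol : ∀ (i : Fin r) (k : Fin nv),
      snf.bM.repr (col k) (snf.f i) = snf.a i * snf.bN.repr ⟨col k, hcol k⟩ i := by
    intro i k
    have h1 := snf.repr_apply_embedding_eq_repr_smul (⟨col k, hcol k⟩ : N) (i := i)
    rw [h1, map_smul]
    rfl
  set t : Fin r → ℚ := fun i => ((snf.bM.repr d (snf.f i) : ℤ) : ℚ) / ((snf.a i : ℤ) : ℚ) with ht
  by_cases hcase : ∀ i : Fin r, ((t i : ℚ) : ℝ) ∈ L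
  · -- dense solutions
    right
    intro ε hε
    have hbNmem : ∀ i : Fin r, (snf.bN i : ι → ℤ) ∈ N := fun i => (snf.bN i).2
    choose wvec hwvec using fun i : Fin r => LinearMap.mem_range.mp (hbNmem i)
    set xstar : Fin nv → ℝ := fun k => ∑ i, ((t i : ℚ) : ℝ) * ((wvec i k : ℤ) : ℝ) with hxstar
    have hta : ∀ i : Fin r, ((t i : ℚ) : ℝ) * ((snf.a i : ℤ) : ℝ)
        = ((snf.bM.repr d (snf.f i) : ℤ) : ℝ) := by
      intro i
      rw [ht]
      have hai : ((snf.a i : ℤ) : ℝ) ≠ 0 := by exact_mod_cast ha_ne i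
      push_cast
      field_simp
    have hxstar_sol : ∀ i', ∑ k, (C i' k : ℝ) * xstar k = (d i' : ℝ) := by
      intro i'
      have hstep1 : ∑ k, (C i' k : ℝ) * xstar k
          = ∑ i, ((t i : ℚ) : ℝ) * ∑ k, (C i' k : ℝ) * ((wvec i k : ℤ) : ℝ) := by
        calc ∑ k, (C i' k : ℝ) * xstar k
            = ∑ k, ∑ i, (C i' k : ℝ) * (((t i : ℚ) : ℝ) * ((wvec i k : ℤ) : ℝ)) := by
              apply Finset.sum_congr rfl
              intro k _
              rw [hxstar, Finset.mul_sum]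
          _ = ∑ i, ∑ k, (C i' k : ℝ) * (((t i : ℚ) : ℝ) * ((wvec i k : ℤ) : ℝ)) := Finset.sum_comm
          _ = ∑ i, ((t i : ℚ) : ℝ) * ∑ k, (C i' k : ℝ) * ((wvec i k : ℤ) : ℝ) := by
              apply Finset.sum_congr rfl
              intro i _
              rw [Finset.mul_sum]
              apply Finset.sum_congr rfl
              intro k _
              ring
      rw [hstep1]
      have hstep2 : ∀ i : Fin r, ∑ k, (C i' k : ℝ) * ((wvec i k : ℤ) : ℝ)
          = ((snf.a i : ℤ) : ℝ) * ((snf.bM (snf.f i) i' : ℤ) : ℝ) := by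
        intro i
        have h1 : ∑ k, (C i' k : ℝ) * ((wvec i k : ℤ) : ℝ) = ((φ (wvec i) i' : ℤ) : ℝ) := by
          rw [hφap]
          push_cast
          rfl
        rw [h1, hwvec i]
        have h2 : (snf.bN i : ι → ℤ) i' = snf.a i * snf.bM (snf.f i) i' := by
          rw [snf.snf i]
          rfl
        rw [h2]
        push_cast
        rfl
      simp_rw [hstep2]
      have hstep3 : ∀ i : Fin r, ((t i : ℚ) : ℝ) * (((snf.a i : ℤ) : ℝ) * ((snf.bM (snf.f i) i' : ℤ) : ℝ))
          = ((snf.bM.repr d (snf.f i) : ℤ) : ℝ) * ((snf.bM (snf.f i) i' : ℤ) : ℝ) := by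
        intro i
        rw [← hta i]
        ring
      simp_rw [hstep3]
      -- now expand d in basis
      have hdsum : d = ∑ jj, snf.bM.repr d jj • snf.bM jj := (snf.bM.sum_repr d).symm
      have hdi' : (d i' : ℝ) = ∑ jj, ((snf.bM.repr d jj : ℤ) : ℝ) * ((snf.bM jj i' : ℤ) : ℝ) := by
        conv_lhs => rw [hdsum]
        have : (∑ jj, snf.bM.repr d jj • snf.bM jj) i' = ∑ jj, snf.bM.repr d jj * snf.bM jj i' := by
          rw [Finset.sum_apply]
          apply Finset.sum_congr rfl
          intro jj _
          rfl
        rw [this]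
        push_cast
        rfl
      rw [hdi']
      -- restrict to range of f
      rw [show (Finset.univ : Finset ι) = Finset.univ from rfl]
      symm
      rw [← Finset.sum_image (f := fun jj => ((snf.bM.repr d jj : ℤ) : ℝ) * ((snf.bM jj i' : ℤ) : ℝ))
        (g := snf.f) (fun x _ y _ h => snf.f.injective h)]
      refine (Finset.sum_subset (Finset.subset_univ _) ?_).symm
      intro jj _ hjj
      have : jj ∉ Set.range snf.f := by
        intro hmem
        obtain ⟨i, hi⟩ := hmem
        exact hjj (Finset.mem_image.mpr ⟨i, Finset.mem_univ i, hi⟩)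
      rw [hoff jj this]
      norm_num
    -- kernel approx
    have hker0 : ∀ i, ∑ k, (C i k : ℝ) * (x₀ k - xstar k) = 0 := by
      intro i
      rw [show (fun k => (C i k:ℝ) * (x₀ k - xstar k)) = fun k => (C i k:ℝ)*x₀ k - (C i k:ℝ)*xstar k from funext fun k => by ring]
      rw [Finset.sum_sub_distrib, hx₀ i, hxstar_sol i, sub_self]
    obtain ⟨vk, hvkL, hvk0, hvke⟩ := ker_approx hdense hadd hneg hzsmul hLsum nv C
      (fun k => x₀ k - xstar k) hker0 hε
    refine ⟨fun k => xstar k + vk k, ?_, ?_, ?_⟩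
    · intro i'
      have : ∑ k, (C i' k : ℝ) * (xstar k + vk k)
          = (∑ k, (C i' k : ℝ) * xstar k) + ∑ k, (C i' k : ℝ) * vk k := by
        rw [← Finset.sum_add_distrib]
        apply Finset.sum_congr rfl
        intro k _
        ring
      rw [this, hxstar_sol i', hvk0 i', add_zero]
    · intro k
      apply hadd
      · rw [hxstar]
        apply hLsum
        intro i _
        rw [mul_comm]
        exact hzsmul (wvec i k) (hcase i)
      · exact hvkL k
    · intro k
      have h1 := hvke k
      have : xstar k + vk k - x₀ k = vk k - (x₀ k - xstar k) := by ring
      rw [this]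
      exact h1
  · -- certificate
    left
    push_neg at hcase
    obtain ⟨i, hti⟩ := hcase
    refine ⟨fun i' => ((wv (snf.f i) i' : ℤ) : ℚ) / ((snf.a i : ℤ) : ℚ), ?_, ?_⟩
    · intro k
      refine ⟨snf.bN.repr ⟨col k, hcol k⟩ i, ?_⟩
      have haiq : ((snf.a i : ℤ) : ℚ) ≠ 0 := by exact_mod_cast ha_ne i
      have h1 : ∑ i', (C i' k : ℚ) * (((wv (snf.f i) i' : ℤ) : ℚ) / ((snf.a i : ℤ) : ℚ))
          = ((∑ i', col k i' * wv (snf.f i) i' : ℤ) : ℚ) / ((snf.a i : ℤ) : ℚ) := by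
        rw [eq_div_iff haiq]
        push_cast
        rw [Finset.sum_mul]
        apply Finset.sum_congr rfl
        intro i' _
        rw [show ((col k i' : ℤ) : ℚ) = ((C i' k : ℤ) : ℚ) from rfl]
        field_simp
      rw [h1, ← hfunc (snf.f i) (col k), hcoordcol, hreprcol i k]
      push_cast
      field_simp
    · have h2 : ∑ i', (d i' : ℚ) * (((wv (snf.f i) i' : ℤ) : ℚ) / ((snf.a i : ℤ) : ℚ)) = t i := by
        have haiq : ((snf.a i : ℤ) : ℚ) ≠ 0 := by exact_mod_cast ha_ne i
        have h1 : ∑ i', (d i' : ℚ) * (((wv (snf.f i) i' : ℤ) : ℚ) / ((snf.a i : ℤ) : ℚ))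
            = ((∑ i', d i' * wv (snf.f i) i' : ℤ) : ℚ) / ((snf.a i : ℤ) : ℚ) := by
          rw [eq_div_iff haiq]
          push_cast
          rw [Finset.sum_mul]
          apply Finset.sum_congr rfl
          intro i' _
          field_simp
        rw [h1, ← hfunc (snf.f i) d, ht]
        rfl
      rw [h2]
      exact hti

set_option maxHeartbeats 1000000 in
theorem stmt_9 (L : Set ℝ) (hdense : Dense L) (hproper : L ≠ Set.univ)
    (hadd : ∀ x ∈ L, ∀ y ∈ L, x + y ∈ L) (hneg : ∀ x ∈ L, -x ∈ L)
    (m n : ℕ) (A : Matrix (Fin m) (Fin n) ℤ) (b : Fin m → ℤ)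
    (hne : ∃ x : Fin n → ℝ, ∀ i, ∑ j, (A i j : ℝ) * x j ≤ (b i : ℝ)) :
    (¬ ∃ x : Fin n → ℝ, (∀ i, ∑ j, (A i j : ℝ) * x j ≤ (b i : ℝ)) ∧ ∀ j, x j ∈ L) ↔
      ∃ y u : Fin m → ℚ,
        (∀ i, u i ≠ 0 → y i ≠ 0) ∧
        ((∀ i, 0 ≤ y i) ∧ (∀ j, ∑ i, (A i j : ℚ) * y i = 0) ∧ (∑ i, (b i : ℚ) * y i = 0)) ∧
        ((∀ j, ∃ zz : ℤ, ∑ i, (A i j : ℚ) * u i = (zz : ℚ)) ∧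
          ((∑ i, (b i : ℚ) * u i : ℚ) : ℝ) ∉ L) := by
  classical
  constructor
  · intro hnoL
    set aQ : Fin m → Fin n → ℚ := fun i j => (A i j : ℚ) with haQ
    set bQ : Fin m → ℚ := fun i => (b i : ℚ) with hbQ
    have hAc : ∀ i j, ((aQ i j : ℚ) : ℝ) = (A i j : ℝ) := by intro i j; rw [haQ]; push_cast; rfl
    have hbc : ∀ i, ((bQ i : ℚ) : ℝ) = (b i : ℝ) := by intro i; rw [hbQ]; push_cast; rfl
    have hfeasQ : ∃ x : Fin n → ℝ, ∀ i, ∑ j, (aQ i j : ℝ) * x j ≤ (bQ i : ℝ) := by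
      obtain ⟨x, hx⟩ := hne
      refine ⟨x, fun i => ?_⟩
      rw [hbc i]
      calc ∑ j, ((aQ i j : ℚ) : ℝ) * x j = ∑ j, (A i j : ℝ) * x j := by
            apply Finset.sum_congr rfl
            intro j _
            rw [hAc]
        _ ≤ (b i : ℝ) := hx i
    set Tq : Fin m → Prop := fun i => ∀ x : Fin n → ℝ,
      (∀ i', ∑ j, (aQ i' j : ℝ) * x j ≤ (bQ i' : ℝ)) → ∑ j, (aQ i j : ℝ) * x j = (bQ i : ℝ)
      with hTq
    obtain ⟨ystar, hy0, hyA, hyb, hypos⟩ := exists_ystar n aQ bQ hfeasQ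
    obtain ⟨xh, hxhfeas, hxhstrict⟩ := exists_relint n aQ bQ hfeasQ
    -- the tight subsystem
    set ιT := {i : Fin m // Tq i} with hιT
    have hx₀T : ∀ i : ιT, ∑ k, ((A i.1 k : ℤ) : ℝ) * xh k = ((b i.1 : ℤ) : ℝ) := by
      intro i
      have := i.2 xh hxhfeas
      rw [hbc] at this
      calc ∑ k, (A i.1 k : ℝ) * xh k = ∑ k, ((aQ i.1 k : ℚ) : ℝ) * xh k := by
            apply Finset.sum_congr rfl
            intro k _
            rw [hAc]
        _ = (b i.1 : ℝ) := this
    rcases subspace_dichotomy hdense hadd hneg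
      (fun kk x hx => L_zsmul_mem hdense hadd hneg kk hx)
      (fun s g hg => L_sum_mem hdense hadd hneg s g hg)
      n (fun i : ιT => fun k => A i.1 k) (fun i : ιT => b i.1) xh hx₀T with hcert | hdenseV
    · -- certificate case
      obtain ⟨u', hu'A, hu'b⟩ := hcert
      set u : Fin m → ℚ := fun i => if h : Tq i then u' ⟨i, h⟩ else 0 with hu
      have hsumu : ∀ (g : Fin m → ℚ), ∑ i, g i * u i = ∑ i' : ιT, g i'.1 * u' i' := by
        intro g
        rw [show ∑ i' : ιT, g i'.1 * u' i' = ∑ i' : ιT, g i'.1 * u i'.1 by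
          apply Finset.sum_congr rfl
          intro i' _
          simp only [hu]
          rw [dif_pos i'.2]]
        rw [← Finset.sum_subtype (Finset.univ.filter Tq)
          (fun i => by simp [Finset.mem_filter]) (fun i => g i * u i)]
        symm
        apply Finset.sum_subset (Finset.filter_subset _ _)
        intro i _ hi
        have : ¬ Tq i := by
          intro h
          exact hi (Finset.mem_filter.mpr ⟨Finset.mem_univ i, h⟩)
        simp only [hu]
        rw [dif_neg this, mul_zero]
      refine ⟨ystar, u, ?_, ⟨hy0, ?_, ?_⟩, ?_, ?_⟩
      · intro i hui
        have hTi : Tq i := by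
          by_contra h
          simp only [hu] at hui
          rw [dif_neg h] at hui
          exact hui rfl
        exact ne_of_gt (hypos i hTi)
      · intro j
        rw [← hyA j]
        apply Finset.sum_congr rfl
        intro i _
        rw [haQ]
        ring
      · rw [← hyb]
        apply Finset.sum_congr rfl
        intro i _
        rw [hbQ]
        ring
      · intro j
        obtain ⟨z, hz⟩ := hu'A j
        exact ⟨z, by rw [hsumu (fun i => (A i j : ℚ))]; exact hz⟩
      · rw [show ∑ i, (b i : ℚ) * u i = ∑ i' : ιT, (b i'.1 : ℚ) * u' i' from
          hsumu (fun i => (b i : ℚ))]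
        exact hu'b
    · -- dense case: contradiction with hnoL
      exfalso
      set marg : Fin m → ℝ := fun i =>
        ((b i : ℝ) - ∑ k, (A i k : ℝ) * xh k) / ((∑ k, |(A i k : ℝ)|) + 1) with hmarg
      have hrowsum_pos : ∀ i, (0:ℝ) < (∑ k, |(A i k : ℝ)|) + 1 := by
        intro i
        have : (0:ℝ) ≤ ∑ k, |(A i k : ℝ)| := Finset.sum_nonneg fun k _ => abs_nonneg _
        linarith
      have hmargpos : ∀ i, ¬ Tq i → 0 < marg i := by
        intro i hi
        apply div_pos _ (hrowsum_pos i)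
        have h1 := hxhstrict i hi
        have h2 : ∑ k, (A i k : ℝ) * xh k = ∑ k, ((aQ i k : ℚ) : ℝ) * xh k := by
          apply Finset.sum_congr rfl
          intro k _
          rw [hAc]
        rw [h2, ← hbc i]
        linarith
      set s : Finset (Fin m) := Finset.univ.filter (fun i => ¬ Tq i) with hs
      set εset : Finset ℝ := insert (1:ℝ) (s.image marg) with hεset
      have hεne : εset.Nonempty := ⟨1, Finset.mem_insert_self _ _⟩
      set ε : ℝ := εset.min' hεne with hε
      have hεpos : 0 < ε := by
        rw [hε]
        apply lt_of_lt_of_le _ (le_refl _)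
        have : ∀ x ∈ εset, 0 < x := by
          intro x hx
          rw [hεset] at hx
          rcases Finset.mem_insert.mp hx with h | h
          · rw [h]; norm_num
          · obtain ⟨i, hi, hx'⟩ := Finset.mem_image.mp h
            rw [← hx']
            exact hmargpos i (Finset.mem_filter.mp hi).2
        exact this _ (εset.min'_mem hεne)
      have hεle : ∀ i, ¬ Tq i → ε ≤ marg i := by
        intro i hi
        apply Finset.min'_le
        rw [hεset]
        apply Finset.mem_insert_of_mem
        exact Finset.mem_image.mpr ⟨i, Finset.mem_filter.mpr ⟨Finset.mem_univ i, hi⟩, rfl⟩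
      obtain ⟨x, hxeq, hxL, hxnear⟩ := hdenseV ε hεpos
      apply hnoL
      refine ⟨x, ?_, hxL⟩
      intro i
      by_cases hTi : Tq i
      · have := hxeq ⟨i, hTi⟩
        exact le_of_eq this
      · -- strict row, perturbation bound
        have hdiff : ∑ j, (A i j : ℝ) * x j - ∑ j, (A i j : ℝ) * xh j
            = ∑ j, (A i j : ℝ) * (x j - xh j) := by
          rw [← Finset.sum_sub_distrib]
          apply Finset.sum_congr rfl
          intro j _
          ring
        have hbound : |∑ j, (A i j : ℝ) * (x j - xh j)| ≤ ε * ∑ j, |(A i j : ℝ)| := by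
          calc |∑ j, (A i j : ℝ) * (x j - xh j)| ≤ ∑ j, |(A i j : ℝ) * (x j - xh j)| :=
                Finset.abs_sum_le_sum_abs _ _
            _ ≤ ∑ j, |(A i j : ℝ)| * ε := by
                apply Finset.sum_le_sum
                intro j _
                rw [abs_mul]
                exact mul_le_mul_of_nonneg_left (le_of_lt (hxnear j)) (abs_nonneg _)
            _ = ε * ∑ j, |(A i j : ℝ)| := by rw [← Finset.sum_mul]; ring
        have hmle := hεle i hTi
        have hstrict : ∑ j, (A i j : ℝ) * xh j < (b i : ℝ) := by
          have h1 := hxhstrict i hTi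
          have h2 : ∑ k, (A i k : ℝ) * xh k = ∑ k, ((aQ i k : ℚ) : ℝ) * xh k := by
            apply Finset.sum_congr rfl
            intro k _
            rw [hAc]
          rw [h2, ← hbc i]
          exact h1
        have hmargval : marg i * ((∑ k, |(A i k : ℝ)|) + 1)
            = (b i : ℝ) - ∑ k, (A i k : ℝ) * xh k := by
          rw [hmarg]
          field_simp
        have habs := abs_le.mp hbound
        have h3 : ε * ∑ j, |(A i j : ℝ)| < marg i * ((∑ k, |(A i k : ℝ)|) + 1) := by
          have h4 : ε * ∑ j, |(A i j : ℝ)| ≤ marg i * ∑ j, |(A i j : ℝ)| :=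
            mul_le_mul_of_nonneg_right hmle (Finset.sum_nonneg fun k _ => abs_nonneg _)
          have h5 : marg i * ∑ j, |(A i j : ℝ)| < marg i * ((∑ k, |(A i k : ℝ)|) + 1) := by
            have := hmargpos i hTi
            nlinarith
          linarith
        linarith [habs.2, hdiff]
  · rintro ⟨y, u, hsupp, ⟨hy0, hyA, hyb⟩, huA, hub⟩
    exact backward_dir L hdense hadd hneg m n A b y u hsupp hy0 hyA hyb huA hub
end
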